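/- arXiv:1510.07140 — 5 statements merged into one kernel-verified Lean document; each statement's English description precedes it below -/
import Mathlib

section
/- Gowers–Cauchy–Schwarz inequality for ℓ-box norms: Let e be a nonempty finite index set, ℓ ≥ 2 an even integer, and for each ω ∈ {0,…,ℓ-1}^e let f_ω be an integrable function on the product probability space X_e. Then |E[∏_{ω ∈ {0,…,ℓ-1}^e} f_ω(x_e^{(ω)}) | x_e^{(0)},…,x_e^{(ℓ-1)} ∈ X_e]| ≤ ∏_{ω ∈ {0,…,ℓ-1}^e} ‖f_ω‖_{□_ℓ(X_e)}. -/
open MeasureTheory Finset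

/-- The `ℓ`-box norm over the coordinates in `e` of a function `f` on the product
of the probability spaces `(X i, μ i)`. -/
noncomputable def boxNormOn {ι : Type*} [Fintype ι] [DecidableEq ι] {X : ι → Type*}
    [∀ i, MeasurableSpace (X i)] (μ : ∀ i, Measure (X i))
    (e : Finset ι) (ℓ : ℕ) (f : (∀ i, X i) → ℝ) : ℝ :=
  (∫ x : ∀ i, Fin ℓ → X i,
      ∏ ω ∈ Finset.univ.filter (fun ω : ι → Fin ℓ => ∀ i ∉ e, (ω i : ℕ) = 0),
        f (fun i => x i (ω i))
    ∂(Measure.pi fun i => Measure.pi fun _ : Fin ℓ => μ i)) ^ (((ℓ : ℝ) ^ e.card)⁻¹)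

namespace GCSaux

theorem mp_congr {A B : Type*} [MeasurableSpace A] [MeasurableSpace B] {μ : Measure A}
    {ν : Measure B} {f g : A → B} (h : MeasurePreserving f μ ν) (he : g = f) :
    MeasurePreserving g μ ν := he ▸ h

/-- The measurable equivalence `α 0 × (∀ i, α i.succ) ≃ᵐ ∀ i, α i` given by `Fin.cons`. -/
def finConsEquiv {n : ℕ} (α : Fin (n + 1) → Type*) [∀ i, MeasurableSpace (α i)] :
    (α 0 × ∀ i : Fin n, α i.succ) ≃ᵐ (∀ i, α i) where
  toFun p := Fin.cons p.1 p.2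
  invFun x := (x 0, fun i => x i.succ)
  left_inv p := by
    refine Prod.ext ?_ (funext fun i => ?_)
    · simp
    · simp
  right_inv x := by
    funext i
    refine Fin.cases ?_ (fun j => ?_) i <;> simp
  measurable_toFun := by
    apply measurable_pi_lambda
    intro i
    refine Fin.cases ?_ (fun j => ?_) i
    · simpa using measurable_fst
    · exact (measurable_pi_apply j).comp measurable_snd
  measurable_invFun :=
    Measurable.prodMk (measurable_pi_apply 0)
      (measurable_pi_lambda _ fun j => measurable_pi_apply _)

@[simp] theorem finConsEquiv_apply {n : ℕ} {α : Fin (n + 1) → Type*}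
    [∀ i, MeasurableSpace (α i)] (p : α 0 × ∀ i : Fin n, α i.succ) :
    finConsEquiv α p = Fin.cons p.1 p.2 := rfl

@[simp] theorem finConsEquiv_symm_apply {n : ℕ} {α : Fin (n + 1) → Type*}
    [∀ i, MeasurableSpace (α i)] (x : ∀ i, α i) :
    (finConsEquiv α).symm x = (x 0, fun i : Fin n => x i.succ) := rfl

theorem measurePreserving_finConsEquiv {n : ℕ} {α : Fin (n + 1) → Type*}
    [∀ i, MeasurableSpace (α i)] (m : ∀ i, Measure (α i)) [∀ i, SigmaFinite (m i)] :
    MeasurePreserving (finConsEquiv α) ((m 0).prod (Measure.pi fun i : Fin n => m i.succ))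
      (Measure.pi m) := by
  refine ⟨(finConsEquiv α).measurable, ?_⟩
  refine (Measure.pi_eq fun s hs => ?_).symm
  rw [MeasurableEquiv.map_apply]
  have h : finConsEquiv α ⁻¹' Set.pi Set.univ s
      = (s 0) ×ˢ Set.pi Set.univ (fun i : Fin n => s i.succ) := by
    ext p
    simp only [Set.mem_preimage, finConsEquiv_apply, Set.mem_pi, Set.mem_univ, true_implies,
      Set.mem_prod]
    constructor
    · intro h
      exact ⟨by simpa using h 0, fun i => by simpa using h i.succ⟩
    · rintro ⟨h0, hs'⟩ i
      refine Fin.cases ?_ (fun j => ?_) i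
      · simpa using h0
      · simpa using hs' j
  rw [h, Measure.prod_prod, Measure.pi_pi, Fin.prod_univ_succ]

theorem measurePreserving_piEval {κ : Type*} [Fintype κ] {α : κ → Type*}
    [∀ i, MeasurableSpace (α i)] (m : ∀ i, Measure (α i)) [∀ i, IsProbabilityMeasure (m i)]
    (j : κ) :
    MeasurePreserving (fun y : ∀ i, α i => y j) (Measure.pi m) (m j) := by
  classical
  refine ⟨measurable_pi_apply j, ?_⟩
  ext s hs
  rw [Measure.map_apply (measurable_pi_apply j) hs]
  have h : (fun y : ∀ i, α i => y j) ⁻¹' s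
      = Set.pi Set.univ (Function.update (fun i => (Set.univ : Set (α i))) j s) := by
    ext y
    simp only [Set.mem_preimage, Set.mem_pi, Set.mem_univ, true_implies]
    constructor
    · intro hy i
      rcases eq_or_ne i j with rfl | hij
      · simpa using hy
      · simp [Function.update_of_ne hij]
    · intro hy
      simpa using hy j
  rw [h, Measure.pi_pi]
  rw [Fintype.prod_eq_single j (fun i hij => by simp [Function.update_of_ne hij])]
  simp

theorem measurePreserving_proj {ι : Type*} [Fintype ι] {X : ι → Type*}
    [∀ i, MeasurableSpace (X i)] (μ : ∀ i, Measure (X i)) [∀ i, IsProbabilityMeasure (μ i)]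
    (ℓ : ℕ) (τ : ι → Fin ℓ) :
    MeasurePreserving (fun x : ∀ i, Fin ℓ → X i => fun i => x i (τ i))
      (Measure.pi fun i => Measure.pi fun _ : Fin ℓ => μ i) (Measure.pi μ) := by
  have hmeas : Measurable (fun x : ∀ i, Fin ℓ → X i => fun i => x i (τ i)) :=
    measurable_pi_lambda _ fun i => (measurable_pi_apply (τ i)).comp (measurable_pi_apply i)
  refine ⟨hmeas, ?_⟩
  refine (Measure.pi_eq fun s hs => ?_).symm
  rw [Measure.map_apply hmeas (MeasurableSet.univ_pi hs)]
  have h : (fun x : ∀ i, Fin ℓ → X i => fun i => x i (τ i)) ⁻¹' Set.pi Set.univ s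
      = Set.pi Set.univ fun i => (fun y : Fin ℓ → X i => y (τ i)) ⁻¹' s i := by
    ext x
    simp [Set.mem_pi]
  rw [h, Measure.pi_pi]
  exact Finset.prod_congr rfl fun i _ =>
    (measurePreserving_piEval (fun _ : Fin ℓ => μ i) (τ i)).measure_preimage
      (hs i).nullMeasurableSet

/-- Splitting off the `0`-th coordinate, with a spectator factor `Z`. -/
def splitEquiv (Z : Type*) [MeasurableSpace Z] {n : ℕ} (α : Fin (n + 1) → Type*)
    [∀ i, MeasurableSpace (α i)] : (Z × ∀ i, α i) ≃ᵐ (Z × ∀ i : Fin n, α i.succ) × α 0 where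
  toFun p := ((p.1, fun i => p.2 i.succ), p.2 0)
  invFun q := (q.1.1, Fin.cons q.2 q.1.2)
  left_inv p := by
    refine Prod.ext rfl (funext fun i => ?_)
    refine Fin.cases ?_ (fun j => ?_) i <;> simp
  right_inv q := by
    refine Prod.ext (Prod.ext rfl (funext fun i => ?_)) ?_ <;> simp
  measurable_toFun :=
    Measurable.prodMk
      (Measurable.prodMk measurable_fst
        (measurable_pi_lambda _ fun j => (measurable_pi_apply _).comp measurable_snd))
      ((measurable_pi_apply 0).comp measurable_snd)
  measurable_invFun := by
    refine Measurable.prodMk (measurable_fst.comp measurable_fst) ?_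
    exact (show Measurable fun q : (Z × ∀ i : Fin n, α i.succ) × α 0 =>
        finConsEquiv α (q.2, q.1.2) from
      (finConsEquiv α).measurable.comp
        (measurable_snd.prodMk (measurable_snd.comp measurable_fst)))

@[simp] theorem splitEquiv_apply {Z : Type*} [MeasurableSpace Z] {n : ℕ}
    {α : Fin (n + 1) → Type*} [∀ i, MeasurableSpace (α i)] (p : Z × ∀ i, α i) :
    splitEquiv Z α p = ((p.1, fun i : Fin n => p.2 i.succ), p.2 0) := rfl

@[simp] theorem splitEquiv_symm_apply {Z : Type*} [MeasurableSpace Z] {n : ℕ}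
    {α : Fin (n + 1) → Type*} [∀ i, MeasurableSpace (α i)]
    (q : (Z × ∀ i : Fin n, α i.succ) × α 0) :
    (splitEquiv Z α).symm q = (q.1.1, Fin.cons q.2 q.1.2) := rfl

theorem measurePreserving_splitEquiv {Z : Type*} [MeasurableSpace Z] (ζ : Measure Z)
    [SigmaFinite ζ] {n : ℕ} {α : Fin (n + 1) → Type*} [∀ i, MeasurableSpace (α i)]
    (m : ∀ i, Measure (α i)) [∀ i, SigmaFinite (m i)] :
    MeasurePreserving (splitEquiv Z α) (ζ.prod (Measure.pi m))
      ((ζ.prod (Measure.pi fun i : Fin n => m i.succ)).prod (m 0)) := by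
  have h1 : MeasurePreserving
      (fun p : Z × (∀ i, α i) =>
        (p.1, ((p.2 0, fun i => p.2 i.succ) : α 0 × ∀ i : Fin n, α i.succ)))
      (ζ.prod (Measure.pi m)) (ζ.prod ((m 0).prod (Measure.pi fun i : Fin n => m i.succ))) :=
    mp_congr ((MeasurePreserving.id ζ).prod
      (MeasurePreserving.symm (finConsEquiv α) (measurePreserving_finConsEquiv m))) rfl
  have h2 : MeasurePreserving
      (fun p : Z × (α 0 × ∀ i : Fin n, α i.succ) => (p.1, (p.2.2, p.2.1)))
      (ζ.prod ((m 0).prod (Measure.pi fun i : Fin n => m i.succ)))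
      (ζ.prod ((Measure.pi fun i : Fin n => m i.succ).prod (m 0))) :=
    mp_congr ((MeasurePreserving.id ζ).prod Measure.measurePreserving_swap) rfl
  have h3 : MeasurePreserving
      (fun p : Z × ((∀ i : Fin n, α i.succ) × α 0) => ((p.1, p.2.1), p.2.2))
      (ζ.prod ((Measure.pi fun i : Fin n => m i.succ).prod (m 0)))
      ((ζ.prod (Measure.pi fun i : Fin n => m i.succ)).prod (m 0)) :=
    mp_congr (MeasurePreserving.symm MeasurableEquiv.prodAssoc
      (measurePreserving_prodAssoc ζ (Measure.pi fun i : Fin n => m i.succ) (m 0))) rfl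
  exact mp_congr ((h3.comp h2).comp h1) rfl

/-- The shuffle `(Z × R) × B ≃ᵐ (Z × B) × R`. -/
def shuffleEquiv (Z R B : Type*) [MeasurableSpace Z] [MeasurableSpace R] [MeasurableSpace B] :
    (Z × R) × B ≃ᵐ (Z × B) × R where
  toFun q := ((q.1.1, q.2), q.1.2)
  invFun q := ((q.1.1, q.2), q.1.2)
  left_inv q := rfl
  right_inv q := rfl
  measurable_toFun :=
    Measurable.prodMk ((measurable_fst.comp measurable_fst).prodMk measurable_snd)
      (measurable_snd.comp measurable_fst)
  measurable_invFun :=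
    Measurable.prodMk ((measurable_fst.comp measurable_fst).prodMk measurable_snd)
      (measurable_snd.comp measurable_fst)

@[simp] theorem shuffleEquiv_apply {Z R B : Type*} [MeasurableSpace Z] [MeasurableSpace R]
    [MeasurableSpace B] (q : (Z × R) × B) :
    shuffleEquiv Z R B q = ((q.1.1, q.2), q.1.2) := rfl

theorem measurePreserving_shuffleEquiv {Z R B : Type*} [MeasurableSpace Z] [MeasurableSpace R]
    [MeasurableSpace B] (ζ : Measure Z) (ρ : Measure R) (β : Measure B)
    [SigmaFinite ζ] [SigmaFinite ρ] [SigmaFinite β] :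
    MeasurePreserving (shuffleEquiv Z R B) ((ζ.prod ρ).prod β) ((ζ.prod β).prod ρ) := by
  have h1 : MeasurePreserving (fun q : (Z × R) × B => (q.1.1, (q.1.2, q.2)))
      ((ζ.prod ρ).prod β) (ζ.prod (ρ.prod β)) :=
    mp_congr (measurePreserving_prodAssoc ζ ρ β) rfl
  have h2 : MeasurePreserving (fun q : Z × (R × B) => (q.1, (q.2.2, q.2.1)))
      (ζ.prod (ρ.prod β)) (ζ.prod (β.prod ρ)) :=
    mp_congr ((MeasurePreserving.id ζ).prod Measure.measurePreserving_swap) rfl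
  have h3 : MeasurePreserving (fun q : Z × (B × R) => ((q.1, q.2.1), q.2.2))
      (ζ.prod (β.prod ρ)) ((ζ.prod β).prod ρ) :=
    mp_congr (MeasurePreserving.symm MeasurableEquiv.prodAssoc
      (measurePreserving_prodAssoc ζ β ρ)) rfl
  exact mp_congr ((h3.comp h2).comp h1) rfl

variable {ℓ : ℕ}

theorem prod_cube_succ {M : Type*} [CommMonoid M] {n : ℕ} (g : (Fin (n + 1) → Fin ℓ) → M) :
    ∏ ω : Fin (n + 1) → Fin ℓ, g ω
      = ∏ s : Fin ℓ, ∏ ω' : Fin n → Fin ℓ, g (Fin.cons s ω') := by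
  rw [← (Fin.consEquiv fun _ : Fin (n + 1) => Fin ℓ).prod_comp g, Fintype.prod_prod_type]
  rfl

theorem proj_cons {n : ℕ} {X : Fin (n + 1) → Type*} (x : ∀ i, Fin ℓ → X i) (s : Fin ℓ)
    (ω' : Fin n → Fin ℓ) :
    (fun i => x i (Fin.cons (α := fun _ => Fin ℓ) s ω' i))
      = Fin.cons (α := X) (x 0 s) (fun i => x i.succ (ω' i)) := by
  funext i
  refine Fin.cases ?_ (fun j => ?_) i <;> simp

/-- lintegral of a product of one-coordinate functions over a finite power. -/
theorem lintegral_pi_fin_prod {k : ℕ} {Y : Type*} [MeasurableSpace Y] (m : Measure Y)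
    [IsProbabilityMeasure m] (G : Fin k → Y → ENNReal) (hG : ∀ s, Measurable (G s)) :
    ∫⁻ y : Fin k → Y, ∏ s, G s (y s) ∂(Measure.pi fun _ => m) = ∏ s, ∫⁻ u, G s u ∂m := by
  induction k with
  | zero => simp
  | succ k ih =>
    rw [← (measurePreserving_finConsEquiv (α := fun _ : Fin (k + 1) => Y)
      (fun _ => m)).lintegral_comp (f := fun y => ∏ s, G s (y s))
      (Finset.measurable_prod _ fun s _ => (hG s).comp (measurable_pi_apply s))]
    have h : ∀ p : Y × (Fin k → Y),
        (∏ s, G s ((finConsEquiv (fun _ : Fin (k + 1) => Y)) p s))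
          = G 0 p.1 * ∏ s : Fin k, G s.succ (p.2 s) := by
      intro p
      rw [Fin.prod_univ_succ]
      simp
    rw [lintegral_congr h,
      lintegral_prod_mul (f := G 0) (g := fun y : Fin k → Y => ∏ s : Fin k, G s.succ (y s))
        ((hG 0).aemeasurable)
        ((Finset.measurable_prod _ fun s _ =>
          (hG s.succ).comp (measurable_pi_apply s)).aemeasurable),
      ih (fun s => G s.succ) (fun s => hG s.succ), Fin.prod_univ_succ]

/-- Bochner integral of a product of one-coordinate functions over a finite power. -/
theorem integral_pi_fin_prod {k : ℕ} {Y : Type*} [MeasurableSpace Y] (m : Measure Y)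
    [IsProbabilityMeasure m] (G : Fin k → Y → ℝ) :
    ∫ y : Fin k → Y, ∏ s, G s (y s) ∂(Measure.pi fun _ => m) = ∏ s, ∫ u, G s u ∂m := by
  letI : MeasureSpace Y := ⟨m⟩
  haveI : SigmaFinite (volume : Measure Y) := by
    show SigmaFinite m; infer_instance
  exact MeasureTheory.integral_fin_nat_prod_eq_prod G

end GCSaux
open scoped ENNReal

namespace GCSaux

universe u v

set_option maxHeartbeats 800000 in
theorem lintegral_box_le {ℓ : ℕ} (hℓ : 0 < ℓ) :
    ∀ (n : ℕ) (Z : Type (max u v)) (_mZ : MeasurableSpace Z) (ζ : Measure Z)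
      (_hζ : IsProbabilityMeasure ζ) (X : Fin n → Type v) (mX : ∀ i, MeasurableSpace (X i))
      (μ : ∀ i, Measure (X i)) (hμ : ∀ i, IsProbabilityMeasure (μ i))
      (F : (Fin n → Fin ℓ) → Z × (∀ i, X i) → ℝ≥0∞) (hF : ∀ ω, Measurable (F ω)),
      ∫⁻ p : Z × ∀ i, Fin ℓ → X i, ∏ ω : Fin n → Fin ℓ, F ω (p.1, fun i => p.2 i (ω i))
          ∂(ζ.prod (Measure.pi fun i => Measure.pi fun _ : Fin ℓ => μ i))
        ≤ ∏ ω : Fin n → Fin ℓ,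
            (∫⁻ p : Z × ∀ i, Fin ℓ → X i,
              ∏ ω' : Fin n → Fin ℓ, F ω (p.1, fun i => p.2 i (ω' i))
              ∂(ζ.prod (Measure.pi fun i => Measure.pi fun _ : Fin ℓ => μ i)))
            ^ (((ℓ : ℝ) ^ n)⁻¹) := by
  have hℓR : ((ℓ : ℝ)) ≠ 0 := Nat.cast_ne_zero.2 hℓ.ne'
  intro n
  induction n with
  | zero =>
    intro Z mZ ζ hζ X mX μ hμ F hF
    haveI := hζ
    simp only [Fintype.prod_unique, pow_zero, inv_one, ENNReal.rpow_one, le_refl]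
  | succ n ih =>
    intro Z mZ ζ hζ X mX μ hμ F hF
    haveI := hζ
    haveI : ∀ i, IsProbabilityMeasure (μ i) := hμ
    set β : Measure (Fin ℓ → X 0) := Measure.pi fun _ : Fin ℓ => μ 0 with hβdef
    set ν' : Measure (∀ i : Fin n, Fin ℓ → X i.succ) :=
      Measure.pi fun i : Fin n => Measure.pi fun _ : Fin ℓ => μ i.succ with hν'def
    set ν : Measure (∀ i : Fin (n + 1), Fin ℓ → X i) :=
      Measure.pi fun i => Measure.pi fun _ : Fin ℓ => μ i with hνdef
    haveI : IsProbabilityMeasure β := by rw [hβdef]; infer_instance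
    haveI : IsProbabilityMeasure ν' := by rw [hν'def]; infer_instance
    haveI : IsProbabilityMeasure ν := by rw [hνdef]; infer_instance
    have hproj' : ∀ ω' : Fin n → Fin ℓ,
        Measurable fun r : ∀ i : Fin n, Fin ℓ → X i.succ => fun i => r i (ω' i) :=
      fun ω' => measurable_pi_lambda _ fun i =>
        (measurable_pi_apply _).comp (measurable_pi_apply i)
    have hprojP : ∀ ω : Fin (n + 1) → Fin ℓ,
        Measurable fun p : Z × ∀ i : Fin (n + 1), Fin ℓ → X i =>
          (p.1, fun i => p.2 i (ω i)) :=
      fun ω => measurable_fst.prodMk (measurable_pi_lambda _ fun i =>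
        (measurable_pi_apply _).comp ((measurable_pi_apply i).comp measurable_snd))
    have hBig : Measurable fun p : Z × ∀ i : Fin (n + 1), Fin ℓ → X i =>
        ∏ ω : Fin (n + 1) → Fin ℓ, F ω (p.1, fun i => p.2 i (ω i)) :=
      Finset.measurable_prod _ fun ω _ => (hF ω).comp (hprojP ω)
    set G : Fin ℓ → ((Z × ∀ i : Fin n, Fin ℓ → X i.succ) × X 0) → ℝ≥0∞ :=
      fun s q => ∏ ω' : Fin n → Fin ℓ,
        F (Fin.cons s ω') (q.1.1, Fin.cons q.2 fun i => q.1.2 i (ω' i)) with hGdef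
    have hGm : ∀ s, Measurable (G s) := by
      intro s
      simp only [hGdef]
      refine Finset.measurable_prod _ fun ω' _ => ?_
      refine (hF _).comp ?_
      refine Measurable.prodMk (measurable_fst.comp measurable_fst) ?_
      exact (show Measurable fun q : (Z × ∀ i : Fin n, Fin ℓ → X i.succ) × X 0 =>
          finConsEquiv X (q.2, fun i => q.1.2 i (ω' i)) from
        (finConsEquiv X).measurable.comp (measurable_snd.prodMk
          ((hproj' ω').comp (measurable_snd.comp measurable_fst))))
    have hsplit : MeasurePreserving (splitEquiv Z fun i : Fin (n + 1) => Fin ℓ → X i)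
        (ζ.prod ν) ((ζ.prod ν').prod β) := by
      rw [hνdef, hν'def, hβdef]
      exact measurePreserving_splitEquiv ζ _
    have hpoint : ∀ q : (Z × ∀ i : Fin n, Fin ℓ → X i.succ) × (Fin ℓ → X 0),
        (∏ ω : Fin (n + 1) → Fin ℓ,
          F ω (((splitEquiv Z fun i : Fin (n + 1) => Fin ℓ → X i).symm q).1,
            fun i => ((splitEquiv Z fun i : Fin (n + 1) => Fin ℓ → X i).symm q).2 i (ω i)))
        = ∏ s : Fin ℓ, G s (q.1, q.2 s) := by
      intro q
      rw [prod_cube_succ]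
      refine Finset.prod_congr rfl fun s _ => ?_
      simp only [hGdef]
      refine Finset.prod_congr rfl fun ω' _ => ?_
      congr 1
      refine Prod.ext rfl ?_
      show (fun i => (Fin.cons q.2 q.1.2 : ∀ i : Fin (n + 1), Fin ℓ → X i) i
          (Fin.cons (α := fun _ => Fin ℓ) s ω' i)) = _
      rw [proj_cons]
      simp
    have stepA : ∫⁻ p : Z × ∀ i : Fin (n + 1), Fin ℓ → X i,
          ∏ ω : Fin (n + 1) → Fin ℓ, F ω (p.1, fun i => p.2 i (ω i)) ∂(ζ.prod ν)
        = ∫⁻ q, ∏ s : Fin ℓ, G s (q.1, q.2 s) ∂((ζ.prod ν').prod β) := by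
      rw [← MeasurePreserving.lintegral_comp hsplit.symm hBig]
      exact lintegral_congr hpoint
    have stepB : ∫⁻ q, ∏ s : Fin ℓ, G s (q.1, q.2 s) ∂((ζ.prod ν').prod β)
        = ∫⁻ w, ∫⁻ b, ∏ s : Fin ℓ, G s (w, b s) ∂β ∂(ζ.prod ν') :=
      lintegral_prod _ (Finset.measurable_prod _ fun s _ => (hGm s).comp
        (measurable_fst.prodMk ((measurable_pi_apply s).comp measurable_snd))).aemeasurable
    set g : Fin ℓ → (Z × ∀ i : Fin n, Fin ℓ → X i.succ) → ℝ≥0∞ :=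
      fun s w => ∫⁻ u, G s (w, u) ∂(μ 0) with hgdef
    have hgm : ∀ s, Measurable (g s) := by
      intro s
      simp only [hgdef]
      exact (hGm s).lintegral_prod_right'
    have stepC : ∀ w, ∫⁻ b, ∏ s : Fin ℓ, G s (w, b s) ∂β = ∏ s : Fin ℓ, g s w := by
      intro w
      rw [hβdef]
      rw [lintegral_pi_fin_prod (μ 0) (fun s u => G s (w, u))
        (fun s => (hGm s).comp measurable_prodMk_left)]
    have hsum : ∑ _s : Fin ℓ, ((ℓ : ℝ))⁻¹ = 1 := by
      rw [Finset.sum_const, Finset.card_univ, Fintype.card_fin, nsmul_eq_mul,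
        mul_inv_cancel₀ hℓR]
    have stepD : ∫⁻ w, ∏ s : Fin ℓ, g s w ∂(ζ.prod ν')
        ≤ ∏ s : Fin ℓ, (∫⁻ w, g s w ^ (ℓ : ℝ) ∂(ζ.prod ν')) ^ ((ℓ : ℝ))⁻¹ := by
      have h := ENNReal.lintegral_prod_norm_pow_le (μ := ζ.prod ν') Finset.univ
        (f := fun s w => g s w ^ (ℓ : ℝ))
        (fun s _ => ((hgm s).pow_const _).aemeasurable) (p := fun _ => ((ℓ : ℝ))⁻¹) hsum
        (fun s _ => by positivity)
      refine le_trans (le_of_eq ?_) h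
      refine lintegral_congr fun w => Finset.prod_congr rfl fun s _ => ?_
      rw [← ENNReal.rpow_mul, mul_inv_cancel₀ hℓR, ENNReal.rpow_one]
    set F' : Fin ℓ → (Fin n → Fin ℓ) →
        ((Z × (Fin ℓ → X 0)) × (∀ i : Fin n, X i.succ)) → ℝ≥0∞ :=
      fun s ω' t => ∏ v : Fin ℓ, F (Fin.cons s ω') (t.1.1, Fin.cons (t.1.2 v) t.2) with hF'def
    have hF'm : ∀ s ω', Measurable (F' s ω') := by
      intro s ω'
      simp only [hF'def]
      refine Finset.measurable_prod _ fun v _ => ?_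
      refine (hF _).comp ?_
      refine Measurable.prodMk (measurable_fst.comp measurable_fst) ?_
      exact (show Measurable fun t : (Z × (Fin ℓ → X 0)) × (∀ i : Fin n, X i.succ) =>
          finConsEquiv X (t.1.2 v, t.2) from
        (finConsEquiv X).measurable.comp
          (((measurable_pi_apply v).comp (measurable_snd.comp measurable_fst)).prodMk
            measurable_snd))
    have hmeasdiag : ∀ s : Fin ℓ,
        Measurable fun t : (Z × (Fin ℓ → X 0)) × (∀ i : Fin n, Fin ℓ → X i.succ) =>
          ∏ ω' : Fin n → Fin ℓ, F' s ω' (t.1, fun i => t.2 i (ω' i)) :=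
      fun s => Finset.measurable_prod _ fun ω' _ => (hF'm s ω').comp
        (measurable_fst.prodMk ((hproj' ω').comp measurable_snd))
    have hmeasconst : ∀ (s : Fin ℓ) (ω' : Fin n → Fin ℓ),
        Measurable fun t : (Z × (Fin ℓ → X 0)) × (∀ i : Fin n, Fin ℓ → X i.succ) =>
          ∏ ω'' : Fin n → Fin ℓ, F' s ω' (t.1, fun i => t.2 i (ω'' i)) :=
      fun s ω' => Finset.measurable_prod _ fun ω'' _ => (hF'm s ω').comp
        (measurable_fst.prodMk ((hproj' ω'').comp measurable_snd))
    have hshuffle : MeasurePreserving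
        (shuffleEquiv Z (∀ i : Fin n, Fin ℓ → X i.succ) (Fin ℓ → X 0))
        ((ζ.prod ν').prod β) ((ζ.prod β).prod ν') := measurePreserving_shuffleEquiv ζ ν' β
    have stepE : ∀ s : Fin ℓ, ∫⁻ w, g s w ^ (ℓ : ℝ) ∂(ζ.prod ν')
        = ∫⁻ t, ∏ ω' : Fin n → Fin ℓ, F' s ω' (t.1, fun i => t.2 i (ω' i))
            ∂((ζ.prod β).prod ν') := by
      intro s
      have e1 : ∀ w, g s w ^ (ℓ : ℝ) = ∫⁻ b, ∏ v : Fin ℓ, G s (w, b v) ∂β := by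
        intro w
        rw [hβdef, lintegral_pi_fin_prod (μ 0) (fun _ u => G s (w, u))
          (fun _ => (hGm s).comp measurable_prodMk_left)]
        rw [Finset.prod_const, Finset.card_univ, Fintype.card_fin, ENNReal.rpow_natCast]
      have e2 : ∀ q : (Z × ∀ i : Fin n, Fin ℓ → X i.succ) × (Fin ℓ → X 0),
          (∏ v : Fin ℓ, G s (q.1, q.2 v))
            = (fun t : (Z × (Fin ℓ → X 0)) × (∀ i : Fin n, Fin ℓ → X i.succ) =>
                ∏ ω' : Fin n → Fin ℓ, F' s ω' (t.1, fun i => t.2 i (ω' i)))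
                ((shuffleEquiv Z (∀ i : Fin n, Fin ℓ → X i.succ) (Fin ℓ → X 0)) q) := by
        intro q
        simp only [hGdef, hF'def, shuffleEquiv_apply]
        rw [Finset.prod_comm]
      calc ∫⁻ w, g s w ^ (ℓ : ℝ) ∂(ζ.prod ν')
          = ∫⁻ w, ∫⁻ b, ∏ v : Fin ℓ, G s (w, b v) ∂β ∂(ζ.prod ν') := lintegral_congr e1
        _ = ∫⁻ q, ∏ v : Fin ℓ, G s (q.1, q.2 v) ∂((ζ.prod ν').prod β) :=
            (lintegral_prod (fun q : (Z × ∀ i : Fin n, Fin ℓ → X i.succ) × (Fin ℓ → X 0) =>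
                ∏ v : Fin ℓ, G s (q.1, q.2 v))
              (Finset.measurable_prod _ fun v _ => (hGm s).comp
              (measurable_fst.prodMk
                ((measurable_pi_apply v).comp measurable_snd))).aemeasurable).symm
        _ = ∫⁻ t, ∏ ω' : Fin n → Fin ℓ, F' s ω' (t.1, fun i => t.2 i (ω' i))
              ∂((ζ.prod β).prod ν') := by
            rw [lintegral_congr e2, MeasurePreserving.lintegral_comp hshuffle (hmeasdiag s)]
    have hIH : ∀ s : Fin ℓ,
        ∫⁻ t, ∏ ω' : Fin n → Fin ℓ, F' s ω' (t.1, fun i => t.2 i (ω' i))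
            ∂((ζ.prod β).prod ν')
          ≤ ∏ ω' : Fin n → Fin ℓ,
              (∫⁻ t, ∏ ω'' : Fin n → Fin ℓ, F' s ω' (t.1, fun i => t.2 i (ω'' i))
                ∂((ζ.prod β).prod ν')) ^ (((ℓ : ℝ) ^ n)⁻¹) := by
      intro s
      have h := ih (Z × (Fin ℓ → X 0)) inferInstance (ζ.prod β) (by infer_instance)
        (fun i => X i.succ) (fun i => mX i.succ) (fun i => μ i.succ) (fun i => hμ i.succ)
        (F' s) (hF'm s)
      rw [← hν'def] at h
      exact h
    have hΛ : MeasurePreserving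
        (fun p : Z × ∀ i : Fin (n + 1), Fin ℓ → X i =>
          (((p.1, p.2 0), fun i : Fin n => p.2 i.succ) :
            (Z × (Fin ℓ → X 0)) × ∀ i : Fin n, Fin ℓ → X i.succ))
        (ζ.prod ν) ((ζ.prod β).prod ν') :=
      mp_congr (hshuffle.comp hsplit) rfl
    have stepG : ∀ (s : Fin ℓ) (ω' : Fin n → Fin ℓ),
        ∫⁻ t, ∏ ω'' : Fin n → Fin ℓ, F' s ω' (t.1, fun i => t.2 i (ω'' i))
            ∂((ζ.prod β).prod ν')
          = ∫⁻ p : Z × ∀ i : Fin (n + 1), Fin ℓ → X i,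
              ∏ τ : Fin (n + 1) → Fin ℓ, F (Fin.cons s ω') (p.1, fun i => p.2 i (τ i))
              ∂(ζ.prod ν) := by
      intro s ω'
      rw [← MeasurePreserving.lintegral_comp hΛ (hmeasconst s ω')]
      refine lintegral_congr fun p => ?_
      rw [prod_cube_succ (g := fun τ => F (Fin.cons s ω') (p.1, fun i => p.2 i (τ i)))]
      simp only [hF'def]
      rw [Finset.prod_comm]
      refine Finset.prod_congr rfl fun v _ => Finset.prod_congr rfl fun ω'' _ => ?_
      congr 1
      refine Prod.ext rfl ?_
      show _ = (fun i => p.2 i (Fin.cons (α := fun _ => Fin ℓ) v ω'' i))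
      rw [proj_cons]
    calc ∫⁻ p : Z × ∀ i : Fin (n + 1), Fin ℓ → X i,
          ∏ ω : Fin (n + 1) → Fin ℓ, F ω (p.1, fun i => p.2 i (ω i)) ∂(ζ.prod ν)
        = ∫⁻ w, ∏ s : Fin ℓ, g s w ∂(ζ.prod ν') := by
          rw [stepA, stepB]; exact lintegral_congr stepC
      _ ≤ ∏ s : Fin ℓ, (∫⁻ w, g s w ^ (ℓ : ℝ) ∂(ζ.prod ν')) ^ ((ℓ : ℝ))⁻¹ := stepD
      _ ≤ ∏ s : Fin ℓ, (∏ ω' : Fin n → Fin ℓ,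
            (∫⁻ p : Z × ∀ i : Fin (n + 1), Fin ℓ → X i,
              ∏ τ : Fin (n + 1) → Fin ℓ, F (Fin.cons s ω') (p.1, fun i => p.2 i (τ i))
              ∂(ζ.prod ν)) ^ (((ℓ : ℝ) ^ n)⁻¹)) ^ ((ℓ : ℝ))⁻¹ := by
          refine Finset.prod_le_prod' fun s _ => ?_
          rw [stepE s]
          refine ENNReal.rpow_le_rpow ?_ (by positivity)
          refine le_trans (hIH s) (le_of_eq ?_)
          exact Finset.prod_congr rfl fun ω' _ => by rw [stepG s ω']
      _ = ∏ ω : Fin (n + 1) → Fin ℓ,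
            (∫⁻ p : Z × ∀ i : Fin (n + 1), Fin ℓ → X i,
              ∏ ω' : Fin (n + 1) → Fin ℓ, F ω (p.1, fun i => p.2 i (ω' i))
              ∂(ζ.prod ν)) ^ (((ℓ : ℝ) ^ (n + 1))⁻¹) := by
          rw [prod_cube_succ (g := fun ω => (∫⁻ p : Z × ∀ i : Fin (n + 1), Fin ℓ → X i,
            ∏ ω' : Fin (n + 1) → Fin ℓ, F ω (p.1, fun i => p.2 i (ω' i))
            ∂(ζ.prod ν)) ^ (((ℓ : ℝ) ^ (n + 1))⁻¹))]
          refine Finset.prod_congr rfl fun s _ => ?_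
          rw [← ENNReal.prod_rpow_of_nonneg (by positivity : (0:ℝ) ≤ ((ℓ:ℝ))⁻¹)]
          refine Finset.prod_congr rfl fun ω' _ => ?_
          rw [← ENNReal.rpow_mul]
          congr 1
          rw [pow_succ, mul_inv]

end GCSaux

namespace GCSaux

universe u v

theorem enorm_box_le {ℓ : ℕ} (hℓ : 0 < ℓ) (hev : Even ℓ) :
    ∀ (n : ℕ) (Z : Type (max u v)) (_mZ : MeasurableSpace Z) (ζ : Measure Z)
      (_hζ : IsProbabilityMeasure ζ) (X : Fin n → Type v) (mX : ∀ i, MeasurableSpace (X i))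
      (μ : ∀ i, Measure (X i)) (hμ : ∀ i, IsProbabilityMeasure (μ i))
      (f : (Fin n → Fin ℓ) → Z × (∀ i, X i) → ℝ) (hf : ∀ ω, Measurable (f ω))
      (_hInt : ∀ m : (Fin n → Fin ℓ) → (Fin n → Fin ℓ),
        Integrable (fun p : Z × ∀ i, Fin ℓ → X i =>
          ∏ ω : Fin n → Fin ℓ, f (m ω) (p.1, fun i => p.2 i (ω i)))
          (ζ.prod (Measure.pi fun i => Measure.pi fun _ : Fin ℓ => μ i))),
      (‖∫ p : Z × ∀ i, Fin ℓ → X i, ∏ ω : Fin n → Fin ℓ, f ω (p.1, fun i => p.2 i (ω i))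
          ∂(ζ.prod (Measure.pi fun i => Measure.pi fun _ : Fin ℓ => μ i))‖₊ : ℝ≥0∞)
        ≤ ∏ ω : Fin n → Fin ℓ,
            (‖∫ p : Z × ∀ i, Fin ℓ → X i,
              ∏ ω' : Fin n → Fin ℓ, f ω (p.1, fun i => p.2 i (ω' i))
              ∂(ζ.prod (Measure.pi fun i => Measure.pi fun _ : Fin ℓ => μ i))‖₊ : ℝ≥0∞)
            ^ (((ℓ : ℝ) ^ n)⁻¹) := by
  have hℓR : ((ℓ : ℝ)) ≠ 0 := Nat.cast_ne_zero.2 hℓ.ne'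
  intro n
  induction n with
  | zero =>
    intro Z mZ ζ hζ X mX μ hμ f hf hInt
    haveI := hζ
    simp only [Fintype.prod_unique, pow_zero, inv_one, ENNReal.rpow_one, le_refl]
  | succ n ih =>
    intro Z mZ ζ hζ X mX μ hμ f hf hInt
    haveI := hζ
    haveI : ∀ i, IsProbabilityMeasure (μ i) := hμ
    set β : Measure (Fin ℓ → X 0) := Measure.pi fun _ : Fin ℓ => μ 0 with hβdef
    set ν' : Measure (∀ i : Fin n, Fin ℓ → X i.succ) :=
      Measure.pi fun i : Fin n => Measure.pi fun _ : Fin ℓ => μ i.succ with hν'def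
    set ν : Measure (∀ i : Fin (n + 1), Fin ℓ → X i) :=
      Measure.pi fun i => Measure.pi fun _ : Fin ℓ => μ i with hνdef
    haveI : IsProbabilityMeasure β := by rw [hβdef]; infer_instance
    haveI : IsProbabilityMeasure ν' := by rw [hν'def]; infer_instance
    haveI : IsProbabilityMeasure ν := by rw [hνdef]; infer_instance
    have hproj' : ∀ ω' : Fin n → Fin ℓ,
        Measurable fun r : ∀ i : Fin n, Fin ℓ → X i.succ => fun i => r i (ω' i) :=
      fun ω' => measurable_pi_lambda _ fun i =>
        (measurable_pi_apply _).comp (measurable_pi_apply i)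
    have hprojP : ∀ ω : Fin (n + 1) → Fin ℓ,
        Measurable fun p : Z × ∀ i : Fin (n + 1), Fin ℓ → X i =>
          (p.1, fun i => p.2 i (ω i)) :=
      fun ω => measurable_fst.prodMk (measurable_pi_lambda _ fun i =>
        (measurable_pi_apply _).comp ((measurable_pi_apply i).comp measurable_snd))
    have hBigm : ∀ m : (Fin (n + 1) → Fin ℓ) → (Fin (n + 1) → Fin ℓ),
        Measurable fun p : Z × ∀ i : Fin (n + 1), Fin ℓ → X i =>
          ∏ ω : Fin (n + 1) → Fin ℓ, f (m ω) (p.1, fun i => p.2 i (ω i)) :=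
      fun m => Finset.measurable_prod _ fun ω _ => (hf (m ω)).comp (hprojP ω)
    set G : Fin ℓ → ((Z × ∀ i : Fin n, Fin ℓ → X i.succ) × X 0) → ℝ :=
      fun s q => ∏ ω' : Fin n → Fin ℓ,
        f (Fin.cons s ω') (q.1.1, Fin.cons q.2 fun i => q.1.2 i (ω' i)) with hGdef
    have hGm : ∀ s, Measurable (G s) := by
      intro s
      simp only [hGdef]
      refine Finset.measurable_prod _ fun ω' _ => ?_
      refine (hf _).comp ?_
      refine Measurable.prodMk (measurable_fst.comp measurable_fst) ?_
      exact (show Measurable fun q : (Z × ∀ i : Fin n, Fin ℓ → X i.succ) × X 0 =>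
          finConsEquiv X (q.2, fun i => q.1.2 i (ω' i)) from
        (finConsEquiv X).measurable.comp (measurable_snd.prodMk
          ((hproj' ω').comp (measurable_snd.comp measurable_fst))))
    have hsplit : MeasurePreserving (splitEquiv Z fun i : Fin (n + 1) => Fin ℓ → X i)
        (ζ.prod ν) ((ζ.prod ν').prod β) := by
      rw [hνdef, hν'def, hβdef]
      exact measurePreserving_splitEquiv ζ _
    -- pointwise splitting identity, for a general relabeling of the cube
    have hpoint : ∀ (m : (Fin (n + 1) → Fin ℓ) → (Fin (n + 1) → Fin ℓ))
        (q : (Z × ∀ i : Fin n, Fin ℓ → X i.succ) × (Fin ℓ → X 0)),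
        (∏ ω : Fin (n + 1) → Fin ℓ,
          f (m ω) (((splitEquiv Z fun i : Fin (n + 1) => Fin ℓ → X i).symm q).1,
            fun i => ((splitEquiv Z fun i : Fin (n + 1) => Fin ℓ → X i).symm q).2 i (ω i)))
        = ∏ s : Fin ℓ, ∏ ω' : Fin n → Fin ℓ,
            f (m (Fin.cons s ω')) (q.1.1, Fin.cons (q.2 s) fun i => q.1.2 i (ω' i)) := by
      intro m q
      rw [prod_cube_succ]
      refine Finset.prod_congr rfl fun s _ => ?_
      refine Finset.prod_congr rfl fun ω' _ => ?_
      congr 1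
      refine Prod.ext rfl ?_
      show (fun i => (Fin.cons q.2 q.1.2 : ∀ i : Fin (n + 1), Fin ℓ → X i) i
          (Fin.cons (α := fun _ => Fin ℓ) s ω' i)) = _
      rw [proj_cons]
      simp
    -- transferred integrability
    have hIntSplit : ∀ m : (Fin (n + 1) → Fin ℓ) → (Fin (n + 1) → Fin ℓ),
        Integrable (fun q : (Z × ∀ i : Fin n, Fin ℓ → X i.succ) × (Fin ℓ → X 0) =>
          ∏ s : Fin ℓ, ∏ ω' : Fin n → Fin ℓ,
            f (m (Fin.cons s ω')) (q.1.1, Fin.cons (q.2 s) fun i => q.1.2 i (ω' i)))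
          ((ζ.prod ν').prod β) := by
      intro m
      have h1 : Integrable ((fun p : Z × ∀ i : Fin (n + 1), Fin ℓ → X i =>
          ∏ ω : Fin (n + 1) → Fin ℓ, f (m ω) (p.1, fun i => p.2 i (ω i))) ∘
          (splitEquiv Z fun i : Fin (n + 1) => Fin ℓ → X i).symm) ((ζ.prod ν').prod β) :=
        (MeasurePreserving.integrable_comp hsplit.symm
          (hBigm m).aestronglyMeasurable).mpr (hInt m)
      exact h1.congr (Filter.Eventually.of_forall fun q => hpoint m q)
    have h1 : Integrable (fun q : (Z × ∀ i : Fin n, Fin ℓ → X i.succ) × (Fin ℓ → X 0) =>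
        ∏ s : Fin ℓ, G s (q.1, q.2 s)) ((ζ.prod ν').prod β) := by
      have := hIntSplit id
      simp only [id_eq] at this
      refine this.congr (Filter.Eventually.of_forall fun q => ?_)
      simp only [hGdef]
    -- the inner integrals
    set h : Fin ℓ → (Z × ∀ i : Fin n, Fin ℓ → X i.succ) → ℝ :=
      fun s w => ∫ u, G s (w, u) ∂(μ 0) with hhdef
    have hhm : ∀ s, StronglyMeasurable (h s) := by
      intro s
      simp only [hhdef]
      exact StronglyMeasurable.integral_prod_right (f := fun w u => G s (w, u))
        (hGm s).stronglyMeasurable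
    have stepC : ∀ w, ∫ b, ∏ s : Fin ℓ, G s (w, b s) ∂β = ∏ s : Fin ℓ, h s w := by
      intro w
      rw [hβdef]
      rw [integral_pi_fin_prod (μ 0) (fun s u => G s (w, u))]
    have calcA : ∫ p : Z × ∀ i : Fin (n + 1), Fin ℓ → X i,
          ∏ ω : Fin (n + 1) → Fin ℓ, f ω (p.1, fun i => p.2 i (ω i)) ∂(ζ.prod ν)
        = ∫ w, ∏ s : Fin ℓ, h s w ∂(ζ.prod ν') := by
      rw [← MeasurePreserving.integral_comp hsplit.symm
        (MeasurableEquiv.measurableEmbedding _) _]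
      have e0 : (fun q : (Z × ∀ i : Fin n, Fin ℓ → X i.succ) × (Fin ℓ → X 0) =>
          ∏ ω : Fin (n + 1) → Fin ℓ,
            f ω (((splitEquiv Z fun i : Fin (n + 1) => Fin ℓ → X i).symm q).1,
              fun i => ((splitEquiv Z fun i : Fin (n + 1) => Fin ℓ → X i).symm q).2 i (ω i)))
          = fun q => ∏ s : Fin ℓ, G s (q.1, q.2 s) := by
        funext q
        have h' := hpoint id q
        simp only [id_eq] at h'
        rw [h']
      rw [e0, integral_prod _ h1]
      exact integral_congr_ae (Filter.Eventually.of_forall stepC)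
    -- Hölder
    have hsum : ∑ _s : Fin ℓ, ((ℓ : ℝ))⁻¹ = 1 := by
      rw [Finset.sum_const, Finset.card_univ, Fintype.card_fin, nsmul_eq_mul,
        mul_inv_cancel₀ hℓR]
    have stepD : (‖∫ w, ∏ s : Fin ℓ, h s w ∂(ζ.prod ν')‖₊ : ℝ≥0∞)
        ≤ ∏ s : Fin ℓ, (∫⁻ w, (‖h s w‖₊ : ℝ≥0∞) ^ (ℓ : ℝ) ∂(ζ.prod ν')) ^ ((ℓ : ℝ))⁻¹ := by
      refine le_trans (le_of_le_of_eq (enorm_integral_le_lintegral_enorm _)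
        (lintegral_congr fun w => enorm_eq_nnnorm _)) ?_
      have e1 : ∀ w, (‖∏ s : Fin ℓ, h s w‖₊ : ℝ≥0∞)
          = ∏ s : Fin ℓ, ((‖h s w‖₊ : ℝ≥0∞) ^ (ℓ : ℝ)) ^ ((ℓ : ℝ))⁻¹ := by
        intro w
        rw [nnnorm_prod, ENNReal.coe_finset_prod]
        refine Finset.prod_congr rfl fun s _ => ?_
        rw [← ENNReal.rpow_mul, mul_inv_cancel₀ hℓR, ENNReal.rpow_one]
      rw [lintegral_congr e1]
      exact ENNReal.lintegral_prod_norm_pow_le Finset.univ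
        (fun s _ => (((hhm s).measurable.nnnorm.coe_nnreal_ennreal).pow_const _).aemeasurable)
        hsum (fun s _ => by positivity)
    -- the mixed product over the block
    set K : Fin ℓ → ((Z × ∀ i : Fin n, Fin ℓ → X i.succ) × (Fin ℓ → X 0)) → ℝ :=
      fun s q => ∏ v : Fin ℓ, G s (q.1, q.2 v) with hKdef
    have hKint : ∀ s, Integrable (K s) ((ζ.prod ν').prod β) := by
      intro s
      have := hIntSplit (fun ω => Fin.cons s (Fin.tail ω))
      refine this.congr (Filter.Eventually.of_forall fun q => ?_)
      simp only [hKdef, hGdef, Fin.tail_cons]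
    have hKptwise : ∀ s w, h s w ^ ℓ = ∫ b, K s (w, b) ∂β := by
      intro s w
      simp only [hKdef]
      rw [hβdef, integral_pi_fin_prod (μ 0) (fun _ u => G s (w, u)), Finset.prod_const,
        Finset.card_univ, Fintype.card_fin]
    have hpowint : ∀ s, Integrable (fun w => h s w ^ ℓ) (ζ.prod ν') := by
      intro s
      have e : (fun w => h s w ^ ℓ) = fun w => ∫ b, K s (w, b) ∂β := funext fun w => hKptwise s w
      rw [e]
      exact (hKint s).integral_prod_left
    -- the family for the induction hypothesis
    set F' : Fin ℓ → (Fin n → Fin ℓ) →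
        ((Z × (Fin ℓ → X 0)) × (∀ i : Fin n, X i.succ)) → ℝ :=
      fun s ω' t => ∏ v : Fin ℓ, f (Fin.cons s ω') (t.1.1, Fin.cons (t.1.2 v) t.2) with hF'def
    have hF'm : ∀ s ω', Measurable (F' s ω') := by
      intro s ω'
      simp only [hF'def]
      refine Finset.measurable_prod _ fun v _ => ?_
      refine (hf _).comp ?_
      refine Measurable.prodMk (measurable_fst.comp measurable_fst) ?_
      exact (show Measurable fun t : (Z × (Fin ℓ → X 0)) × (∀ i : Fin n, X i.succ) =>
          finConsEquiv X (t.1.2 v, t.2) from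
        (finConsEquiv X).measurable.comp
          (((measurable_pi_apply v).comp (measurable_snd.comp measurable_fst)).prodMk
            measurable_snd))
    have hshuffle : MeasurePreserving
        (shuffleEquiv Z (∀ i : Fin n, Fin ℓ → X i.succ) (Fin ℓ → X 0))
        ((ζ.prod ν').prod β) ((ζ.prod β).prod ν') := measurePreserving_shuffleEquiv ζ ν' β
    have hKshuffle : ∀ (s : Fin ℓ)
        (q : (Z × ∀ i : Fin n, Fin ℓ → X i.succ) × (Fin ℓ → X 0)),
        K s q = (fun t : (Z × (Fin ℓ → X 0)) × (∀ i : Fin n, Fin ℓ → X i.succ) =>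
            ∏ ω' : Fin n → Fin ℓ, F' s ω' (t.1, fun i => t.2 i (ω' i)))
            ((shuffleEquiv Z (∀ i : Fin n, Fin ℓ → X i.succ) (Fin ℓ → X 0)) q) := by
      intro s q
      simp only [hKdef, hGdef, hF'def, shuffleEquiv_apply]
      rw [Finset.prod_comm]
    have hCval : ∀ s, ∫ w, h s w ^ ℓ ∂(ζ.prod ν')
        = ∫ t, ∏ ω' : Fin n → Fin ℓ, F' s ω' (t.1, fun i => t.2 i (ω' i))
            ∂((ζ.prod β).prod ν') := by
      intro s
      have e : (fun w => h s w ^ ℓ) = fun w => ∫ b, K s (w, b) ∂β := funext fun w => hKptwise s w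
      rw [e, ← integral_prod _ (hKint s)]
      rw [← MeasurePreserving.integral_comp hshuffle (MeasurableEquiv.measurableEmbedding _) _]
      exact integral_congr_ae (Filter.Eventually.of_forall fun q => hKshuffle s q)
    have step6 : ∀ s, ∫⁻ w, (‖h s w‖₊ : ℝ≥0∞) ^ (ℓ : ℝ) ∂(ζ.prod ν')
        = ENNReal.ofReal (∫ t, ∏ ω' : Fin n → Fin ℓ, F' s ω' (t.1, fun i => t.2 i (ω' i))
            ∂((ζ.prod β).prod ν')) := by
      intro s
      have e1 : ∀ w, (‖h s w‖₊ : ℝ≥0∞) ^ (ℓ : ℝ) = ENNReal.ofReal (h s w ^ ℓ) := by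
        intro w
        rw [← enorm_eq_nnnorm, Real.enorm_eq_ofReal_abs, ENNReal.ofReal_rpow_of_nonneg (abs_nonneg _)
          (Nat.cast_nonneg ℓ), Real.rpow_natCast, hev.pow_abs]
      rw [lintegral_congr e1, ← ofReal_integral_eq_lintegral_ofReal (hpowint s)
        (Filter.Eventually.of_forall fun w => hev.pow_nonneg _), hCval s]
    -- the combined measure-preserving map for the box identity
    have hΛ : MeasurePreserving
        (((splitEquiv Z fun i : Fin (n + 1) => Fin ℓ → X i).trans
          (shuffleEquiv Z (∀ i : Fin n, Fin ℓ → X i.succ) (Fin ℓ → X 0))))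
        (ζ.prod ν) ((ζ.prod β).prod ν') :=
      mp_congr (hshuffle.comp hsplit) rfl
    -- integrability for the induction hypothesis
    have hInt' : ∀ s : Fin ℓ, ∀ m' : (Fin n → Fin ℓ) → (Fin n → Fin ℓ),
        Integrable (fun t : (Z × (Fin ℓ → X 0)) × (∀ i : Fin n, Fin ℓ → X i.succ) =>
          ∏ ω' : Fin n → Fin ℓ, F' s (m' ω') (t.1, fun i => t.2 i (ω' i)))
          ((ζ.prod β).prod ν') := by
      intro s m'
      have hmeas : Measurable (fun t : (Z × (Fin ℓ → X 0)) × (∀ i : Fin n, Fin ℓ → X i.succ) =>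
          ∏ ω' : Fin n → Fin ℓ, F' s (m' ω') (t.1, fun i => t.2 i (ω' i))) :=
        Finset.measurable_prod _ fun ω' _ => (hF'm s (m' ω')).comp
          (measurable_fst.prodMk ((hproj' ω').comp measurable_snd))
      rw [← MeasurePreserving.integrable_comp hΛ hmeas.aestronglyMeasurable]
      have := hInt (fun ω => Fin.cons s (m' (Fin.tail ω)))
      refine this.congr (Filter.Eventually.of_forall fun p => ?_)
      simp only [Function.comp_apply, MeasurableEquiv.trans_apply, splitEquiv_apply,
        shuffleEquiv_apply, hF'def]
      rw [prod_cube_succ (g := fun ω => f (Fin.cons s (m' (Fin.tail ω)))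
        (p.1, fun i => p.2 i (ω i)))]
      simp only [Fin.tail_cons]
      rw [Finset.prod_comm]
      refine Finset.prod_congr rfl fun v _ => Finset.prod_congr rfl fun ω'' _ => ?_
      congr 1
      refine Prod.ext rfl ?_
      rw [proj_cons]
    -- the box identity
    have stepG : ∀ (s : Fin ℓ) (ω' : Fin n → Fin ℓ),
        ∫ t, ∏ ω'' : Fin n → Fin ℓ, F' s ω' (t.1, fun i => t.2 i (ω'' i))
            ∂((ζ.prod β).prod ν')
          = ∫ p : Z × ∀ i : Fin (n + 1), Fin ℓ → X i,
              ∏ τ : Fin (n + 1) → Fin ℓ, f (Fin.cons s ω') (p.1, fun i => p.2 i (τ i))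
              ∂(ζ.prod ν) := by
      intro s ω'
      rw [← MeasurePreserving.integral_comp hΛ (MeasurableEquiv.measurableEmbedding _) _]
      refine integral_congr_ae (Filter.Eventually.of_forall fun p => ?_)
      simp only [MeasurableEquiv.trans_apply, splitEquiv_apply, shuffleEquiv_apply, hF'def]
      rw [prod_cube_succ (g := fun τ => f (Fin.cons s ω') (p.1, fun i => p.2 i (τ i)))]
      rw [Finset.prod_comm]
      refine Finset.prod_congr rfl fun v _ => Finset.prod_congr rfl fun ω'' _ => ?_
      congr 1
      refine Prod.ext rfl ?_
      rw [proj_cons]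
    -- apply the induction hypothesis
    have hIH : ∀ s : Fin ℓ,
        (‖∫ t, ∏ ω' : Fin n → Fin ℓ, F' s ω' (t.1, fun i => t.2 i (ω' i))
            ∂((ζ.prod β).prod ν')‖₊ : ℝ≥0∞)
          ≤ ∏ ω' : Fin n → Fin ℓ,
              (‖∫ p : Z × ∀ i : Fin (n + 1), Fin ℓ → X i,
                ∏ τ : Fin (n + 1) → Fin ℓ, f (Fin.cons s ω') (p.1, fun i => p.2 i (τ i))
                ∂(ζ.prod ν)‖₊ : ℝ≥0∞) ^ (((ℓ : ℝ) ^ n)⁻¹) := by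
      intro s
      have h := ih (Z × (Fin ℓ → X 0)) inferInstance (ζ.prod β) (by infer_instance)
        (fun i => X i.succ) (fun i => mX i.succ) (fun i => μ i.succ) (fun i => hμ i.succ)
        (F' s) (hF'm s) (hInt' s)
      rw [← hν'def] at h
      refine le_trans h (le_of_eq ?_)
      exact Finset.prod_congr rfl fun ω' _ => by rw [stepG s ω']
    -- put everything together
    calc (‖∫ p : Z × ∀ i : Fin (n + 1), Fin ℓ → X i,
          ∏ ω : Fin (n + 1) → Fin ℓ, f ω (p.1, fun i => p.2 i (ω i)) ∂(ζ.prod ν)‖₊ : ℝ≥0∞)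
        = (‖∫ w, ∏ s : Fin ℓ, h s w ∂(ζ.prod ν')‖₊ : ℝ≥0∞) := by rw [calcA]
      _ ≤ ∏ s : Fin ℓ, (∫⁻ w, (‖h s w‖₊ : ℝ≥0∞) ^ (ℓ : ℝ) ∂(ζ.prod ν')) ^ ((ℓ : ℝ))⁻¹ := stepD
      _ ≤ ∏ s : Fin ℓ, (∏ ω' : Fin n → Fin ℓ,
            (‖∫ p : Z × ∀ i : Fin (n + 1), Fin ℓ → X i,
              ∏ τ : Fin (n + 1) → Fin ℓ, f (Fin.cons s ω') (p.1, fun i => p.2 i (τ i))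
              ∂(ζ.prod ν)‖₊ : ℝ≥0∞) ^ (((ℓ : ℝ) ^ n)⁻¹)) ^ ((ℓ : ℝ))⁻¹ := by
          refine Finset.prod_le_prod' fun s _ => ?_
          refine ENNReal.rpow_le_rpow ?_ (by positivity)
          rw [step6 s]
          refine le_trans ?_ (hIH s)
          rw [← enorm_eq_nnnorm, Real.enorm_eq_ofReal_abs]
          exact ENNReal.ofReal_le_ofReal (le_abs_self _)
      _ = ∏ ω : Fin (n + 1) → Fin ℓ,
            (‖∫ p : Z × ∀ i : Fin (n + 1), Fin ℓ → X i,
              ∏ ω' : Fin (n + 1) → Fin ℓ, f ω (p.1, fun i => p.2 i (ω' i))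
              ∂(ζ.prod ν)‖₊ : ℝ≥0∞) ^ (((ℓ : ℝ) ^ (n + 1))⁻¹) := by
          rw [prod_cube_succ (g := fun ω => (‖∫ p : Z × ∀ i : Fin (n + 1), Fin ℓ → X i,
            ∏ ω' : Fin (n + 1) → Fin ℓ, f ω (p.1, fun i => p.2 i (ω' i))
            ∂(ζ.prod ν)‖₊ : ℝ≥0∞) ^ (((ℓ : ℝ) ^ (n + 1))⁻¹))]
          refine Finset.prod_congr rfl fun s _ => ?_
          rw [← ENNReal.prod_rpow_of_nonneg (by positivity : (0:ℝ) ≤ ((ℓ:ℝ))⁻¹)]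
          refine Finset.prod_congr rfl fun ω' _ => ?_
          rw [← ENNReal.rpow_mul]
          congr 1
          rw [pow_succ, mul_inv]

theorem box_nonneg {ℓ : ℕ} (hev : Even ℓ) {n : ℕ}
    (Z : Type*) [MeasurableSpace Z] (ζ : Measure Z) [IsProbabilityMeasure ζ]
    (X : Fin (n + 1) → Type*) [mX : ∀ i, MeasurableSpace (X i)]
    (μ : ∀ i, Measure (X i)) [hμ : ∀ i, IsProbabilityMeasure (μ i)]
    (f : Z × (∀ i, X i) → ℝ) (hf : Measurable f)
    (hInt : Integrable (fun p : Z × ∀ i, Fin ℓ → X i =>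
        ∏ ω : Fin (n + 1) → Fin ℓ, f (p.1, fun i => p.2 i (ω i)))
      (ζ.prod (Measure.pi fun i => Measure.pi fun _ : Fin ℓ => μ i))) :
    0 ≤ ∫ p : Z × ∀ i, Fin ℓ → X i,
        ∏ ω : Fin (n + 1) → Fin ℓ, f (p.1, fun i => p.2 i (ω i))
        ∂(ζ.prod (Measure.pi fun i => Measure.pi fun _ : Fin ℓ => μ i)) := by
  set β : Measure (Fin ℓ → X 0) := Measure.pi fun _ : Fin ℓ => μ 0 with hβdef
  set ν' : Measure (∀ i : Fin n, Fin ℓ → X i.succ) :=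
    Measure.pi fun i : Fin n => Measure.pi fun _ : Fin ℓ => μ i.succ with hν'def
  set ν : Measure (∀ i : Fin (n + 1), Fin ℓ → X i) :=
    Measure.pi fun i => Measure.pi fun _ : Fin ℓ => μ i with hνdef
  haveI : IsProbabilityMeasure β := by rw [hβdef]; infer_instance
  haveI : IsProbabilityMeasure ν' := by rw [hν'def]; infer_instance
  haveI : IsProbabilityMeasure ν := by rw [hνdef]; infer_instance
  have hproj' : ∀ ω' : Fin n → Fin ℓ,
      Measurable fun r : ∀ i : Fin n, Fin ℓ → X i.succ => fun i => r i (ω' i) :=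
    fun ω' => measurable_pi_lambda _ fun i =>
      (measurable_pi_apply _).comp (measurable_pi_apply i)
  have hprojP : ∀ ω : Fin (n + 1) → Fin ℓ,
      Measurable fun p : Z × ∀ i : Fin (n + 1), Fin ℓ → X i =>
        (p.1, fun i => p.2 i (ω i)) :=
    fun ω => measurable_fst.prodMk (measurable_pi_lambda _ fun i =>
      (measurable_pi_apply _).comp ((measurable_pi_apply i).comp measurable_snd))
  have hBigm : Measurable fun p : Z × ∀ i : Fin (n + 1), Fin ℓ → X i =>
      ∏ ω : Fin (n + 1) → Fin ℓ, f (p.1, fun i => p.2 i (ω i)) :=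
    Finset.measurable_prod _ fun ω _ => hf.comp (hprojP ω)
  set G : ((Z × ∀ i : Fin n, Fin ℓ → X i.succ) × X 0) → ℝ :=
    fun q => ∏ ω' : Fin n → Fin ℓ,
      f (q.1.1, Fin.cons q.2 fun i => q.1.2 i (ω' i)) with hGdef
  have hGm : Measurable G := by
    simp only [hGdef]
    refine Finset.measurable_prod _ fun ω' _ => ?_
    refine hf.comp ?_
    refine Measurable.prodMk (measurable_fst.comp measurable_fst) ?_
    exact (show Measurable fun q : (Z × ∀ i : Fin n, Fin ℓ → X i.succ) × X 0 =>
        finConsEquiv X (q.2, fun i => q.1.2 i (ω' i)) from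
      (finConsEquiv X).measurable.comp (measurable_snd.prodMk
        ((hproj' ω').comp (measurable_snd.comp measurable_fst))))
  have hsplit : MeasurePreserving (splitEquiv Z fun i : Fin (n + 1) => Fin ℓ → X i)
      (ζ.prod ν) ((ζ.prod ν').prod β) := by
    rw [hνdef, hν'def, hβdef]
    exact measurePreserving_splitEquiv ζ _
  have hpoint : ∀ q : (Z × ∀ i : Fin n, Fin ℓ → X i.succ) × (Fin ℓ → X 0),
      (∏ ω : Fin (n + 1) → Fin ℓ,
        f (((splitEquiv Z fun i : Fin (n + 1) => Fin ℓ → X i).symm q).1,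
          fun i => ((splitEquiv Z fun i : Fin (n + 1) => Fin ℓ → X i).symm q).2 i (ω i)))
      = ∏ s : Fin ℓ, G (q.1, q.2 s) := by
    intro q
    rw [prod_cube_succ]
    refine Finset.prod_congr rfl fun s _ => ?_
    simp only [hGdef]
    refine Finset.prod_congr rfl fun ω' _ => ?_
    congr 1
    refine Prod.ext rfl ?_
    show (fun i => (Fin.cons q.2 q.1.2 : ∀ i : Fin (n + 1), Fin ℓ → X i) i
        (Fin.cons (α := fun _ => Fin ℓ) s ω' i)) = _
    rw [proj_cons]
    simp
  have h1 : Integrable (fun q : (Z × ∀ i : Fin n, Fin ℓ → X i.succ) × (Fin ℓ → X 0) =>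
      ∏ s : Fin ℓ, G (q.1, q.2 s)) ((ζ.prod ν').prod β) := by
    have h0 : Integrable ((fun p : Z × ∀ i : Fin (n + 1), Fin ℓ → X i =>
        ∏ ω : Fin (n + 1) → Fin ℓ, f (p.1, fun i => p.2 i (ω i))) ∘
        (splitEquiv Z fun i : Fin (n + 1) => Fin ℓ → X i).symm) ((ζ.prod ν').prod β) :=
      (MeasurePreserving.integrable_comp hsplit.symm hBigm.aestronglyMeasurable).mpr hInt
    exact h0.congr (Filter.Eventually.of_forall fun q => hpoint q)
  rw [← MeasurePreserving.integral_comp hsplit.symm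
    (MeasurableEquiv.measurableEmbedding _) _]
  have e0 : (fun q : (Z × ∀ i : Fin n, Fin ℓ → X i.succ) × (Fin ℓ → X 0) =>
      ∏ ω : Fin (n + 1) → Fin ℓ,
        f (((splitEquiv Z fun i : Fin (n + 1) => Fin ℓ → X i).symm q).1,
          fun i => ((splitEquiv Z fun i : Fin (n + 1) => Fin ℓ → X i).symm q).2 i (ω i)))
      = fun q => ∏ s : Fin ℓ, G (q.1, q.2 s) := funext hpoint
  rw [e0, integral_prod _ h1]
  have e1 : ∀ w, ∫ b, ∏ s : Fin ℓ, G (w, b s) ∂β = (∫ u, G (w, u) ∂(μ 0)) ^ ℓ := by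
    intro w
    rw [hβdef, integral_pi_fin_prod (μ 0) (fun _ u => G (w, u)), Finset.prod_const,
      Finset.card_univ, Fintype.card_fin]
  rw [integral_congr_ae (Filter.Eventually.of_forall e1)]
  exact integral_nonneg fun w => hev.pow_nonneg _

end GCSaux

namespace GCSaux

universe u v

section Transfer

variable {ι : Type u} [Fintype ι] [DecidableEq ι] {X : ι → Type v} [mX : ∀ i, MeasurableSpace (X i)]
  (μ : ∀ i, Measure (X i)) [hμ : ∀ i, IsProbabilityMeasure (μ i)] {ℓ : ℕ}

theorem piCongrLeft_proj_comm {n : ℕ} (e : ι ≃ Fin n)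
    (y : ∀ k : Fin n, Fin ℓ → X (e.symm k)) (ω : ι → Fin ℓ) :
    (MeasurableEquiv.piCongrLeft X e.symm) (fun k => y k (ω (e.symm k)))
      = fun i => ((MeasurableEquiv.piCongrLeft (fun i => Fin ℓ → X i) e.symm) y) i (ω i) := by
  funext i
  obtain ⟨k, rfl⟩ := e.symm.surjective i
  simp only [MeasurableEquiv.coe_piCongrLeft]
  rw [Equiv.piCongrLeft_apply_apply, Equiv.piCongrLeft_apply_apply]

theorem prod_cube_reindex {M : Type*} [CommMonoid M] {n : ℕ} (e : ι ≃ Fin n)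
    (H : (Fin n → Fin ℓ) → (∀ i, X i) → M) (y : ∀ k : Fin n, Fin ℓ → X (e.symm k)) :
    (∏ σ : Fin n → Fin ℓ,
        H σ ((MeasurableEquiv.piCongrLeft X e.symm) (fun k => y k (σ k))))
      = ∏ ω : ι → Fin ℓ, H (fun k => ω (e.symm k))
          (fun i => ((MeasurableEquiv.piCongrLeft (fun i => Fin ℓ → X i) e.symm) y) i (ω i)) := by
  rw [← Equiv.prod_comp (Equiv.arrowCongr e (Equiv.refl (Fin ℓ)))
    (fun σ => H σ ((MeasurableEquiv.piCongrLeft X e.symm) (fun k => y k (σ k))))]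
  refine Finset.prod_congr rfl fun ω _ => ?_
  have h1 : (Equiv.arrowCongr e (Equiv.refl (Fin ℓ))) ω = fun k => ω (e.symm k) := rfl
  rw [h1]
  exact congrArg _ (piCongrLeft_proj_comm e y ω)

theorem key_lintegral {n : ℕ} (e : ι ≃ Fin n) (Φ : (∀ i, Fin ℓ → X i) → ENNReal)
    (hΦ : Measurable Φ) :
    ∫⁻ p : PUnit.{v + 1} × ∀ k : Fin n, Fin ℓ → X (e.symm k),
        Φ ((MeasurableEquiv.piCongrLeft (fun i => Fin ℓ → X i) e.symm) p.2)
        ∂((Measure.dirac PUnit.unit).prod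
          (Measure.pi fun k => Measure.pi fun _ : Fin ℓ => μ (e.symm k)))
      = ∫⁻ x, Φ x ∂(Measure.pi fun i => Measure.pi fun _ : Fin ℓ => μ i) := by
  have hmeas : Measurable (fun p : PUnit.{v + 1} × ∀ k : Fin n, Fin ℓ → X (e.symm k) =>
      Φ ((MeasurableEquiv.piCongrLeft (fun i => Fin ℓ → X i) e.symm) p.2)) :=
    hΦ.comp ((MeasurableEquiv.piCongrLeft (fun i => Fin ℓ → X i) e.symm).measurable.comp
      measurable_snd)
  rw [Measure.dirac_prod, lintegral_map hmeas measurable_prodMk_left]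
  exact (measurePreserving_piCongrLeft (fun i => Measure.pi fun _ : Fin ℓ => μ i)
    e.symm).lintegral_comp hΦ

theorem key_integral {n : ℕ} (e : ι ≃ Fin n) (Φ : (∀ i, Fin ℓ → X i) → ℝ)
    (hΦ : Measurable Φ) :
    ∫ p : PUnit.{v + 1} × ∀ k : Fin n, Fin ℓ → X (e.symm k),
        Φ ((MeasurableEquiv.piCongrLeft (fun i => Fin ℓ → X i) e.symm) p.2)
        ∂((Measure.dirac PUnit.unit).prod
          (Measure.pi fun k => Measure.pi fun _ : Fin ℓ => μ (e.symm k)))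
      = ∫ x, Φ x ∂(Measure.pi fun i => Measure.pi fun _ : Fin ℓ => μ i) := by
  have hmeas : AEStronglyMeasurable
      (fun p : PUnit.{v + 1} × ∀ k : Fin n, Fin ℓ → X (e.symm k) =>
        Φ ((MeasurableEquiv.piCongrLeft (fun i => Fin ℓ → X i) e.symm) p.2))
      (Measure.map (Prod.mk PUnit.unit)
        (Measure.pi fun k => Measure.pi fun _ : Fin ℓ => μ (e.symm k))) :=
    (hΦ.comp ((MeasurableEquiv.piCongrLeft (fun i => Fin ℓ → X i) e.symm).measurable.comp
      measurable_snd)).aestronglyMeasurable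
  rw [Measure.dirac_prod, integral_map measurable_prodMk_left.aemeasurable hmeas]
  exact MeasurePreserving.integral_comp
    (measurePreserving_piCongrLeft (fun i => Measure.pi fun _ : Fin ℓ => μ i) e.symm)
    (MeasurableEquiv.measurableEmbedding _) Φ

theorem key_integrable {n : ℕ} (e : ι ≃ Fin n) (Φ : (∀ i, Fin ℓ → X i) → ℝ)
    (hΦ : Measurable Φ)
    (hI : Integrable Φ (Measure.pi fun i => Measure.pi fun _ : Fin ℓ => μ i)) :
    Integrable
      (fun p : PUnit.{v + 1} × ∀ k : Fin n, Fin ℓ → X (e.symm k) =>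
        Φ ((MeasurableEquiv.piCongrLeft (fun i => Fin ℓ → X i) e.symm) p.2))
      ((Measure.dirac PUnit.unit).prod
        (Measure.pi fun k => Measure.pi fun _ : Fin ℓ => μ (e.symm k))) := by
  have hmeas : AEStronglyMeasurable
      (fun p : PUnit.{v + 1} × ∀ k : Fin n, Fin ℓ → X (e.symm k) =>
        Φ ((MeasurableEquiv.piCongrLeft (fun i => Fin ℓ → X i) e.symm) p.2))
      (Measure.map (Prod.mk PUnit.unit)
        (Measure.pi fun k => Measure.pi fun _ : Fin ℓ => μ (e.symm k))) :=
    (hΦ.comp ((MeasurableEquiv.piCongrLeft (fun i => Fin ℓ → X i) e.symm).measurable.comp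
      measurable_snd)).aestronglyMeasurable
  rw [Measure.dirac_prod, integrable_map_measure hmeas measurable_prodMk_left.aemeasurable]
  exact (MeasurePreserving.integrable_comp
    (measurePreserving_piCongrLeft (fun i => Measure.pi fun _ : Fin ℓ => μ i) e.symm)
    hΦ.aestronglyMeasurable).mpr hI

end Transfer

end GCSaux

namespace GCSaux

universe u v

section Fintype

variable {ι : Type u} [Fintype ι] [DecidableEq ι] {X : ι → Type v}
  [mX : ∀ i, MeasurableSpace (X i)] (μ : ∀ i, Measure (X i))
  [hμ : ∀ i, IsProbabilityMeasure (μ i)] {ℓ : ℕ}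

theorem lintegral_box_le_fintype (hℓ : 0 < ℓ)
    (F : (ι → Fin ℓ) → (∀ i, X i) → ENNReal) (hF : ∀ ω, Measurable (F ω)) :
    ∫⁻ x : ∀ i, Fin ℓ → X i, ∏ ω : ι → Fin ℓ, F ω (fun i => x i (ω i))
        ∂(Measure.pi fun i => Measure.pi fun _ : Fin ℓ => μ i)
      ≤ ∏ ω : ι → Fin ℓ, (∫⁻ x : ∀ i, Fin ℓ → X i,
          ∏ ω' : ι → Fin ℓ, F ω (fun i => x i (ω' i))
          ∂(Measure.pi fun i => Measure.pi fun _ : Fin ℓ => μ i))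
          ^ (((ℓ : ℝ) ^ Fintype.card ι)⁻¹) := by
  classical
  set n := Fintype.card ι with hn
  set e : ι ≃ Fin n := Fintype.equivFin ι with he
  have hlabel : ∀ ω : ι → Fin ℓ, (fun i => ω (e.symm (e i))) = ω :=
    fun ω => funext fun i => by rw [Equiv.symm_apply_apply]
  have hprojι : ∀ τ : ι → Fin ℓ,
      Measurable fun x : ∀ i, Fin ℓ → X i => fun i => x i (τ i) :=
    fun τ => measurable_pi_lambda _ fun i =>
      (measurable_pi_apply _).comp (measurable_pi_apply i)
  have hΦ : ∀ K : (ι → Fin ℓ) → (ι → Fin ℓ),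
      Measurable fun x : ∀ i, Fin ℓ → X i =>
        ∏ ω : ι → Fin ℓ, F (K ω) (fun i => x i (ω i)) :=
    fun K => Finset.measurable_prod _ fun ω _ => (hF (K ω)).comp (hprojι ω)
  have happ := lintegral_box_le.{v, v} hℓ n (PUnit.{v + 1}) inferInstance
    (Measure.dirac PUnit.unit) inferInstance (fun k => X (e.symm k))
    (fun k => mX (e.symm k)) (fun k => μ (e.symm k)) (fun k => hμ (e.symm k))
    (fun σ p => F (fun i => σ (e i))
      ((MeasurableEquiv.piCongrLeft X e.symm) p.2))
    (fun σ => (hF _).comp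
      ((MeasurableEquiv.piCongrLeft X e.symm).measurable.comp measurable_snd))
  -- identify the left-hand side
  have hL : ∫⁻ p : PUnit.{v + 1} × ∀ k : Fin n, Fin ℓ → X (e.symm k),
      ∏ σ : Fin n → Fin ℓ, F (fun i => σ (e i))
        ((MeasurableEquiv.piCongrLeft X e.symm) (fun k => p.2 k (σ k)))
      ∂((Measure.dirac PUnit.unit).prod
        (Measure.pi fun k => Measure.pi fun _ : Fin ℓ => μ (e.symm k)))
      = ∫⁻ x : ∀ i, Fin ℓ → X i, ∏ ω : ι → Fin ℓ, F ω (fun i => x i (ω i))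
        ∂(Measure.pi fun i => Measure.pi fun _ : Fin ℓ => μ i) := by
    rw [← key_lintegral μ e
      (fun x => ∏ ω : ι → Fin ℓ, F ω (fun i => x i (ω i))) (hΦ id)]
    refine lintegral_congr fun p => ?_
    beta_reduce
    rw [prod_cube_reindex e (fun σ x => F (fun i => σ (e i)) x) p.2]
    simp only [hlabel]
  -- identify the factors
  have hR : ∀ τ : ι → Fin ℓ,
      ∫⁻ p : PUnit.{v + 1} × ∀ k : Fin n, Fin ℓ → X (e.symm k),
        ∏ σ' : Fin n → Fin ℓ, F τ
          ((MeasurableEquiv.piCongrLeft X e.symm) (fun k => p.2 k (σ' k)))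
        ∂((Measure.dirac PUnit.unit).prod
          (Measure.pi fun k => Measure.pi fun _ : Fin ℓ => μ (e.symm k)))
      = ∫⁻ x : ∀ i, Fin ℓ → X i, ∏ ω' : ι → Fin ℓ, F τ (fun i => x i (ω' i))
        ∂(Measure.pi fun i => Measure.pi fun _ : Fin ℓ => μ i) := by
    intro τ
    rw [← key_lintegral μ e
      (fun x => ∏ ω' : ι → Fin ℓ, F τ (fun i => x i (ω' i))) (hΦ (fun _ => τ))]
    refine lintegral_congr fun p => ?_
    beta_reduce
    rw [prod_cube_reindex e (fun _σ x => F τ x) p.2]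
  have hcube : ∀ (B : (ι → Fin ℓ) → ENNReal),
      ∏ σ : Fin n → Fin ℓ, B (fun i => σ (e i)) = ∏ ω : ι → Fin ℓ, B ω := by
    intro B
    rw [← Equiv.prod_comp (Equiv.arrowCongr e (Equiv.refl (Fin ℓ)))
      (fun σ => B (fun i => σ (e i)))]
    refine Finset.prod_congr rfl fun ω _ => ?_
    congr 1
    funext i
    simp [Equiv.arrowCongr]
  calc ∫⁻ x : ∀ i, Fin ℓ → X i, ∏ ω : ι → Fin ℓ, F ω (fun i => x i (ω i))
        ∂(Measure.pi fun i => Measure.pi fun _ : Fin ℓ => μ i)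
      = _ := hL.symm
    _ ≤ _ := happ
    _ = ∏ ω : ι → Fin ℓ, (∫⁻ x : ∀ i, Fin ℓ → X i,
          ∏ ω' : ι → Fin ℓ, F ω (fun i => x i (ω' i))
          ∂(Measure.pi fun i => Measure.pi fun _ : Fin ℓ => μ i))
          ^ (((ℓ : ℝ) ^ n)⁻¹) := by
        rw [← hcube (fun ω => (∫⁻ x : ∀ i, Fin ℓ → X i,
          ∏ ω' : ι → Fin ℓ, F ω (fun i => x i (ω' i))
          ∂(Measure.pi fun i => Measure.pi fun _ : Fin ℓ => μ i))
          ^ (((ℓ : ℝ) ^ n)⁻¹))]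
        refine Finset.prod_congr rfl fun σ _ => ?_
        rw [hR (fun i => σ (e i))]

theorem enorm_box_le_fintype (hℓ : 0 < ℓ) (hev : Even ℓ)
    (f : (ι → Fin ℓ) → (∀ i, X i) → ℝ) (hf : ∀ ω, Measurable (f ω))
    (hInt : ∀ K : (ι → Fin ℓ) → (ι → Fin ℓ),
      Integrable (fun x : ∀ i, Fin ℓ → X i =>
        ∏ ω : ι → Fin ℓ, f (K ω) (fun i => x i (ω i)))
        (Measure.pi fun i => Measure.pi fun _ : Fin ℓ => μ i)) :
    (‖∫ x : ∀ i, Fin ℓ → X i, ∏ ω : ι → Fin ℓ, f ω (fun i => x i (ω i))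
        ∂(Measure.pi fun i => Measure.pi fun _ : Fin ℓ => μ i)‖₊ : ENNReal)
      ≤ ∏ ω : ι → Fin ℓ, (‖∫ x : ∀ i, Fin ℓ → X i,
          ∏ ω' : ι → Fin ℓ, f ω (fun i => x i (ω' i))
          ∂(Measure.pi fun i => Measure.pi fun _ : Fin ℓ => μ i)‖₊ : ENNReal)
          ^ (((ℓ : ℝ) ^ Fintype.card ι)⁻¹) := by
  classical
  set n := Fintype.card ι with hn
  set e : ι ≃ Fin n := Fintype.equivFin ι with he
  have hlabel : ∀ ω : ι → Fin ℓ, (fun i => ω (e.symm (e i))) = ω :=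
    fun ω => funext fun i => by rw [Equiv.symm_apply_apply]
  have hprojι : ∀ τ : ι → Fin ℓ,
      Measurable fun x : ∀ i, Fin ℓ → X i => fun i => x i (τ i) :=
    fun τ => measurable_pi_lambda _ fun i =>
      (measurable_pi_apply _).comp (measurable_pi_apply i)
  have hΦ : ∀ K : (ι → Fin ℓ) → (ι → Fin ℓ),
      Measurable fun x : ∀ i, Fin ℓ → X i =>
        ∏ ω : ι → Fin ℓ, f (K ω) (fun i => x i (ω i)) :=
    fun K => Finset.measurable_prod _ fun ω _ => (hf (K ω)).comp (hprojι ω)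
  have hInt' : ∀ m : (Fin n → Fin ℓ) → (Fin n → Fin ℓ),
      Integrable (fun p : PUnit.{v + 1} × ∀ k : Fin n, Fin ℓ → X (e.symm k) =>
        ∏ σ : Fin n → Fin ℓ, f (fun i => m σ (e i))
          ((MeasurableEquiv.piCongrLeft X e.symm) (fun k => p.2 k (σ k))))
        ((Measure.dirac PUnit.unit).prod
          (Measure.pi fun k => Measure.pi fun _ : Fin ℓ => μ (e.symm k))) := by
    intro m
    have h0 := key_integrable μ e
      (fun x => ∏ ω : ι → Fin ℓ,
        f (fun i => m (fun k => ω (e.symm k)) (e i)) (fun i => x i (ω i)))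
      (hΦ (fun ω => fun i => m (fun k => ω (e.symm k)) (e i)))
      (hInt (fun ω => fun i => m (fun k => ω (e.symm k)) (e i)))
    refine h0.congr (Filter.Eventually.of_forall fun p => ?_)
    beta_reduce
    rw [prod_cube_reindex e (fun σ x => f (fun i => m σ (e i)) x) p.2]
  have happ := enorm_box_le.{v, v} hℓ hev n (PUnit.{v + 1}) inferInstance
    (Measure.dirac PUnit.unit) inferInstance (fun k => X (e.symm k))
    (fun k => mX (e.symm k)) (fun k => μ (e.symm k)) (fun k => hμ (e.symm k))
    (fun σ p => f (fun i => σ (e i))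
      ((MeasurableEquiv.piCongrLeft X e.symm) p.2))
    (fun σ => (hf _).comp
      ((MeasurableEquiv.piCongrLeft X e.symm).measurable.comp measurable_snd))
    hInt'
  have hL : ∫ p : PUnit.{v + 1} × ∀ k : Fin n, Fin ℓ → X (e.symm k),
      ∏ σ : Fin n → Fin ℓ, f (fun i => σ (e i))
        ((MeasurableEquiv.piCongrLeft X e.symm) (fun k => p.2 k (σ k)))
      ∂((Measure.dirac PUnit.unit).prod
        (Measure.pi fun k => Measure.pi fun _ : Fin ℓ => μ (e.symm k)))
      = ∫ x : ∀ i, Fin ℓ → X i, ∏ ω : ι → Fin ℓ, f ω (fun i => x i (ω i))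
        ∂(Measure.pi fun i => Measure.pi fun _ : Fin ℓ => μ i) := by
    rw [← key_integral μ e
      (fun x => ∏ ω : ι → Fin ℓ, f ω (fun i => x i (ω i))) (hΦ id)]
    refine integral_congr_ae (Filter.Eventually.of_forall fun p => ?_)
    beta_reduce
    rw [prod_cube_reindex e (fun σ x => f (fun i => σ (e i)) x) p.2]
    simp only [hlabel]
  have hR : ∀ τ : ι → Fin ℓ,
      ∫ p : PUnit.{v + 1} × ∀ k : Fin n, Fin ℓ → X (e.symm k),
        ∏ σ' : Fin n → Fin ℓ, f τ
          ((MeasurableEquiv.piCongrLeft X e.symm) (fun k => p.2 k (σ' k)))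
        ∂((Measure.dirac PUnit.unit).prod
          (Measure.pi fun k => Measure.pi fun _ : Fin ℓ => μ (e.symm k)))
      = ∫ x : ∀ i, Fin ℓ → X i, ∏ ω' : ι → Fin ℓ, f τ (fun i => x i (ω' i))
        ∂(Measure.pi fun i => Measure.pi fun _ : Fin ℓ => μ i) := by
    intro τ
    rw [← key_integral μ e
      (fun x => ∏ ω' : ι → Fin ℓ, f τ (fun i => x i (ω' i))) (hΦ (fun _ => τ))]
    refine integral_congr_ae (Filter.Eventually.of_forall fun p => ?_)
    beta_reduce
    rw [prod_cube_reindex e (fun _σ x => f τ x) p.2]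
  have hcube : ∀ (B : (ι → Fin ℓ) → ENNReal),
      ∏ σ : Fin n → Fin ℓ, B (fun i => σ (e i)) = ∏ ω : ι → Fin ℓ, B ω := by
    intro B
    rw [← Equiv.prod_comp (Equiv.arrowCongr e (Equiv.refl (Fin ℓ)))
      (fun σ => B (fun i => σ (e i)))]
    refine Finset.prod_congr rfl fun ω _ => ?_
    congr 1
    funext i
    simp [Equiv.arrowCongr]
  calc (‖∫ x : ∀ i, Fin ℓ → X i, ∏ ω : ι → Fin ℓ, f ω (fun i => x i (ω i))
        ∂(Measure.pi fun i => Measure.pi fun _ : Fin ℓ => μ i)‖₊ : ENNReal)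
      = _ := by rw [← hL]
    _ ≤ _ := happ
    _ = ∏ ω : ι → Fin ℓ, (‖∫ x : ∀ i, Fin ℓ → X i,
          ∏ ω' : ι → Fin ℓ, f ω (fun i => x i (ω' i))
          ∂(Measure.pi fun i => Measure.pi fun _ : Fin ℓ => μ i)‖₊ : ENNReal)
          ^ (((ℓ : ℝ) ^ n)⁻¹) := by
        rw [← hcube (fun ω => (‖∫ x : ∀ i, Fin ℓ → X i,
          ∏ ω' : ι → Fin ℓ, f ω (fun i => x i (ω' i))
          ∂(Measure.pi fun i => Measure.pi fun _ : Fin ℓ => μ i)‖₊ : ENNReal)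
          ^ (((ℓ : ℝ) ^ n)⁻¹))]
        refine Finset.prod_congr rfl fun σ _ => ?_
        rw [hR (fun i => σ (e i))]

theorem box_nonneg_fintype [Nonempty ι] (hev : Even ℓ)
    (f0 : (∀ i, X i) → ℝ) (hf0 : Measurable f0)
    (hInt : Integrable (fun x : ∀ i, Fin ℓ → X i =>
        ∏ ω : ι → Fin ℓ, f0 (fun i => x i (ω i)))
      (Measure.pi fun i => Measure.pi fun _ : Fin ℓ => μ i)) :
    0 ≤ ∫ x : ∀ i, Fin ℓ → X i, ∏ ω : ι → Fin ℓ, f0 (fun i => x i (ω i))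
        ∂(Measure.pi fun i => Measure.pi fun _ : Fin ℓ => μ i) := by
  classical
  have hc : Fintype.card ι = (Fintype.card ι - 1) + 1 :=
    (Nat.succ_pred_eq_of_pos Fintype.card_pos).symm
  set m := Fintype.card ι - 1 with hm
  set e : ι ≃ Fin (m + 1) := (Fintype.equivFin ι).trans (finCongr hc) with he
  have hprojι : ∀ τ : ι → Fin ℓ,
      Measurable fun x : ∀ i, Fin ℓ → X i => fun i => x i (τ i) :=
    fun τ => measurable_pi_lambda _ fun i =>
      (measurable_pi_apply _).comp (measurable_pi_apply i)
  have hΦ : Measurable fun x : ∀ i, Fin ℓ → X i =>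
      ∏ ω : ι → Fin ℓ, f0 (fun i => x i (ω i)) :=
    Finset.measurable_prod _ fun ω _ => hf0.comp (hprojι ω)
  rw [← key_integral μ e _ hΦ]
  have hpt : ∀ p : PUnit.{v + 1} × ∀ k : Fin (m + 1), Fin ℓ → X (e.symm k),
      (∏ ω : ι → Fin ℓ, f0 (fun i =>
        ((MeasurableEquiv.piCongrLeft (fun i => Fin ℓ → X i) e.symm) p.2) i (ω i)))
      = ∏ σ : Fin (m + 1) → Fin ℓ,
          (fun q : PUnit.{v + 1} × ∀ k : Fin (m + 1), X (e.symm k) =>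
            f0 ((MeasurableEquiv.piCongrLeft X e.symm) q.2))
          (p.1, fun k => p.2 k (σ k)) := by
    intro p
    beta_reduce
    rw [prod_cube_reindex e (fun _σ x => f0 x) p.2]
  rw [integral_congr_ae (Filter.Eventually.of_forall hpt)]
  refine box_nonneg hev (PUnit.{v + 1}) (Measure.dirac PUnit.unit)
    (fun k => X (e.symm k)) (fun k => μ (e.symm k))
    (fun q => f0 ((MeasurableEquiv.piCongrLeft X e.symm) q.2))
    (hf0.comp ((MeasurableEquiv.piCongrLeft X e.symm).measurable.comp measurable_snd)) ?_
  have h0 := key_integrable μ e _ hΦ hInt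
  refine h0.congr (Filter.Eventually.of_forall fun p => ?_)
  exact hpt p

end Fintype

end GCSaux

open GCSaux

/-- Gowers–Cauchy–Schwarz inequality for the `ℓ`-box norms. -/
theorem gowers_cauchy_schwarz {ι : Type*} [Fintype ι] [DecidableEq ι] [Nonempty ι]
    {X : ι → Type*} [∀ i, MeasurableSpace (X i)] (μ : ∀ i, Measure (X i))
    [∀ i, IsProbabilityMeasure (μ i)]
    (ℓ : ℕ) (hℓ : 2 ≤ ℓ) (hev : Even ℓ)
    (f : (ι → Fin ℓ) → (∀ i, X i) → ℝ)
    (hf : ∀ ω, Integrable (f ω) (Measure.pi μ))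
    (hbox : ∀ ω : ι → Fin ℓ, Integrable
      (fun x : ∀ i, Fin ℓ → X i => ∏ ω' : ι → Fin ℓ, f ω (fun i => x i (ω' i)))
      (Measure.pi fun i => Measure.pi fun _ : Fin ℓ => μ i))
    (hint : Integrable
      (fun x : ∀ i, Fin ℓ → X i => ∏ ω : ι → Fin ℓ, f ω (fun i => x i (ω i)))
      (Measure.pi fun i => Measure.pi fun _ : Fin ℓ => μ i)) :
    |∫ x : ∀ i, Fin ℓ → X i, ∏ ω : ι → Fin ℓ, f ω (fun i => x i (ω i))
        ∂(Measure.pi fun i => Measure.pi fun _ : Fin ℓ => μ i)| ≤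
      ∏ ω : ι → Fin ℓ, boxNormOn μ Finset.univ ℓ (f ω) := by
  classical
  have hℓ0 : 0 < ℓ := lt_of_lt_of_le (by norm_num) hℓ
  set g : (ι → Fin ℓ) → (∀ i, X i) → ℝ := fun ω => (hf ω).1.mk (f ω) with hgdef
  have hgm : ∀ ω, Measurable (g ω) := fun ω => (hf ω).1.stronglyMeasurable_mk.measurable
  have hae : ∀ ω, f ω =ᵐ[Measure.pi μ] g ω := fun ω => (hf ω).1.ae_eq_mk
  have hprojmp : ∀ τ : ι → Fin ℓ, MeasurePreserving
      (fun x : ∀ i, Fin ℓ → X i => fun i => x i (τ i))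
      (Measure.pi fun i => Measure.pi fun _ : Fin ℓ => μ i) (Measure.pi μ) :=
    fun τ => measurePreserving_proj μ ℓ τ
  have hprojι : ∀ τ : ι → Fin ℓ,
      Measurable fun x : ∀ i, Fin ℓ → X i => fun i => x i (τ i) :=
    fun τ => (hprojmp τ).measurable
  have hmaster : ∀ᵐ x ∂(Measure.pi fun i => Measure.pi fun _ : Fin ℓ => μ i),
      ∀ ω τ : ι → Fin ℓ, f ω (fun i => x i (τ i)) = g ω (fun i => x i (τ i)) := by
    rw [MeasureTheory.ae_all_iff]
    intro ω
    rw [MeasureTheory.ae_all_iff]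
    intro τ
    exact (hprojmp τ).quasiMeasurePreserving.ae_eq_comp (hae ω)
  have haeA : (fun x : ∀ i, Fin ℓ → X i => ∏ ω : ι → Fin ℓ, f ω (fun i => x i (ω i)))
      =ᵐ[Measure.pi fun i => Measure.pi fun _ : Fin ℓ => μ i]
      (fun x => ∏ ω : ι → Fin ℓ, g ω (fun i => x i (ω i))) := by
    filter_upwards [hmaster] with x hx
    exact Finset.prod_congr rfl fun ω _ => hx ω ω
  have haeB : ∀ ω : ι → Fin ℓ,
      (fun x : ∀ i, Fin ℓ → X i => ∏ ω' : ι → Fin ℓ, f ω (fun i => x i (ω' i)))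
      =ᵐ[Measure.pi fun i => Measure.pi fun _ : Fin ℓ => μ i]
      (fun x => ∏ ω' : ι → Fin ℓ, g ω (fun i => x i (ω' i))) := by
    intro ω
    filter_upwards [hmaster] with x hx
    exact Finset.prod_congr rfl fun ω' _ => hx ω ω'
  have hboxg : ∀ ω : ι → Fin ℓ,
      Integrable (fun x : ∀ i, Fin ℓ → X i => ∏ ω' : ι → Fin ℓ, g ω (fun i => x i (ω' i)))
        (Measure.pi fun i => Measure.pi fun _ : Fin ℓ => μ i) :=
    fun ω => (hbox ω).congr (haeB ω)
  have hBfin : ∀ ω : ι → Fin ℓ,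
      (∫⁻ x : ∀ i, Fin ℓ → X i,
        ∏ ω' : ι → Fin ℓ, (‖g ω (fun i => x i (ω' i))‖₊ : ENNReal)
        ∂(Measure.pi fun i => Measure.pi fun _ : Fin ℓ => μ i)) < ⊤ := by
    intro ω
    have h2 := (hboxg ω).2
    rw [HasFiniteIntegral] at h2
    refine lt_of_le_of_lt (le_of_eq ?_) h2
    refine lintegral_congr fun x => ?_
    rw [enorm_eq_nnnorm, nnnorm_prod, ENNReal.coe_finset_prod]
  have hIntM : ∀ K : (ι → Fin ℓ) → (ι → Fin ℓ),
      Integrable (fun x : ∀ i, Fin ℓ → X i =>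
        ∏ ω : ι → Fin ℓ, g (K ω) (fun i => x i (ω i)))
        (Measure.pi fun i => Measure.pi fun _ : Fin ℓ => μ i) := by
    intro K
    constructor
    · exact (Finset.measurable_prod _ fun ω _ =>
        (hgm (K ω)).comp (hprojι ω)).aestronglyMeasurable
    · rw [HasFiniteIntegral]
      have hb : ∀ x : ∀ i, Fin ℓ → X i,
          (‖∏ ω : ι → Fin ℓ, g (K ω) (fun i => x i (ω i))‖₊ : ENNReal)
          = ∏ ω : ι → Fin ℓ, (‖g (K ω) (fun i => x i (ω i))‖₊ : ENNReal) := fun x => by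
        rw [nnnorm_prod, ENNReal.coe_finset_prod]
      rw [lintegral_congr fun x => (enorm_eq_nnnorm _).trans (hb x)]
      refine lt_of_le_of_lt (lintegral_box_le_fintype μ hℓ0
        (fun ω y => (‖g (K ω) y‖₊ : ENNReal))
        (fun ω => (hgm (K ω)).nnnorm.coe_nnreal_ennreal)) ?_
      refine ENNReal.prod_lt_top fun ω _ => ?_
      exact ENNReal.rpow_lt_top_of_nonneg (by positivity) (hBfin (K ω)).ne
  have hboxnn : ∀ ω : ι → Fin ℓ,
      0 ≤ ∫ x : ∀ i, Fin ℓ → X i, ∏ ω' : ι → Fin ℓ, g ω (fun i => x i (ω' i))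
        ∂(Measure.pi fun i => Measure.pi fun _ : Fin ℓ => μ i) :=
    fun ω => box_nonneg_fintype μ hev (g ω) (hgm ω) (hIntM fun _ => ω)
  have hmain := enorm_box_le_fintype μ hℓ0 hev g hgm hIntM
  have hRne : (∏ ω : ι → Fin ℓ, (‖∫ x : ∀ i, Fin ℓ → X i,
      ∏ ω' : ι → Fin ℓ, g ω (fun i => x i (ω' i))
      ∂(Measure.pi fun i => Measure.pi fun _ : Fin ℓ => μ i)‖₊ : ENNReal)
      ^ (((ℓ : ℝ) ^ Fintype.card ι)⁻¹)) ≠ ⊤ := by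
    refine (ENNReal.prod_lt_top fun ω _ => ?_).ne
    exact ENNReal.rpow_lt_top_of_nonneg (by positivity) ENNReal.coe_ne_top
  have habs : |∫ x : ∀ i, Fin ℓ → X i, ∏ ω : ι → Fin ℓ, g ω (fun i => x i (ω i))
      ∂(Measure.pi fun i => Measure.pi fun _ : Fin ℓ => μ i)|
      ≤ ∏ ω : ι → Fin ℓ, |∫ x : ∀ i, Fin ℓ → X i,
          ∏ ω' : ι → Fin ℓ, g ω (fun i => x i (ω' i))
          ∂(Measure.pi fun i => Measure.pi fun _ : Fin ℓ => μ i)|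
          ^ (((ℓ : ℝ) ^ Fintype.card ι)⁻¹) := by
    have h1 := ENNReal.toReal_mono hRne hmain
    rw [ENNReal.coe_toReal, coe_nnnorm, Real.norm_eq_abs] at h1
    refine le_trans h1 (le_of_eq ?_)
    rw [ENNReal.toReal_prod]
    refine Finset.prod_congr rfl fun ω _ => ?_
    rw [← ENNReal.toReal_rpow, ENNReal.coe_toReal, coe_nnnorm, Real.norm_eq_abs]
  rw [show (∫ x : ∀ i, Fin ℓ → X i, ∏ ω : ι → Fin ℓ, f ω (fun i => x i (ω i))
      ∂(Measure.pi fun i => Measure.pi fun _ : Fin ℓ => μ i))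
      = ∫ x : ∀ i, Fin ℓ → X i, ∏ ω : ι → Fin ℓ, g ω (fun i => x i (ω i))
      ∂(Measure.pi fun i => Measure.pi fun _ : Fin ℓ => μ i) from integral_congr_ae haeA]
  refine le_trans habs (le_of_eq ?_)
  refine Finset.prod_congr rfl fun ω _ => ?_
  rw [abs_of_nonneg (hboxnn ω)]
  have hfilter : Finset.univ.filter
      (fun ω'' : ι → Fin ℓ => ∀ i ∉ (Finset.univ : Finset ι), (ω'' i : ℕ) = 0)
      = Finset.univ := by
    refine Finset.filter_true_of_mem fun ω'' _ => ?_
    intro i hi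
    exact absurd (Finset.mem_univ i) hi
  rw [boxNormOn, hfilter, Finset.card_univ]
  congr 1
  exact (integral_congr_ae (haeB ω)).symm
end

section
/- Triangle inequality for ℓ-box norms: if e is a finite set with |e| ≥ 2, ℓ ≥ 2 is an even integer, and f, g are integrable functions on the product probability space X_e with finite ℓ-box norms, then ‖f + g‖_{□_ℓ(X_e)} ≤ ‖f‖_{□_ℓ(X_e)} + ‖g‖_{□_ℓ(X_e)}. -/
open MeasureTheory Finset

open scoped ENNReal

namespace BoxAux



theorem lintegral_fin_prod {n : ℕ} {E : Fin n → Type*} [∀ i, MeasurableSpace (E i)]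
    (κ : ∀ i, Measure (E i)) [∀ i, SigmaFinite (κ i)] (f : ∀ i, E i → ℝ≥0∞)
    (hf : ∀ i, Measurable (f i)) :
    ∫⁻ x : ∀ i, E i, ∏ i, f i (x i) ∂Measure.pi κ = ∏ i, ∫⁻ x, f i x ∂κ i := by
  induction n with
  | zero => simp
  | succ n ih =>
    have hm2 : Measurable (fun y : ∀ j : Fin n, E ((0 : Fin (n+1)).succAbove j) =>
        ∏ j, f ((0 : Fin (n+1)).succAbove j) (y j)) :=
      Finset.measurable_prod _ fun j _ => (hf _).comp (measurable_pi_apply j)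
    have h := (measurePreserving_piFinSuccAbove κ 0).lintegral_comp_emb
      (MeasurableEquiv.measurableEmbedding _)
      (fun y : E 0 × (∀ j : Fin n, E ((0 : Fin (n+1)).succAbove j)) =>
        f 0 y.1 * ∏ j, f ((0 : Fin (n+1)).succAbove j) (y.2 j))
    have h2 := lintegral_prod_mul (μ := κ 0)
      (ν := Measure.pi fun j => κ ((0 : Fin (n+1)).succAbove j))
      (hf 0).aemeasurable hm2.aemeasurable
    calc ∫⁻ x : ∀ i, E i, ∏ i, f i (x i) ∂Measure.pi κ
        = ∫⁻ x : ∀ i, E i, f 0 (x 0) *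
            ∏ j : Fin n, f ((0 : Fin (n+1)).succAbove j) (x ((0 : Fin (n+1)).succAbove j))
            ∂Measure.pi κ := by
          congr 1; ext x; rw [Fin.prod_univ_succAbove (fun i => f i (x i)) 0]
      _ = ∫⁻ y : E 0 × (∀ j : Fin n, E ((0 : Fin (n+1)).succAbove j)),
            f 0 y.1 * ∏ j, f ((0 : Fin (n+1)).succAbove j) (y.2 j)
            ∂(κ 0).prod (Measure.pi fun j => κ ((0 : Fin (n+1)).succAbove j)) := by
          rw [← h]
          rfl
      _ = (∫⁻ x, f 0 x ∂κ 0) * ∏ j : Fin n, ∫⁻ x, f ((0 : Fin (n+1)).succAbove j) x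
            ∂κ ((0 : Fin (n+1)).succAbove j) := by
          rw [h2, ih (fun j => κ _) (fun j => f _) (fun j => hf _)]
      _ = ∏ i, ∫⁻ x, f i x ∂κ i := by
          rw [Fin.prod_univ_succAbove (fun i => ∫⁻ x, f i x ∂κ i) 0]

theorem lintegral_pi_prod {ι : Type*} [Fintype ι] {E : ι → Type*} [∀ i, MeasurableSpace (E i)]
    (κ : ∀ i, Measure (E i)) [∀ i, SigmaFinite (κ i)] (f : ∀ i, E i → ℝ≥0∞)
    (hf : ∀ i, Measurable (f i)) :
    ∫⁻ x : ∀ i, E i, ∏ i, f i (x i) ∂Measure.pi κ = ∏ i, ∫⁻ x, f i x ∂κ i := by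
  let e := (Fintype.equivFin ι).symm
  rw [← (measurePreserving_piCongrLeft κ e).lintegral_comp_emb
      (MeasurableEquiv.measurableEmbedding _) (fun x => ∏ i, f i (x i))]
  rw [← e.prod_comp (fun i => ∫⁻ x, f i x ∂κ i)]
  rw [← lintegral_fin_prod (fun j => κ (e j)) (fun j => f (e j)) (fun j => hf _)]
  congr 1
  ext x
  rw [← e.prod_comp (fun i => f i _)]
  exact Finset.prod_congr rfl fun j _ => by
    rw [MeasurableEquiv.coe_piCongrLeft, Equiv.piCongrLeft_apply_apply]

theorem integral_pi_prod {ι : Type*} [Fintype ι] {E : ι → Type*} [∀ i, MeasurableSpace (E i)]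
    (κ : ∀ i, Measure (E i)) [∀ i, SigmaFinite (κ i)] (f : ∀ i, E i → ℝ) :
    ∫ x : ∀ i, E i, ∏ i, f i (x i) ∂Measure.pi κ = ∏ i, ∫ x, f i x ∂κ i :=
  MeasureTheory.integral_fintype_prod_eq_prod (μ := κ) f


variable {A B : Type*} [MeasurableSpace A] [MeasurableSpace B]

private theorem meas_prod_shape {ℓ : ℕ} (g : Fin ℓ → A × B → ℝ≥0∞) (hg : ∀ j, Measurable (g j)) :
    Measurable (fun w : A × (Fin ℓ → B) => ∏ j, g j (w.1, w.2 j)) :=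
  Finset.measurable_prod _ fun j _ => (hg j).comp
    (measurable_fst.prodMk ((measurable_pi_apply j).comp measurable_snd))

private theorem sm_prod_shape {ℓ : ℕ} (G : Fin ℓ → A × B → ℝ) (hG : ∀ j, Measurable (G j)) :
    Measurable (fun w : A × (Fin ℓ → B) => ∏ j, G j (w.1, w.2 j)) :=
  Finset.measurable_prod _ fun j _ => (hG j).comp
    (measurable_fst.prodMk ((measurable_pi_apply j).comp measurable_snd))

/-- rpow juggling : `x = (x ^ ℓ) ^ (1/ℓ)` in `ℝ≥0∞`. -/
private theorem rpow_pow_inv {ℓ : ℕ} (hℓ : ℓ ≠ 0) (x : ℝ≥0∞) :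
    (x ^ (ℓ : ℕ)) ^ ((ℓ : ℝ)⁻¹) = x := by
  rw [← ENNReal.rpow_natCast x ℓ, ← ENNReal.rpow_mul,
    mul_inv_cancel₀ (by exact_mod_cast hℓ), ENNReal.rpow_one]

private theorem sum_inv_fin (ℓ : ℕ) (hℓ : ℓ ≠ 0) : ∑ _j : Fin ℓ, (ℓ : ℝ)⁻¹ = 1 := by
  rw [Finset.sum_const, card_univ, Fintype.card_fin, nsmul_eq_mul,
    mul_inv_cancel₀ (by exact_mod_cast hℓ)]

theorem abstract_holder_lintegral (α : Measure A) (β : Measure B) [SigmaFinite α] [SigmaFinite β]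
    {ℓ : ℕ} (hℓ : ℓ ≠ 0) (g : Fin ℓ → A × B → ℝ≥0∞) (hg : ∀ j, Measurable (g j)) :
    ∫⁻ w : A × (Fin ℓ → B), ∏ j, g j (w.1, w.2 j) ∂α.prod (Measure.pi fun _ => β) ≤
      ∏ j, (∫⁻ w : A × (Fin ℓ → B), ∏ k, g j (w.1, w.2 k)
        ∂α.prod (Measure.pi fun _ => β)) ^ ((ℓ : ℝ)⁻¹) := by
  set u : Fin ℓ → A → ℝ≥0∞ := fun j a => ∫⁻ y, g j (a, y) ∂β with hu_def
  have hu : ∀ j, Measurable (u j) := fun j => (hg j).lintegral_prod_right'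
  have step1 : ∫⁻ w : A × (Fin ℓ → B), ∏ j, g j (w.1, w.2 j) ∂α.prod (Measure.pi fun _ => β)
      = ∫⁻ a, ∏ j, u j a ∂α := by
    rw [lintegral_prod _ (meas_prod_shape g hg).aemeasurable]
    congr 1; ext a
    exact lintegral_pi_prod (fun _ => β) (fun k y => g k (a, y)) fun k =>
      (hg k).comp (measurable_prodMk_left)
  have step2 : ∀ j, ∫⁻ w : A × (Fin ℓ → B), ∏ k, g j (w.1, w.2 k) ∂α.prod (Measure.pi fun _ => β)
      = ∫⁻ a, (u j a) ^ (ℓ : ℕ) ∂α := by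
    intro j
    rw [lintegral_prod _ (meas_prod_shape (fun _ => g j) (fun _ => hg j)).aemeasurable]
    congr 1; ext a
    rw [lintegral_pi_prod (fun _ => β) (fun _ y => g j (a, y)) fun k =>
      (hg j).comp (measurable_prodMk_left)]
    rw [Finset.prod_const, card_univ, Fintype.card_fin]
  rw [step1]
  calc ∫⁻ a, ∏ j, u j a ∂α
      = ∫⁻ a, ∏ j, ((u j a ^ (ℓ : ℕ)) ^ ((ℓ : ℝ)⁻¹)) ∂α := by
        congr 1; ext a; exact Finset.prod_congr rfl fun j _ => (rpow_pow_inv hℓ _).symm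
    _ ≤ ∏ j, (∫⁻ a, u j a ^ (ℓ : ℕ) ∂α) ^ ((ℓ : ℝ)⁻¹) := by
        exact ENNReal.lintegral_prod_norm_pow_le _
          (fun j _ => ((hu j).pow_const _).aemeasurable) (sum_inv_fin ℓ hℓ)
          (fun j _ => by positivity)
    _ = ∏ j, (∫⁻ w : A × (Fin ℓ → B), ∏ k, g j (w.1, w.2 k)
          ∂α.prod (Measure.pi fun _ => β)) ^ ((ℓ : ℝ)⁻¹) := by
        exact Finset.prod_congr rfl fun j _ => by rw [step2 j]


private theorem meas_prod_shapeR {ℓ : ℕ} (G : Fin ℓ → A × B → ℝ) (hG : ∀ j, Measurable (G j)) :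
    Measurable (fun w : A × (Fin ℓ → B) => ∏ j, G j (w.1, w.2 j)) :=
  Finset.measurable_prod _ fun j _ => (hG j).comp
    (measurable_fst.prodMk ((measurable_pi_apply j).comp measurable_snd))

theorem abstract_holder_integral (α : Measure A) (β : Measure B) [SigmaFinite α]
    [IsProbabilityMeasure β] {ℓ : ℕ} (hℓ : ℓ ≠ 0) (hev : Even ℓ) (G : Fin ℓ → A × B → ℝ)
    (hG : ∀ j, Measurable (G j))
    (hInt : Integrable (fun w : A × (Fin ℓ → B) => ∏ j, G j (w.1, w.2 j))
      (α.prod (Measure.pi fun _ => β)))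
    (hIntd : ∀ j, Integrable (fun w : A × (Fin ℓ → B) => ∏ k, G j (w.1, w.2 k))
      (α.prod (Measure.pi fun _ => β))) :
    (∀ j, 0 ≤ ∫ w : A × (Fin ℓ → B), ∏ k, G j (w.1, w.2 k) ∂α.prod (Measure.pi fun _ => β)) ∧
    |∫ w : A × (Fin ℓ → B), ∏ j, G j (w.1, w.2 j) ∂α.prod (Measure.pi fun _ => β)| ≤
      ∏ j, (∫ w : A × (Fin ℓ → B), ∏ k, G j (w.1, w.2 k)
        ∂α.prod (Measure.pi fun _ => β)) ^ ((ℓ : ℝ)⁻¹) := by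
  set π : Measure (Fin ℓ → B) := Measure.pi fun _ => β with hπ_def
  set q : Fin ℓ → A → ℝ := fun j a => ∫ y, G j (a, y) ∂β with hq_def
  have hsmq : ∀ j, StronglyMeasurable (q j) :=
    fun j => (hG j).stronglyMeasurable.integral_prod_right'
  have hmq : ∀ j, Measurable (q j) := fun j => (hsmq j).measurable
  -- identity for diagonal integrals
  have id1 : ∀ j, ∫ w : A × (Fin ℓ → B), ∏ k, G j (w.1, w.2 k) ∂α.prod π
      = ∫ a, q j a ^ ℓ ∂α := by
    intro j
    rw [integral_prod _ (hIntd j)]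
    congr 1; ext a
    rw [integral_pi_prod (fun _ => β) (fun _ y => G j (a, y)),
      Finset.prod_const, card_univ, Fintype.card_fin]
  have nonneg : ∀ j, 0 ≤ ∫ w : A × (Fin ℓ → B), ∏ k, G j (w.1, w.2 k) ∂α.prod π := by
    intro j
    rw [id1 j]
    exact integral_nonneg fun a => hev.pow_nonneg _
  refine ⟨nonneg, ?_⟩
  -- identity for the main integral
  have id0 : ∫ w : A × (Fin ℓ → B), ∏ j, G j (w.1, w.2 j) ∂α.prod π = ∫ a, ∏ j, q j a ∂α := by
    rw [integral_prod _ hInt]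
    congr 1; ext a
    rw [integral_pi_prod (fun _ => β) (fun k y => G k (a, y))]
  have hq_int : Integrable (fun a => ∏ j, q j a) α := by
    have := hInt.integral_prod_left
    refine this.congr (Filter.Eventually.of_forall fun a => ?_)
    show (∫ y : Fin ℓ → B, ∏ j, (fun z => G j (a, z)) (y j) ∂π) = ∏ j, q j a
    rw [hπ_def]
    exact integral_pi_prod (fun _ => β) (fun k y => G k (a, y))
  -- finiteness of the ℓ-th moment of q j
  have hfin : ∀ j, ∫⁻ a, (‖q j a‖₊ : ℝ≥0∞) ^ (ℓ : ℕ) ∂α < ⊤ := by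
    intro j
    have hub : ∀ a, (‖q j a‖₊ : ℝ≥0∞) ≤ ∫⁻ y, (‖G j (a, y)‖₊ : ℝ≥0∞) ∂β :=
      fun a => enorm_integral_le_lintegral_enorm _
    have hb : ∫⁻ a, (∫⁻ y, (‖G j (a, y)‖₊ : ℝ≥0∞) ∂β) ^ (ℓ : ℕ) ∂α
        = ∫⁻ w : A × (Fin ℓ → B), (‖∏ k, G j (w.1, w.2 k)‖₊ : ℝ≥0∞) ∂α.prod π := by
      rw [lintegral_prod (fun w : A × (Fin ℓ → B) => (‖∏ k, G j (w.1, w.2 k)‖₊ : ℝ≥0∞)) (((meas_prod_shapeR (fun _ => G j) (fun _ => hG j)).enorm).aemeasurable)]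
      congr 1; ext a
      rw [show (fun b : Fin ℓ → B => (‖∏ k, G j (a, b k)‖₊ : ℝ≥0∞))
          = fun b : Fin ℓ → B => ∏ k, (‖G j (a, b k)‖₊ : ℝ≥0∞) from funext fun b => by
            rw [nnnorm_prod]; push_cast; rfl]
      rw [lintegral_pi_prod (fun _ => β) (fun _ y => (‖G j (a, y)‖₊ : ℝ≥0∞))
        (fun k => ((hG j).comp measurable_prodMk_left).enorm),
        Finset.prod_const, card_univ, Fintype.card_fin]
    calc ∫⁻ a, (‖q j a‖₊ : ℝ≥0∞) ^ (ℓ : ℕ) ∂α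
        ≤ ∫⁻ a, (∫⁻ y, (‖G j (a, y)‖₊ : ℝ≥0∞) ∂β) ^ (ℓ : ℕ) ∂α :=
          lintegral_mono fun a => pow_le_pow_left' (hub a) _
      _ < ⊤ := by rw [hb]; exact (hIntd j).2
  have hqℓ_int : ∀ j, Integrable (fun a => q j a ^ ℓ) α := by
    intro j
    refine ⟨((hmq j).pow_const ℓ).aestronglyMeasurable, ?_⟩
    have : ∀ a, (‖q j a ^ ℓ‖₊ : ℝ≥0∞) = (‖q j a‖₊ : ℝ≥0∞) ^ (ℓ : ℕ) := fun a => by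
      rw [nnnorm_pow]; push_cast; rfl
    simpa only [HasFiniteIntegral, enorm_eq_nnnorm, this] using hfin j
  -- ENNReal-valued moments equal ofReal of real integrals
  have moment_eq : ∀ j, ∫⁻ a, (‖q j a‖₊ : ℝ≥0∞) ^ (ℓ : ℕ) ∂α
      = ENNReal.ofReal (∫ a, q j a ^ ℓ ∂α) := by
    intro j
    rw [ofReal_integral_eq_lintegral_ofReal (hqℓ_int j)
      (Filter.Eventually.of_forall fun a => hev.pow_nonneg _)]
    congr 1; ext a
    rw [← Real.enorm_eq_ofReal (hev.pow_nonneg _), enorm_eq_nnnorm, nnnorm_pow]; push_cast; rfl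
  -- main chain
  rw [id0]
  have step_abs : |∫ a, ∏ j, q j a ∂α| ≤ ∫ a, ∏ j, |q j a| ∂α := by
    simpa [Real.norm_eq_abs, Finset.abs_prod] using
      norm_integral_le_integral_norm (fun a => ∏ j, q j a) (μ := α)
  have step_lin : ∫ a, ∏ j, |q j a| ∂α = (∫⁻ a, ∏ j, (‖q j a‖₊ : ℝ≥0∞) ∂α).toReal := by
    have habs : Integrable (fun a => ∏ j, |q j a|) α := by
      refine hq_int.abs.congr (Filter.Eventually.of_forall fun a => ?_)
      simp [Finset.abs_prod]
    have hpt : ∀ a, (∏ j, (‖q j a‖₊ : ℝ≥0∞)) = ENNReal.ofReal (∏ j, |q j a|) := fun a => by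
      rw [ENNReal.ofReal_prod_of_nonneg (fun j _ => abs_nonneg _)]
      exact Finset.prod_congr rfl fun j _ => by
        rw [← Real.enorm_eq_ofReal (abs_nonneg _), enorm_eq_nnnorm]; simp
    simp only [hpt]
    rw [← ofReal_integral_eq_lintegral_ofReal habs
      (Filter.Eventually.of_forall fun a => Finset.prod_nonneg fun j _ => abs_nonneg _)]
    rw [ENNReal.toReal_ofReal (integral_nonneg fun a => Finset.prod_nonneg fun j _ => abs_nonneg _)]
  have holder : ∫⁻ a, ∏ j, (‖q j a‖₊ : ℝ≥0∞) ∂α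
      ≤ ∏ j, (ENNReal.ofReal (∫ a, q j a ^ ℓ ∂α)) ^ ((ℓ : ℝ)⁻¹) := by
    have : ∀ a, (∏ j, (‖q j a‖₊ : ℝ≥0∞))
        = ∏ j, (((‖q j a‖₊ : ℝ≥0∞) ^ (ℓ : ℕ)) ^ ((ℓ : ℝ)⁻¹)) := fun a =>
      Finset.prod_congr rfl fun j _ => (rpow_pow_inv hℓ _).symm
    simp only [this]
    calc ∫⁻ a, ∏ j, (((‖q j a‖₊ : ℝ≥0∞) ^ (ℓ : ℕ)) ^ ((ℓ : ℝ)⁻¹)) ∂α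
        ≤ ∏ j, (∫⁻ a, (‖q j a‖₊ : ℝ≥0∞) ^ (ℓ : ℕ) ∂α) ^ ((ℓ : ℝ)⁻¹) :=
          ENNReal.lintegral_prod_norm_pow_le _
            (fun j _ => (((hmq j).enorm).pow_const _).aemeasurable) (sum_inv_fin ℓ hℓ)
            (fun j _ => by positivity)
      _ = ∏ j, (ENNReal.ofReal (∫ a, q j a ^ ℓ ∂α)) ^ ((ℓ : ℝ)⁻¹) :=
          Finset.prod_congr rfl fun j _ => by rw [moment_eq j]
  have hne : (∏ j, (ENNReal.ofReal (∫ a, q j a ^ ℓ ∂α)) ^ ((ℓ : ℝ)⁻¹)) ≠ ⊤ := by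
    refine (ENNReal.prod_lt_top fun j _ => ?_).ne
    exact (ENNReal.rpow_ne_top_of_nonneg (by positivity) ENNReal.ofReal_ne_top).lt_top
  calc |∫ a, ∏ j, q j a ∂α| ≤ ∫ a, ∏ j, |q j a| ∂α := step_abs
    _ = (∫⁻ a, ∏ j, (‖q j a‖₊ : ℝ≥0∞) ∂α).toReal := step_lin
    _ ≤ (∏ j, (ENNReal.ofReal (∫ a, q j a ^ ℓ ∂α)) ^ ((ℓ : ℝ)⁻¹)).toReal :=
        ENNReal.toReal_mono hne holder
    _ = ∏ j, (∫ a, q j a ^ ℓ ∂α) ^ ((ℓ : ℝ)⁻¹) := by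
        rw [ENNReal.toReal_prod]
        refine Finset.prod_congr rfl fun j _ => ?_
        rw [← ENNReal.toReal_rpow, ENNReal.toReal_ofReal
          (integral_nonneg fun a => hev.pow_nonneg _)]
    _ = ∏ j, (∫ w : A × (Fin ℓ → B), ∏ k, G j (w.1, w.2 k) ∂α.prod π) ^ ((ℓ : ℝ)⁻¹) :=
        Finset.prod_congr rfl fun j _ => by rw [id1 j]

section Concrete

variable {ι : Type*} [Fintype ι] [DecidableEq ι] {X : ι → Type*} [∀ i, MeasurableSpace (X i)]
  (μ : ∀ i, Measure (X i)) [∀ i, IsProbabilityMeasure (μ i)] (ℓ : ℕ)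

/-- the product measure on the `ℓ`-fold box space -/
noncomputable def bigμ : Measure (∀ i, Fin ℓ → X i) :=
  Measure.pi fun i => Measure.pi fun _ : Fin ℓ => μ i

variable {μ} {ℓ}

/-- evaluation of the box point along a pattern `ω` -/
def pr (ω : ι → Fin ℓ) (z : ∀ i, Fin ℓ → X i) : ∀ i, X i := fun i => z i (ω i)

theorem measurable_pr (ω : ι → Fin ℓ) : Measurable (pr (X := X) ω) :=
  measurable_pi_lambda _ fun i => (measurable_pi_apply (ω i)).comp (measurable_pi_apply i)

/-- gluing a point of the split space back -/
def glue (a : ι) (u : ∀ i : {i : ι // i ≠ a}, Fin ℓ → X i.1) (y : X a) (ω : ι → Fin ℓ) :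
    ∀ i, X i :=
  fun i => if h : i = a then cast (congrArg X h).symm y else u ⟨i, h⟩ (ω i)

theorem pr_eq_glue (a : ι) (z : ∀ i, Fin ℓ → X i) (ω ω' : ι → Fin ℓ)
    (h : ∀ i, i ≠ a → ω' i = ω i) (k : Fin ℓ) (hk : ω a = k) :
    pr ω z = glue a (fun i => z i.1) (z a k) ω' := by
  funext i
  by_cases hi : i = a
  · subst hi
    subst hk
    simp [pr, glue]
  · simp [pr, glue, hi, h i hi]

theorem measurable_glue (a : ι) (ω : ι → Fin ℓ) :
    Measurable (fun w : (∀ i : {i : ι // i ≠ a}, Fin ℓ → X i.1) × X a => glue a w.1 w.2 ω) := by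
  apply measurable_pi_lambda
  intro i
  by_cases h : i = a
  · subst h
    simpa [glue] using measurable_snd
  · have : Measurable (fun w : (∀ i : {i : ι // i ≠ a}, Fin ℓ → X i.1) × X a =>
        w.1 ⟨i, h⟩ (ω i)) :=
      (measurable_pi_apply (ω i)).comp
        ((measurable_pi_apply (⟨i, h⟩ : {i : ι // i ≠ a})).comp measurable_fst)
    simpa [glue, h] using this

/-- the split-space representation of the fiber product -/
def Gfun (H : (ι → Fin ℓ) → (∀ i, X i) → ℝ) (a : ι) (j : Fin ℓ) :
    (∀ i : {i : ι // i ≠ a}, Fin ℓ → X i.1) × X a → ℝ :=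
  fun w => ∏ ω ∈ Finset.univ.filter (fun ω : ι → Fin ℓ => ω a = j), H ω (glue a w.1 w.2 ω)

theorem measurable_Gfun {H : (ι → Fin ℓ) → (∀ i, X i) → ℝ} (hH : ∀ ω, Measurable (H ω))
    (a : ι) (j : Fin ℓ) : Measurable (Gfun H a j) :=
  Finset.measurable_prod _ fun ω _ => (hH ω).comp (measurable_glue a ω)

theorem prod_eq_Gfun (H : (ι → Fin ℓ) → (∀ i, X i) → ℝ) (a : ι) (z : ∀ i, Fin ℓ → X i) :
    ∏ ω, H ω (pr ω z) = ∏ j, Gfun H a j (fun i => z i.1, z a j) := by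
  rw [← Finset.prod_fiberwise univ (fun ω : ι → Fin ℓ => ω a) (fun ω => H ω (pr ω z))]
  refine Finset.prod_congr rfl fun j _ => ?_
  refine Finset.prod_congr rfl fun ω hω => ?_
  rw [Finset.mem_filter] at hω
  rw [pr_eq_glue a z ω ω (fun _ _ => rfl) j hω.2]

theorem prod_update_eq_Gfun (H : (ι → Fin ℓ) → (∀ i, X i) → ℝ) (a : ι) (j : Fin ℓ)
    (z : ∀ i, Fin ℓ → X i) :
    ∏ ω, H (Function.update ω a j) (pr ω z) = ∏ k, Gfun H a j (fun i => z i.1, z a k) := by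
  rw [← Finset.prod_fiberwise univ (fun ω : ι → Fin ℓ => ω a)
    (fun ω => H (Function.update ω a j) (pr ω z))]
  refine Finset.prod_congr rfl fun k _ => ?_
  refine Finset.prod_nbij' (fun ω => Function.update ω a j) (fun ω => Function.update ω a k)
    ?_ ?_ ?_ ?_ ?_
  · intro ω hω
    simp only [mem_filter, mem_univ, true_and] at *
    simp [Function.update_self]
  · intro ω hω
    simp only [mem_filter, mem_univ, true_and] at *
    simp [Function.update_self]
  · intro ω hω
    simp only [mem_filter, mem_univ, true_and] at hω
    funext i
    by_cases hi : i = a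
    · subst hi; simp [hω]
    · simp [Function.update_of_ne hi]
  · intro ω hω
    simp only [mem_filter, mem_univ, true_and] at hω
    funext i
    by_cases hi : i = a
    · subst hi; simp [hω]
    · simp [Function.update_of_ne hi]
  · intro ω hω
    simp only [mem_filter, mem_univ, true_and] at hω
    congr 1
    refine pr_eq_glue a z ω (Function.update ω a j) (fun i hi => Function.update_of_ne hi _ _) k hω


section OneStep

variable {ι : Type*} [Fintype ι] [DecidableEq ι] {X : ι → Type*} [∀ i, MeasurableSpace (X i)]
  {μ : ∀ i, Measure (X i)} [∀ i, IsProbabilityMeasure (μ i)] {ℓ : ℕ}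

theorem prod_enorm_eq_Gfun (H : (ι → Fin ℓ) → (∀ i, X i) → ℝ) (a : ι) (z : ∀ i, Fin ℓ → X i) :
    ∏ ω, (‖H ω (pr ω z)‖₊ : ℝ≥0∞) = ∏ j, (‖Gfun H a j (fun i => z i.1, z a j)‖₊ : ℝ≥0∞) := by
  calc ∏ ω, (‖H ω (pr ω z)‖₊ : ℝ≥0∞) = (‖∏ ω, H ω (pr ω z)‖₊ : ℝ≥0∞) := by
        rw [nnnorm_prod]; push_cast; rfl
    _ = (‖∏ j, Gfun H a j (fun i => z i.1, z a j)‖₊ : ℝ≥0∞) := by rw [prod_eq_Gfun H a z]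
    _ = ∏ j, (‖Gfun H a j (fun i => z i.1, z a j)‖₊ : ℝ≥0∞) := by
        rw [nnnorm_prod]; push_cast; rfl

theorem prod_enorm_update_eq_Gfun (H : (ι → Fin ℓ) → (∀ i, X i) → ℝ) (a : ι) (j : Fin ℓ)
    (z : ∀ i, Fin ℓ → X i) :
    ∏ ω, (‖H (Function.update ω a j) (pr ω z)‖₊ : ℝ≥0∞)
      = ∏ k, (‖Gfun H a j (fun i => z i.1, z a k)‖₊ : ℝ≥0∞) := by
  calc ∏ ω, (‖H (Function.update ω a j) (pr ω z)‖₊ : ℝ≥0∞)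
      = (‖∏ ω, H (Function.update ω a j) (pr ω z)‖₊ : ℝ≥0∞) := by
        rw [nnnorm_prod]; push_cast; rfl
    _ = (‖∏ k, Gfun H a j (fun i => z i.1, z a k)‖₊ : ℝ≥0∞) := by
        rw [prod_update_eq_Gfun H a j z]
    _ = ∏ k, (‖Gfun H a j (fun i => z i.1, z a k)‖₊ : ℝ≥0∞) := by
        rw [nnnorm_prod]; push_cast; rfl

theorem onestep_both (hℓ : ℓ ≠ 0) (hev : Even ℓ) {H : (ι → Fin ℓ) → (∀ i, X i) → ℝ}
    (hH : ∀ ω, Measurable (H ω)) (a : ι) :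
    (∫⁻ z, ∏ ω, (‖H ω (pr ω z)‖₊ : ℝ≥0∞) ∂bigμ μ ℓ ≤
      ∏ j : Fin ℓ, (∫⁻ z, ∏ ω, (‖H (Function.update ω a j) (pr ω z)‖₊ : ℝ≥0∞) ∂bigμ μ ℓ)
        ^ ((ℓ : ℝ)⁻¹)) ∧
    ((Integrable (fun z => ∏ ω, H ω (pr ω z)) (bigμ μ ℓ)) →
     (∀ j, Integrable (fun z => ∏ ω, H (Function.update ω a j) (pr ω z)) (bigμ μ ℓ)) →
     (∀ j, 0 ≤ ∫ z, ∏ ω, H (Function.update ω a j) (pr ω z) ∂bigμ μ ℓ) ∧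
      |∫ z, ∏ ω, H ω (pr ω z) ∂bigμ μ ℓ| ≤
        ∏ j : Fin ℓ, (∫ z, ∏ ω, H (Function.update ω a j) (pr ω z) ∂bigμ μ ℓ) ^ ((ℓ : ℝ)⁻¹)) := by
  classical
  letI uniq : Unique {i : ι // ¬ i ≠ a} :=
    ⟨⟨⟨a, not_not_intro rfl⟩⟩, fun x => Subtype.ext (not_not.mp x.2)⟩
  set A := ∀ i : {i : ι // i ≠ a}, Fin ℓ → X i.1 with hA_def
  set αA : Measure A := Measure.pi fun i : {i : ι // i ≠ a} => Measure.pi fun _ : Fin ℓ => μ i.1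
    with hαA_def
  let e₁ := MeasurableEquiv.piEquivPiSubtypeProd (fun i => Fin ℓ → X i) (fun i => i ≠ a)
  let e₂ : (∀ i : {i : ι // ¬ i ≠ a}, Fin ℓ → X i.1) ≃ᵐ (Fin ℓ → X a) :=
    MeasurableEquiv.piUnique (fun i : {i : ι // ¬ i ≠ a} => Fin ℓ → X i.1)
  let E := e₁.trans ((MeasurableEquiv.refl A).prodCongr e₂)
  have hE : MeasurePreserving E (bigμ μ ℓ) (αA.prod (Measure.pi fun _ : Fin ℓ => μ a)) := by
    have h1 := measurePreserving_piEquivPiSubtypeProd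
      (fun i => (Measure.pi fun _ : Fin ℓ => μ i)) (fun i => i ≠ a)
    have h2 : MeasurePreserving (Prod.map (id : A → A) ⇑e₂)
        (αA.prod (Measure.pi fun i : {i : ι // ¬ i ≠ a} => Measure.pi fun _ : Fin ℓ => μ i.1))
        (αA.prod (Measure.pi fun _ : Fin ℓ => μ a)) :=
      (MeasurePreserving.id αA).prod
        (measurePreserving_piUnique fun i : {i : ι // ¬ i ≠ a} => Measure.pi fun _ : Fin ℓ => μ i.1)
    exact h2.comp h1
  have hEapp : ∀ z : ∀ i, Fin ℓ → X i, E z = (fun i : {i : ι // i ≠ a} => z i.1, z a) :=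
    fun z => rfl
  constructor
  · -- lintegral estimate
    have key := abstract_holder_lintegral αA (μ a) hℓ
      (fun j w => (‖Gfun H a j w‖₊ : ℝ≥0∞))
      (fun j => (measurable_Gfun hH a j).enorm)
    have lhs_eq : ∫⁻ z, ∏ ω, (‖H ω (pr ω z)‖₊ : ℝ≥0∞) ∂bigμ μ ℓ
        = ∫⁻ w : A × (Fin ℓ → X a), ∏ j, (‖Gfun H a j (w.1, w.2 j)‖₊ : ℝ≥0∞)
            ∂αA.prod (Measure.pi fun _ : Fin ℓ => μ a) := by
      rw [← hE.lintegral_comp_emb E.measurableEmbedding]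
      congr 1; funext z
      rw [hEapp z]
      exact prod_enorm_eq_Gfun H a z
    have rhs_eq : ∀ j, ∫⁻ z, ∏ ω, (‖H (Function.update ω a j) (pr ω z)‖₊ : ℝ≥0∞) ∂bigμ μ ℓ
        = ∫⁻ w : A × (Fin ℓ → X a), ∏ k, (‖Gfun H a j (w.1, w.2 k)‖₊ : ℝ≥0∞)
            ∂αA.prod (Measure.pi fun _ : Fin ℓ => μ a) := by
      intro j
      rw [← hE.lintegral_comp_emb E.measurableEmbedding]
      congr 1; funext z
      rw [hEapp z]
      exact prod_enorm_update_eq_Gfun H a j z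
    rw [lhs_eq]
    refine key.trans (le_of_eq ?_)
    exact Finset.prod_congr rfl fun j _ => by rw [rhs_eq j]
  · -- Bochner estimate
    intro hInt hIntj
    have lhs_eqR : ∫ z, ∏ ω, H ω (pr ω z) ∂bigμ μ ℓ
        = ∫ w : A × (Fin ℓ → X a), ∏ j, Gfun H a j (w.1, w.2 j)
            ∂αA.prod (Measure.pi fun _ : Fin ℓ => μ a) := by
      rw [← hE.integral_comp E.measurableEmbedding]
      congr 1; funext z
      rw [hEapp z]
      exact prod_eq_Gfun H a z
    have rhs_eqR : ∀ j, ∫ z, ∏ ω, H (Function.update ω a j) (pr ω z) ∂bigμ μ ℓ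
        = ∫ w : A × (Fin ℓ → X a), ∏ k, Gfun H a j (w.1, w.2 k)
            ∂αA.prod (Measure.pi fun _ : Fin ℓ => μ a) := by
      intro j
      rw [← hE.integral_comp E.measurableEmbedding]
      congr 1; funext z
      rw [hEapp z]
      exact prod_update_eq_Gfun H a j z
    have hIntG : Integrable (fun w : A × (Fin ℓ → X a) => ∏ j, Gfun H a j (w.1, w.2 j))
        (αA.prod (Measure.pi fun _ : Fin ℓ => μ a)) := by
      rw [← hE.integrable_comp_emb E.measurableEmbedding]
      refine hInt.congr (Filter.Eventually.of_forall fun z => ?_)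
      show ∏ ω, H ω (pr ω z) = ∏ j, Gfun H a j ((E z).1, (E z).2 j)
      rw [hEapp z]
      exact prod_eq_Gfun H a z
    have hIntdG : ∀ j, Integrable (fun w : A × (Fin ℓ → X a) => ∏ k, Gfun H a j (w.1, w.2 k))
        (αA.prod (Measure.pi fun _ : Fin ℓ => μ a)) := by
      intro j
      rw [← hE.integrable_comp_emb E.measurableEmbedding]
      refine (hIntj j).congr (Filter.Eventually.of_forall fun z => ?_)
      show ∏ ω, H (Function.update ω a j) (pr ω z) = ∏ k, Gfun H a j ((E z).1, (E z).2 k)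
      rw [hEapp z]
      exact prod_update_eq_Gfun H a j z
    have key := abstract_holder_integral αA (μ a) hℓ hev (fun j => Gfun H a j)
      (fun j => measurable_Gfun hH a j) hIntG hIntdG
    constructor
    · intro j
      rw [rhs_eqR j]
      exact key.1 j
    · rw [lhs_eqR]
      refine key.2.trans (le_of_eq ?_)
      exact Finset.prod_congr rfl fun j _ => by rw [rhs_eqR j]

end OneStep

end Concrete

section Patterns

variable {ι : Type*} [Fintype ι] [DecidableEq ι] {ℓ : ℕ}

variable (ℓ) in
def TS [NeZero ℓ] (S : Finset ι) : Finset (ι → Fin ℓ) :=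
  univ.filter fun τ => ∀ i ∉ S, τ i = 0

def merge (S : Finset ι) (τ ω : ι → Fin ℓ) : ι → Fin ℓ := fun i => if i ∈ S then τ i else ω i

theorem merge_empty (τ ω : ι → Fin ℓ) : merge ∅ τ ω = ω := funext fun i => by simp [merge]

theorem merge_univ (τ ω : ι → Fin ℓ) : merge univ τ ω = τ := funext fun i => by simp [merge]

theorem merge_insert {a : ι} {S : Finset ι} (ha : a ∉ S) (τ ω : ι → Fin ℓ) (j : Fin ℓ) :
    merge (insert a S) (Function.update τ a j) ω = merge S τ (Function.update ω a j) := by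
  funext i
  by_cases hi : i = a
  · subst hi; simp [merge, ha]
  · by_cases hiS : i ∈ S <;> simp [merge, hi, hiS, Function.update_of_ne hi]

theorem TS_empty [NeZero ℓ] : TS ℓ (∅ : Finset ι) = {fun _ => (0 : Fin ℓ)} := by
  ext τ; simp [TS, funext_iff]

theorem TS_univ [NeZero ℓ] : TS ℓ (univ : Finset ι) = univ := by
  ext τ; simp [TS]

theorem mem_TS_zero [NeZero ℓ] {S : Finset ι} {τ : ι → Fin ℓ} (hτ : τ ∈ TS ℓ S) {a : ι}
    (ha : a ∉ S) : τ a = 0 := by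
  rw [TS, mem_filter] at hτ
  exact hτ.2 a ha

theorem update_mem_TS_insert [NeZero ℓ] {S : Finset ι} {τ : ι → Fin ℓ} (hτ : τ ∈ TS ℓ S)
    (a : ι) (j : Fin ℓ) : Function.update τ a j ∈ TS ℓ (insert a S) := by
  rw [TS, mem_filter] at *
  refine ⟨mem_univ _, fun i hi => ?_⟩
  rw [mem_insert, not_or] at hi
  rw [Function.update_of_ne hi.1]
  exact hτ.2 i hi.2

theorem mem_TS_insert_descend [NeZero ℓ] {a : ι} {S : Finset ι} {τ' : ι → Fin ℓ}
    (hτ' : τ' ∈ TS ℓ (insert a S)) :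
    Function.update τ' a 0 ∈ TS ℓ S ∧ τ' = Function.update (Function.update τ' a 0) a (τ' a) := by
  rw [TS, mem_filter] at hτ'
  constructor
  · rw [TS, mem_filter]
    refine ⟨mem_univ _, fun i hi => ?_⟩
    by_cases h : i = a
    · subst h; simp
    · rw [Function.update_of_ne h]
      exact hτ'.2 i (by simp [h, hi])
  · rw [Function.update_idem, Function.update_eq_self]

theorem prod_TS_insert [NeZero ℓ] {M : Type*} [CommMonoid M] {a : ι} {S : Finset ι} (ha : a ∉ S)
    (F : (ι → Fin ℓ) → M) :
    ∏ τ' ∈ TS ℓ (insert a S), F τ' = ∏ τ ∈ TS ℓ S, ∏ j : Fin ℓ, F (Function.update τ a j) := by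
  rw [← Finset.prod_product' (TS ℓ S) univ (fun τ j => F (Function.update τ a j))]
  refine Finset.prod_nbij' (fun τ' => (Function.update τ' a 0, τ' a))
    (fun p => Function.update p.1 a p.2) ?_ ?_ ?_ ?_ ?_
  · intro τ' hτ'
    rw [Finset.mem_product]
    exact ⟨(mem_TS_insert_descend hτ').1, mem_univ _⟩
  · intro p hp
    rw [Finset.mem_product] at hp
    exact update_mem_TS_insert hp.1 a p.2
  · intro τ' hτ'
    exact ((mem_TS_insert_descend hτ').2).symm
  · intro p hp
    rw [Finset.mem_product] at hp
    ext1
    · simp only [Function.update_idem]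
      rw [show (0 : Fin ℓ) = p.1 a from (mem_TS_zero hp.1 ha).symm, Function.update_eq_self]
    · simp
  · intro τ' hτ'
    rw [← (mem_TS_insert_descend hτ').2]



theorem merge_single (a : ι) (τ' ω : ι → Fin ℓ) :
    merge {a} τ' ω = Function.update ω a (τ' a) := by
  funext i
  by_cases h : i = a
  · subst h; simp [merge]
  · simp [merge, h, Function.update_of_ne h]

theorem prod_TS_single [NeZero ℓ] {M : Type*} [CommMonoid M] (a : ι) (G : Fin ℓ → M) :
    ∏ τ' ∈ TS ℓ ({a} : Finset ι), G (τ' a) = ∏ j : Fin ℓ, G j := by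
  have h := prod_TS_insert (ℓ := ℓ) (a := a) (S := ∅) (Finset.notMem_empty a)
    (fun τ' => G (τ' a))
  rw [TS_empty, Finset.prod_singleton] at h
  simp only [Function.update_self] at h
  exact h


end Patterns

section Concrete2

variable {ι : Type*} [Fintype ι] [DecidableEq ι] {X : ι → Type*} [∀ i, MeasurableSpace (X i)]
  {μ : ∀ i, Measure (X i)} [∀ i, IsProbabilityMeasure (μ i)] {ℓ : ℕ}

/-! ### Gowers-Cauchy-Schwarz -/

theorem gcs_lintegral [NeZero ℓ] (hev : Even ℓ) {H : (ι → Fin ℓ) → (∀ i, X i) → ℝ}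
    (hH : ∀ ω, Measurable (H ω)) (S : Finset ι) :
    ∫⁻ z, ∏ ω, (‖H ω (pr ω z)‖₊ : ℝ≥0∞) ∂bigμ μ ℓ ≤
      ∏ τ ∈ TS ℓ S, (∫⁻ z, ∏ ω, (‖H (merge S τ ω) (pr ω z)‖₊ : ℝ≥0∞) ∂bigμ μ ℓ)
        ^ (((ℓ : ℝ) ^ S.card)⁻¹) := by
  have hℓ : ℓ ≠ 0 := NeZero.ne ℓ
  classical
  induction S using Finset.induction_on with
  | empty =>
    rw [TS_empty, Finset.prod_singleton]
    simp only [Finset.card_empty, pow_zero, inv_one, ENNReal.rpow_one, merge_empty]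
    exact le_rfl
  | @insert a S ha IH =>
    calc ∫⁻ z, ∏ ω, (‖H ω (pr ω z)‖₊ : ℝ≥0∞) ∂bigμ μ ℓ
        ≤ ∏ τ ∈ TS ℓ S, (∫⁻ z, ∏ ω, (‖H (merge S τ ω) (pr ω z)‖₊ : ℝ≥0∞) ∂bigμ μ ℓ)
            ^ (((ℓ : ℝ) ^ S.card)⁻¹) := IH
      _ ≤ ∏ τ ∈ TS ℓ S, (∏ j : Fin ℓ,
            (∫⁻ z, ∏ ω, (‖H (merge (insert a S) (Function.update τ a j) ω) (pr ω z)‖₊ : ℝ≥0∞)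
              ∂bigμ μ ℓ) ^ ((ℓ : ℝ)⁻¹)) ^ (((ℓ : ℝ) ^ S.card)⁻¹) := by
          refine Finset.prod_le_prod' fun τ _ => ENNReal.rpow_le_rpow ?_ (by positivity)
          have h1 := (onestep_both (μ := μ) hℓ hev (H := fun ω => H (merge S τ ω))
            (fun ω => hH _) a).1
          simp only [← merge_insert ha] at h1
          exact h1
      _ = ∏ τ ∈ TS ℓ S, ∏ j : Fin ℓ,
            (∫⁻ z, ∏ ω, (‖H (merge (insert a S) (Function.update τ a j) ω) (pr ω z)‖₊ : ℝ≥0∞)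
              ∂bigμ μ ℓ) ^ (((ℓ : ℝ) ^ (insert a S).card)⁻¹) := by
          refine Finset.prod_congr rfl fun τ _ => ?_
          rw [← ENNReal.prod_rpow_of_nonneg (by positivity : (0:ℝ) ≤ ((ℓ : ℝ) ^ S.card)⁻¹)]
          refine Finset.prod_congr rfl fun j _ => ?_
          rw [← ENNReal.rpow_mul, Finset.card_insert_of_notMem ha]
          congr 1
          rw [pow_succ, mul_inv]
          ring
      _ = ∏ τ' ∈ TS ℓ (insert a S),
            (∫⁻ z, ∏ ω, (‖H (merge (insert a S) τ' ω) (pr ω z)‖₊ : ℝ≥0∞) ∂bigμ μ ℓ)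
              ^ (((ℓ : ℝ) ^ (insert a S).card)⁻¹) :=
          (prod_TS_insert ha (fun τ' =>
            (∫⁻ z, ∏ ω, (‖H (merge (insert a S) τ' ω) (pr ω z)‖₊ : ℝ≥0∞) ∂bigμ μ ℓ)
              ^ (((ℓ : ℝ) ^ (insert a S).card)⁻¹))).symm

theorem gcs_integral [NeZero ℓ] (hev : Even ℓ) {H : (ι → Fin ℓ) → (∀ i, X i) → ℝ}
    (hH : ∀ ω, Measurable (H ω))
    (hInts : ∀ K : (ι → Fin ℓ) → ι → Fin ℓ,
      Integrable (fun z => ∏ ω, H (K ω) (pr ω z)) (bigμ μ ℓ))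
    (S : Finset ι) (hS : S.Nonempty) :
    (∀ τ ∈ TS ℓ S, 0 ≤ ∫ z, ∏ ω, H (merge S τ ω) (pr ω z) ∂bigμ μ ℓ) ∧
    |∫ z, ∏ ω, H ω (pr ω z) ∂bigμ μ ℓ| ≤
      ∏ τ ∈ TS ℓ S, (∫ z, ∏ ω, H (merge S τ ω) (pr ω z) ∂bigμ μ ℓ)
        ^ (((ℓ : ℝ) ^ S.card)⁻¹) := by
  have hℓ : ℓ ≠ 0 := NeZero.ne ℓ
  classical
  have ONE : ∀ (K : (ι → Fin ℓ) → ι → Fin ℓ) (a : ι),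
      (∀ j, 0 ≤ ∫ z, ∏ ω, H (K (Function.update ω a j)) (pr ω z) ∂bigμ μ ℓ) ∧
      |∫ z, ∏ ω, H (K ω) (pr ω z) ∂bigμ μ ℓ| ≤
        ∏ j : Fin ℓ, (∫ z, ∏ ω, H (K (Function.update ω a j)) (pr ω z) ∂bigμ μ ℓ)
          ^ ((ℓ : ℝ)⁻¹) := by
    intro K a
    exact (onestep_both hℓ hev (H := fun ω => H (K ω)) (fun ω => hH _) a).2
      (hInts K) (fun j => hInts fun ω => K (Function.update ω a j))
  induction hS using Finset.Nonempty.cons_induction with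
  | singleton a =>
    have key := ONE id a
    simp only [id_eq] at key
    constructor
    · intro τ' _
      simpa only [merge_single] using key.1 (τ' a)
    · refine key.2.trans (le_of_eq ?_)
      simp only [merge_single, Finset.card_singleton, pow_one]
      exact (prod_TS_single a (fun j =>
        (∫ z, ∏ ω, H (Function.update ω a j) (pr ω z) ∂bigμ μ ℓ) ^ ((ℓ : ℝ)⁻¹))).symm
  | cons a S ha hS IH =>
    simp only [Finset.cons_eq_insert]
    have nonneg : ∀ τ' ∈ TS ℓ (insert a S),
        0 ≤ ∫ z, ∏ ω, H (merge (insert a S) τ' ω) (pr ω z) ∂bigμ μ ℓ := by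
      intro τ' hτ'
      have hd := mem_TS_insert_descend hτ'
      have h0 := (ONE (fun ω => merge S (Function.update τ' a 0) ω) a).1 (τ' a)
      simp only [← merge_insert ha, ← hd.2] at h0
      exact h0
    refine ⟨nonneg, ?_⟩
    calc |∫ z, ∏ ω, H ω (pr ω z) ∂bigμ μ ℓ|
        ≤ ∏ τ ∈ TS ℓ S, (∫ z, ∏ ω, H (merge S τ ω) (pr ω z) ∂bigμ μ ℓ)
            ^ (((ℓ : ℝ) ^ S.card)⁻¹) := IH.2
      _ ≤ ∏ τ ∈ TS ℓ S, (∏ j : Fin ℓ,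
            (∫ z, ∏ ω, H (merge (insert a S) (Function.update τ a j) ω) (pr ω z) ∂bigμ μ ℓ)
              ^ ((ℓ : ℝ)⁻¹)) ^ (((ℓ : ℝ) ^ S.card)⁻¹) := by
          refine Finset.prod_le_prod (fun τ hτ => Real.rpow_nonneg (IH.1 τ hτ) _)
            (fun τ hτ => ?_)
          refine Real.rpow_le_rpow (IH.1 τ hτ) ?_ (by positivity)
          have h2 := (ONE (fun ω => merge S τ ω) a).2
          simp only [← merge_insert ha] at h2
          exact (le_abs_self _).trans h2
      _ = ∏ τ ∈ TS ℓ S, ∏ j : Fin ℓ,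
            (∫ z, ∏ ω, H (merge (insert a S) (Function.update τ a j) ω) (pr ω z) ∂bigμ μ ℓ)
              ^ (((ℓ : ℝ) ^ (insert a S).card)⁻¹) := by
          refine Finset.prod_congr rfl fun τ hτ => ?_
          rw [← Real.finset_prod_rpow _ _ (fun j _ => Real.rpow_nonneg
            (nonneg _ (update_mem_TS_insert hτ a j)) _) (((ℓ : ℝ) ^ S.card)⁻¹)]
          refine Finset.prod_congr rfl fun j _ => ?_
          rw [← Real.rpow_mul (nonneg _ (update_mem_TS_insert hτ a j)),
            Finset.card_insert_of_notMem ha]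
          congr 1
          rw [pow_succ, mul_inv]
          ring
      _ = ∏ τ' ∈ TS ℓ (insert a S),
            (∫ z, ∏ ω, H (merge (insert a S) τ' ω) (pr ω z) ∂bigμ μ ℓ)
              ^ (((ℓ : ℝ) ^ (insert a S).card)⁻¹) :=
          (prod_TS_insert ha (fun τ' =>
            (∫ z, ∏ ω, H (merge (insert a S) τ' ω) (pr ω z) ∂bigμ μ ℓ)
              ^ (((ℓ : ℝ) ^ (insert a S).card)⁻¹))).symm

end Concrete2


section Final

variable {ι : Type*} [Fintype ι] [DecidableEq ι] {X : ι → Type*} [∀ i, MeasurableSpace (X i)]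
  {μ : ∀ i, Measure (X i)} [∀ i, IsProbabilityMeasure (μ i)] {ℓ : ℕ}

/-! ### corollaries at `univ` and the main theorem -/

theorem measurable_pr' (ω : ι → Fin ℓ) : Measurable (pr (X := X) ω) :=
  measurable_pi_lambda _ fun i => (measurable_pi_apply (ω i)).comp (measurable_pi_apply i)

theorem measurePreserving_pr [NeZero ℓ] (ω : ι → Fin ℓ) :
    MeasurePreserving (pr ω) (bigμ μ ℓ) (Measure.pi μ) := by
  refine ⟨measurable_pr' ω, ?_⟩
  refine (Measure.pi_eq fun s hs => ?_).symm
  rw [Measure.map_apply (measurable_pr' ω) (MeasurableSet.univ_pi hs)]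
  have hpre : (pr ω) ⁻¹' (Set.univ.pi s)
      = Set.univ.pi (fun i => {v : Fin ℓ → X i | v (ω i) ∈ s i}) := by
    ext z
    simp [pr, Set.mem_pi]
  rw [hpre, bigμ, Measure.pi_pi]
  refine Finset.prod_congr rfl fun i _ => ?_
  have h2 : {v : Fin ℓ → X i | v (ω i) ∈ s i}
      = Set.univ.pi (fun j : Fin ℓ => if j = ω i then s i else Set.univ) := by
    ext v
    simp only [Set.mem_setOf_eq, Set.mem_pi, Set.mem_univ, true_implies]
    constructor
    · intro hv j
      by_cases h : j = ω i
      · subst h; simpa using hv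
      · simp [h]
    · intro hv
      have := hv (ω i)
      simpa using this
  rw [h2, Measure.pi_pi]
  rw [Finset.prod_eq_single_of_mem (ω i) (Finset.mem_univ _)
    (fun j _ hj => by simp [hj, measure_univ])]
  simp

/-- mixed integrability from the diagonal lintegral bounds -/
theorem integrable_prod_pattern [NeZero ℓ] (hev : Even ℓ)
    {H : (ι → Fin ℓ) → (∀ i, X i) → ℝ} (hH : ∀ ω, Measurable (H ω))
    (hfin : ∀ τ : ι → Fin ℓ,
      ∫⁻ z, ∏ ω, (‖H τ (pr ω z)‖₊ : ℝ≥0∞) ∂bigμ μ ℓ ≠ ⊤) :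
    Integrable (fun z => ∏ ω, H ω (pr ω z)) (bigμ μ ℓ) := by
  refine ⟨(Finset.measurable_prod _ fun ω _ =>
    (hH ω).comp (measurable_pr' ω)).aestronglyMeasurable, ?_⟩
  have key := gcs_lintegral (μ := μ) hev hH Finset.univ
  rw [TS_univ] at key
  have hlt : ∫⁻ z, ∏ ω, (‖H ω (pr ω z)‖₊ : ℝ≥0∞) ∂bigμ μ ℓ < ⊤ := by
    refine lt_of_le_of_lt key ?_
    refine ENNReal.prod_lt_top fun τ _ => ?_
    refine (ENNReal.rpow_ne_top_of_nonneg (by positivity) ?_).lt_top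
    refine fun htop => hfin τ ?_
    rw [← htop]
    congr 1; funext z
    exact Finset.prod_congr rfl fun ω _ => by rw [merge_univ]
  rw [HasFiniteIntegral]
  refine lt_of_le_of_lt (le_of_eq ?_) hlt
  congr 1; funext z
  rw [enorm_eq_nnnorm, nnnorm_prod]; push_cast; rfl

theorem gcs_integral_univ [NeZero ℓ] [Nonempty ι] (hev : Even ℓ)
    {H : (ι → Fin ℓ) → (∀ i, X i) → ℝ} (hH : ∀ ω, Measurable (H ω))
    (hInts : ∀ K : (ι → Fin ℓ) → ι → Fin ℓ,
      Integrable (fun z => ∏ ω, H (K ω) (pr ω z)) (bigμ μ ℓ)) :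
    (∀ τ : ι → Fin ℓ, 0 ≤ ∫ z, ∏ _ω : ι → Fin ℓ, H τ (pr _ω z) ∂bigμ μ ℓ) ∧
    |∫ z, ∏ ω, H ω (pr ω z) ∂bigμ μ ℓ| ≤
      ∏ τ : ι → Fin ℓ, (∫ z, ∏ _ω : ι → Fin ℓ, H τ (pr _ω z) ∂bigμ μ ℓ)
        ^ (((ℓ : ℝ) ^ (Fintype.card ι))⁻¹) := by
  have h := gcs_integral (μ := μ) hev hH hInts Finset.univ Finset.univ_nonempty
  rw [TS_univ] at h
  simp only [merge_univ, Finset.card_univ] at h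
  exact ⟨fun τ => h.1 τ (Finset.mem_univ τ), h.2⟩

end Final

end BoxAux


open MeasureTheory Finset BoxAux


open BoxAux

/-- Triangle inequality for the `ℓ`-box norm. -/
theorem boxNorm_add_le {ι : Type*} [Fintype ι] [DecidableEq ι]
    (hcard : 2 ≤ Fintype.card ι)
    {X : ι → Type*} [∀ i, MeasurableSpace (X i)] (μ : ∀ i, Measure (X i))
    [∀ i, IsProbabilityMeasure (μ i)]
    (ℓ : ℕ) (hℓ : 2 ≤ ℓ) (hev : Even ℓ)
    (f g : (∀ i, X i) → ℝ)
    (hf : Integrable f (Measure.pi μ)) (hg : Integrable g (Measure.pi μ))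
    (hboxf : Integrable
      (fun x : ∀ i, Fin ℓ → X i => ∏ ω : ι → Fin ℓ, f (fun i => x i (ω i)))
      (Measure.pi fun i => Measure.pi fun _ : Fin ℓ => μ i))
    (hboxg : Integrable
      (fun x : ∀ i, Fin ℓ → X i => ∏ ω : ι → Fin ℓ, g (fun i => x i (ω i)))
      (Measure.pi fun i => Measure.pi fun _ : Fin ℓ => μ i)) :
    boxNormOn μ Finset.univ ℓ (fun x => f x + g x) ≤
      boxNormOn μ Finset.univ ℓ f + boxNormOn μ Finset.univ ℓ g := by
  classical
  haveI : NeZero ℓ := ⟨by omega⟩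
  haveI : Nonempty ι := by
    rw [← Fintype.card_pos_iff]; omega
  have hℓ0 : ℓ ≠ 0 := by omega
  -- the filter is trivial
  have hfilter : Finset.univ.filter
      (fun ω : ι → Fin ℓ => ∀ i ∉ (Finset.univ : Finset ι), (ω i : ℕ) = 0) = Finset.univ :=
    Finset.filter_true_of_mem fun ω _ i hi => absurd (Finset.mem_univ i) hi
  -- measurable representatives
  set f' : (∀ i, X i) → ℝ := hf.1.mk f with hf'def
  set g' : (∀ i, X i) → ℝ := hg.1.mk g with hg'def
  have hf'm : Measurable f' := hf.1.stronglyMeasurable_mk.measurable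
  have hg'm : Measurable g' := hg.1.stronglyMeasurable_mk.measurable
  have hff' : f =ᵐ[Measure.pi μ] f' := hf.1.ae_eq_mk
  have hgg' : g =ᵐ[Measure.pi μ] g' := hg.1.ae_eq_mk
  -- ae transfer through the projections
  have hcomp : ∀ (h h' : (∀ i, X i) → ℝ), h =ᵐ[Measure.pi μ] h' → ∀ ω : ι → Fin ℓ,
      (fun z : ∀ i, Fin ℓ → X i => h (pr ω z)) =ᵐ[bigμ μ ℓ] fun z => h' (pr ω z) := by
    intro h h' hh ω
    have hmp := measurePreserving_pr (μ := μ) ω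
    exact MeasureTheory.ae_eq_comp hmp.measurable.aemeasurable (by rwa [hmp.map_eq])
  have hprodae : ∀ (H H' : (ι → Fin ℓ) → (∀ i, X i) → ℝ),
      (∀ ω, (fun z : ∀ i, Fin ℓ → X i => H ω (pr ω z)) =ᵐ[bigμ μ ℓ] fun z => H' ω (pr ω z)) →
      (fun z : ∀ i, Fin ℓ → X i => ∏ ω, H ω (pr ω z)) =ᵐ[bigμ μ ℓ]
        fun z => ∏ ω, H' ω (pr ω z) := by
    intro H H' hae
    have h2 : ∀ᵐ z ∂bigμ μ ℓ, ∀ ω : ι → Fin ℓ, H ω (pr ω z) = H' ω (pr ω z) :=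
      ae_all_iff.mpr hae
    filter_upwards [h2] with z hz
    exact Finset.prod_congr rfl fun ω _ => hz ω
  -- transferred integrability of the diagonal products
  have hboxf' : Integrable (fun z : ∀ i, Fin ℓ → X i => ∏ ω : ι → Fin ℓ, f' (pr ω z))
      (bigμ μ ℓ) :=
    (hboxf.congr (hprodae (fun _ => f) (fun _ => f') fun ω => hcomp f f' hff' ω) :)
  have hboxg' : Integrable (fun z : ∀ i, Fin ℓ → X i => ∏ ω : ι → Fin ℓ, g' (pr ω z))
      (bigμ μ ℓ) :=
    (hboxg.congr (hprodae (fun _ => g) (fun _ => g') fun ω => hcomp g g' hgg' ω) :)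
  have hfinf : ∫⁻ z, ∏ ω : ι → Fin ℓ, (‖f' (pr ω z)‖₊ : ℝ≥0∞) ∂bigμ μ ℓ ≠ ⊤ := by
    have h2 := hboxf'.2
    rw [HasFiniteIntegral] at h2
    refine ne_of_lt (lt_of_le_of_lt (le_of_eq ?_) h2)
    congr 1; funext z
    rw [enorm_eq_nnnorm, nnnorm_prod]; push_cast; rfl
  have hfing : ∫⁻ z, ∏ ω : ι → Fin ℓ, (‖g' (pr ω z)‖₊ : ℝ≥0∞) ∂bigμ μ ℓ ≠ ⊤ := by
    have h2 := hboxg'.2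
    rw [HasFiniteIntegral] at h2
    refine ne_of_lt (lt_of_le_of_lt (le_of_eq ?_) h2)
    congr 1; funext z
    rw [enorm_eq_nnnorm, nnnorm_prod]; push_cast; rfl
  -- mixed integrability
  have hmix : ∀ H : (ι → Fin ℓ) → (∀ i, X i) → ℝ, (∀ ω, H ω = f' ∨ H ω = g') →
      Integrable (fun z => ∏ ω, H ω (pr ω z)) (bigμ μ ℓ) := by
    intro H hval
    refine integrable_prod_pattern hev (fun ω => ?_) (fun τ => ?_)
    · rcases hval ω with h | h <;> rw [h]
      exacts [hf'm, hg'm]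
    · rcases hval τ with h | h <;> rw [h]
      exacts [hfinf, hfing]
  -- abbreviations
  set d : ℕ := Fintype.card ι with hd
  set A : ℝ := ∫ z, ∏ _ω : ι → Fin ℓ, f' (pr _ω z) ∂bigμ μ ℓ with hA
  set B : ℝ := ∫ z, ∏ _ω : ι → Fin ℓ, g' (pr _ω z) ∂bigμ μ ℓ with hB
  have hAnn : 0 ≤ A :=
    (gcs_integral_univ (μ := μ) hev (H := fun _ => f') (fun _ => hf'm)
      (fun K => hboxf')).1 (fun _ => 0)
  have hBnn : 0 ≤ B :=
    (gcs_integral_univ (μ := μ) hev (H := fun _ => g') (fun _ => hg'm)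
      (fun K => hboxg')).1 (fun _ => 0)
  -- the key Gowers-Cauchy-Schwarz bound for each mixed term
  have hkey : ∀ t : Finset (ι → Fin ℓ),
      |∫ z, ∏ ω, (if ω ∈ t then f' else g') (pr ω z) ∂bigμ μ ℓ|
        ≤ ∏ τ : ι → Fin ℓ, (if τ ∈ t then A else B) ^ (((ℓ : ℝ) ^ d)⁻¹) := by
    intro t
    have h := (gcs_integral_univ (μ := μ) hev (H := fun ω => if ω ∈ t then f' else g')
      (fun ω => by by_cases h : ω ∈ t <;> simp [h, hf'm, hg'm])
      (fun K => hmix _ (fun ω => by by_cases h : K ω ∈ t <;> simp [h]))).2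
    refine h.trans (le_of_eq (Finset.prod_congr rfl fun τ _ => ?_))
    by_cases hτ : τ ∈ t
    · simp only [if_pos hτ]; rfl
    · simp only [if_neg hτ]; rfl
  -- filters
  have hfil1 : ∀ t : Finset (ι → Fin ℓ), Finset.univ.filter (fun ω => ω ∈ t) = t := by
    intro t; ext ω; simp
  have hfil2 : ∀ t : Finset (ι → Fin ℓ), Finset.univ.filter (fun ω => ω ∉ t) =
      Finset.univ \ t := by
    intro t; ext ω; simp [Finset.mem_sdiff]
  -- binomial expansion of the product of sums
  have hsum : ∀ z : ∀ i, Fin ℓ → X i, ∏ ω : ι → Fin ℓ, (f' (pr ω z) + g' (pr ω z))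
      = ∑ t ∈ (Finset.univ : Finset (ι → Fin ℓ)).powerset,
          ∏ ω, (if ω ∈ t then f' else g') (pr ω z) := by
    intro z
    rw [Finset.prod_add]
    refine Finset.sum_congr rfl fun t ht => ?_
    rw [show ∏ ω, (if ω ∈ t then f' else g') (pr ω z)
        = ∏ ω, (if ω ∈ t then f' (pr ω z) else g' (pr ω z)) from
      Finset.prod_congr rfl fun ω _ => by by_cases h : ω ∈ t <;> simp [h]]
    rw [Finset.prod_ite, hfil1 t, hfil2 t]
  have hIntAdd : Integrable (fun z => ∏ ω : ι → Fin ℓ, (f' (pr ω z) + g' (pr ω z)))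
      (bigμ μ ℓ) := by
    rw [show (fun z => ∏ ω : ι → Fin ℓ, (f' (pr ω z) + g' (pr ω z)))
        = fun z => ∑ t ∈ (Finset.univ : Finset (ι → Fin ℓ)).powerset,
            ∏ ω, (if ω ∈ t then f' else g') (pr ω z) from funext hsum]
    exact integrable_finset_sum _
      (fun t ht => hmix _ (fun ω => by by_cases h : ω ∈ t <;> simp [h]))
  set C : ℝ := ∫ z, ∏ ω : ι → Fin ℓ, (f' (pr ω z) + g' (pr ω z)) ∂bigμ μ ℓ with hC
  have hCnn : 0 ≤ C :=
    (gcs_integral_univ (μ := μ) hev (H := fun _ω x => f' x + g' x)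
      (fun _ => hf'm.add hg'm) (fun K => hIntAdd)).1 (fun _ => 0)
  set x : ℝ := A ^ (((ℓ : ℝ) ^ d)⁻¹) with hx
  set y : ℝ := B ^ (((ℓ : ℝ) ^ d)⁻¹) with hy
  have hxnn : 0 ≤ x := Real.rpow_nonneg hAnn _
  have hynn : 0 ≤ y := Real.rpow_nonneg hBnn _
  set Nn : ℕ := Fintype.card (ι → Fin ℓ) with hNn
  have hCle : C ≤ (x + y) ^ Nn := by
    calc C = ∑ t ∈ (Finset.univ : Finset (ι → Fin ℓ)).powerset,
          ∫ z, ∏ ω, (if ω ∈ t then f' else g') (pr ω z) ∂bigμ μ ℓ := by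
          rw [hC, show (fun z => ∏ ω : ι → Fin ℓ, (f' (pr ω z) + g' (pr ω z)))
              = fun z => ∑ t ∈ (Finset.univ : Finset (ι → Fin ℓ)).powerset,
                  ∏ ω, (if ω ∈ t then f' else g') (pr ω z) from funext hsum]
          exact integral_finset_sum _
            (fun t ht => hmix _ (fun ω => by by_cases h : ω ∈ t <;> simp [h]))
      _ ≤ ∑ t ∈ (Finset.univ : Finset (ι → Fin ℓ)).powerset,
          |∫ z, ∏ ω, (if ω ∈ t then f' else g') (pr ω z) ∂bigμ μ ℓ| :=
          Finset.sum_le_sum fun t _ => le_abs_self _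
      _ ≤ ∑ t ∈ (Finset.univ : Finset (ι → Fin ℓ)).powerset,
          ∏ τ : ι → Fin ℓ, (if τ ∈ t then A else B) ^ (((ℓ : ℝ) ^ d)⁻¹) :=
          Finset.sum_le_sum fun t _ => hkey t
      _ = ∑ t ∈ (Finset.univ : Finset (ι → Fin ℓ)).powerset,
          x ^ t.card * y ^ ((Finset.univ : Finset (ι → Fin ℓ)) \ t).card := by
          refine Finset.sum_congr rfl fun t _ => ?_
          rw [show (fun τ : ι → Fin ℓ => (if τ ∈ t then A else B) ^ (((ℓ : ℝ) ^ d)⁻¹))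
              = fun τ => (if τ ∈ t then x else y) from funext fun τ => by
                by_cases h : τ ∈ t <;> simp [h, hx, hy]]
          rw [Finset.prod_ite, hfil1 t, hfil2 t, Finset.prod_const, Finset.prod_const]
      _ = (x + y) ^ Nn := by
          have hb := Finset.prod_add (fun _ : ι → Fin ℓ => x) (fun _ : ι → Fin ℓ => y)
            Finset.univ
          simp only [Finset.prod_const] at hb
          rw [← hb, Finset.card_univ]
  -- identification of the three box integrals
  have hIf : (∫ z : ∀ i, Fin ℓ → X i, ∏ ω : ι → Fin ℓ, f (fun i => z i (ω i))
      ∂(Measure.pi fun i => Measure.pi fun _ : Fin ℓ => μ i)) = A := by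
    show (∫ z, ∏ ω : ι → Fin ℓ, f (pr ω z) ∂bigμ μ ℓ) = A
    exact integral_congr_ae (hprodae (fun _ => f) (fun _ => f') fun ω => hcomp f f' hff' ω)
  have hIg : (∫ z : ∀ i, Fin ℓ → X i, ∏ ω : ι → Fin ℓ, g (fun i => z i (ω i))
      ∂(Measure.pi fun i => Measure.pi fun _ : Fin ℓ => μ i)) = B := by
    show (∫ z, ∏ ω : ι → Fin ℓ, g (pr ω z) ∂bigμ μ ℓ) = B
    exact integral_congr_ae (hprodae (fun _ => g) (fun _ => g') fun ω => hcomp g g' hgg' ω)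
  have hIfg : (∫ z : ∀ i, Fin ℓ → X i, ∏ ω : ι → Fin ℓ,
        (fun x => f x + g x) (fun i => z i (ω i))
      ∂(Measure.pi fun i => Measure.pi fun _ : Fin ℓ => μ i)) = C := by
    show (∫ z, ∏ ω : ι → Fin ℓ, (f (pr ω z) + g (pr ω z)) ∂bigμ μ ℓ) = C
    refine integral_congr_ae (hprodae (fun _ z => f z + g z) (fun _ z => f' z + g' z)
      fun ω => ?_)
    exact hcomp _ _ (hff'.add hgg') ω
  -- finish
  have hNnR : ((Nn : ℕ) : ℝ) = (ℓ : ℝ) ^ d := by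
    rw [hNn, Fintype.card_fun, Fintype.card_fin]
    push_cast
    rfl
  have hNne : ((ℓ : ℝ) ^ d) ≠ 0 := by positivity
  rw [boxNormOn, boxNormOn, boxNormOn, hfilter, Finset.card_univ, ← hd, hIf, hIg, hIfg]
  calc C ^ (((ℓ : ℝ) ^ d)⁻¹)
      ≤ ((x + y) ^ Nn) ^ (((ℓ : ℝ) ^ d)⁻¹) :=
        Real.rpow_le_rpow hCnn hCle (by positivity)
    _ = x + y := by
        rw [← Real.rpow_natCast (x + y) Nn, ← Real.rpow_mul (by linarith), hNnR,
          mul_inv_cancel₀ hNne, Real.rpow_one]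
end

section
/- Hölder inequality for (ℓ,p)-box norms: let e be a nonempty finite index set, ℓ ≥ 2 an even integer, and 1 < p, q < ∞ conjugate exponents. Then for every f ∈ L_p(X_e) and g ∈ L_q(X_e), ‖fg‖_{□_ℓ(X_e)} ≤ ‖f‖_{□_{ℓ,p}(X_e)} · ‖g‖_{□_{ℓ,q}(X_e)}. -/
open MeasureTheory Finset

/-- The `(ℓ,p)`-box norm, `‖f‖_{□_{ℓ,p}} = ‖|f|^p‖_{□_ℓ}^{1/p}`. -/
noncomputable def pBoxNormOn {ι : Type*} [Fintype ι] [DecidableEq ι] {X : ι → Type*}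
    [∀ i, MeasurableSpace (X i)] (μ : ∀ i, Measure (X i))
    (e : Finset ι) (ℓ : ℕ) (p : ℝ) (f : (∀ i, X i) → ℝ) : ℝ :=
  (boxNormOn μ e ℓ (fun x => |f x| ^ p)) ^ p⁻¹

open scoped ENNReal

private lemma measurePreserving_eval_aux {δ : Type*} [Fintype δ] [DecidableEq δ] {Y : δ → Type*}
    [∀ j, MeasurableSpace (Y j)] (ν : ∀ j, Measure (Y j)) [∀ j, IsProbabilityMeasure (ν j)]
    (k : δ) : MeasurePreserving (fun x : ∀ j, Y j => x k) (Measure.pi ν) (ν k) := by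
  refine ⟨measurable_pi_apply k, ?_⟩
  ext s hs
  rw [Measure.map_apply (measurable_pi_apply k) hs]
  have : (fun x : ∀ j, Y j => x k) ⁻¹' s =
      Set.pi Set.univ (Function.update (fun _ => Set.univ) k s) := Set.eval_preimage
  rw [this, Measure.pi_pi]
  refine Finset.prod_eq_single_of_mem k (Finset.mem_univ k) (fun j _ hj => ?_) |>.trans ?_
  · rw [Function.update_of_ne hj]; exact measure_univ
  · rw [Function.update_self]

/-- Hölder inequality for the `(ℓ,p)`-box norms. -/
theorem boxNorm_mul_le {ι : Type*} [Fintype ι] [DecidableEq ι] [Nonempty ι]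
    {X : ι → Type*} [∀ i, MeasurableSpace (X i)] (μ : ∀ i, Measure (X i))
    [∀ i, IsProbabilityMeasure (μ i)]
    (ℓ : ℕ) (hℓ : 2 ≤ ℓ) (hev : Even ℓ)
    (p q : ℝ) (hp : 1 < p) (hq : 1 < q) (hpq : 1 / p + 1 / q = 1)
    (f g : (∀ i, X i) → ℝ)
    (hf : MemLp f (ENNReal.ofReal p) (Measure.pi μ))
    (hg : MemLp g (ENNReal.ofReal q) (Measure.pi μ))
    (hboxf : Integrable
      (fun x : ∀ i, Fin ℓ → X i => ∏ ω : ι → Fin ℓ, |f (fun i => x i (ω i))| ^ p)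
      (Measure.pi fun i => Measure.pi fun _ : Fin ℓ => μ i))
    (hboxg : Integrable
      (fun x : ∀ i, Fin ℓ → X i => ∏ ω : ι → Fin ℓ, |g (fun i => x i (ω i))| ^ q)
      (Measure.pi fun i => Measure.pi fun _ : Fin ℓ => μ i)) :
    boxNormOn μ Finset.univ ℓ (fun x => f x * g x) ≤
      pBoxNormOn μ Finset.univ ℓ p f * pBoxNormOn μ Finset.univ ℓ q g := by
  have hp0 : 0 < p := lt_trans one_pos hp
  have hq0 : 0 < q := lt_trans one_pos hq
  set ν : Measure (∀ i, Fin ℓ → X i) :=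
    Measure.pi fun i => Measure.pi fun _ : Fin ℓ => μ i with hν
  -- the sampling maps are measure preserving
  have hT : ∀ ω : ι → Fin ℓ,
      MeasurePreserving (fun x : ∀ i, Fin ℓ → X i => fun i => x i (ω i)) ν (Measure.pi μ) :=
    fun ω => MeasureTheory.measurePreserving_pi _ _
      (fun i => measurePreserving_eval_aux (fun _ : Fin ℓ => μ i) (ω i))
  set A : (∀ i, Fin ℓ → X i) → ℝ := fun x => ∏ ω : ι → Fin ℓ, |f (fun i => x i (ω i))| with hA
  set B : (∀ i, Fin ℓ → X i) → ℝ := fun x => ∏ ω : ι → Fin ℓ, |g (fun i => x i (ω i))| with hB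
  have hA_nonneg : ∀ x, 0 ≤ A x := fun x => Finset.prod_nonneg fun ω _ => abs_nonneg _
  have hB_nonneg : ∀ x, 0 ≤ B x := fun x => Finset.prod_nonneg fun ω _ => abs_nonneg _
  have hA_sm : AEStronglyMeasurable A ν := by
    refine Finset.aestronglyMeasurable_fun_prod _ fun ω _ => ?_
    refine (hf.1.comp_measurePreserving (hT ω)).norm.congr
      (Filter.Eventually.of_forall fun x => ?_)
    simp [Function.comp, Real.norm_eq_abs]
  have hB_sm : AEStronglyMeasurable B ν := by
    refine Finset.aestronglyMeasurable_fun_prod _ fun ω _ => ?_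
    refine (hg.1.comp_measurePreserving (hT ω)).norm.congr
      (Filter.Eventually.of_forall fun x => ?_)
    simp [Function.comp, Real.norm_eq_abs]
  -- pointwise power identities
  have hAp : ∀ x, A x ^ p = ∏ ω : ι → Fin ℓ, |f (fun i => x i (ω i))| ^ p := fun x =>
    (Real.finset_prod_rpow _ _ (fun ω _ => abs_nonneg _) p).symm
  have hBq : ∀ x, B x ^ q = ∏ ω : ι → Fin ℓ, |g (fun i => x i (ω i))| ^ q := fun x =>
    (Real.finset_prod_rpow _ _ (fun ω _ => abs_nonneg _) q).symm
  -- `Memℒp` from integrability of the powers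
  have memA : MemLp A (ENNReal.ofReal p) ν := by
    have hne0 : ENNReal.ofReal p ≠ 0 := by
      simpa [ENNReal.ofReal_eq_zero, not_le] using hp0
    have key := (memLp_norm_rpow_iff (p := ENNReal.ofReal p) (q := ENNReal.ofReal p)
      hA_sm hne0 ENNReal.ofReal_ne_top)
    rw [ENNReal.div_self hne0 ENNReal.ofReal_ne_top] at key
    refine key.mp ?_
    rw [memLp_one_iff_integrable]
    refine hboxf.congr ?_
    refine Filter.Eventually.of_forall fun x => ?_
    simp only [ENNReal.toReal_ofReal hp0.le, Real.norm_eq_abs]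
    rw [abs_of_nonneg (hA_nonneg x)]
    exact (hAp x).symm
  have memB : MemLp B (ENNReal.ofReal q) ν := by
    have hne0 : ENNReal.ofReal q ≠ 0 := by
      simpa [ENNReal.ofReal_eq_zero, not_le] using hq0
    have key := (memLp_norm_rpow_iff (p := ENNReal.ofReal q) (q := ENNReal.ofReal q)
      hB_sm hne0 ENNReal.ofReal_ne_top)
    rw [ENNReal.div_self hne0 ENNReal.ofReal_ne_top] at key
    refine key.mp ?_
    rw [memLp_one_iff_integrable]
    refine hboxg.congr ?_
    refine Filter.Eventually.of_forall fun x => ?_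
    simp only [ENNReal.toReal_ofReal hq0.le, Real.norm_eq_abs]
    rw [abs_of_nonneg (hB_nonneg x)]
    exact (hBq x).symm
  -- Hölder inequality for the integrals
  have hpq' : Real.HolderConjugate p q := Real.holderConjugate_iff.mpr ⟨hp, by simpa [one_div] using hpq⟩
  have holder := MeasureTheory.integral_mul_le_Lp_mul_Lq_of_nonneg hpq'
    (Filter.Eventually.of_forall hA_nonneg) (Filter.Eventually.of_forall hB_nonneg) memA memB
  -- abbreviations
  set If : ℝ := ∫ x, ∏ ω : ι → Fin ℓ, |f (fun i => x i (ω i))| ^ p ∂ν with hIf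
  set Ig : ℝ := ∫ x, ∏ ω : ι → Fin ℓ, |g (fun i => x i (ω i))| ^ q ∂ν with hIg
  have hIf_nonneg : 0 ≤ If := integral_nonneg fun x =>
    Finset.prod_nonneg fun ω _ => Real.rpow_nonneg (abs_nonneg _) _
  have hIg_nonneg : 0 ≤ Ig := integral_nonneg fun x =>
    Finset.prod_nonneg fun ω _ => Real.rpow_nonneg (abs_nonneg _) _
  have hAint : (∫ x, A x ^ p ∂ν) = If := integral_congr_ae (Filter.Eventually.of_forall hAp)
  have hBint : (∫ x, B x ^ q ∂ν) = Ig := integral_congr_ae (Filter.Eventually.of_forall hBq)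
  rw [hAint, hBint] at holder
  -- the `ℓ`-box integral of `f*g`
  set S : ℝ := ∫ x, ∏ ω : ι → Fin ℓ, f (fun i => x i (ω i)) * g (fun i => x i (ω i)) ∂ν with hS
  have habs : |S| ≤ ∫ x, A x * B x ∂ν := by
    calc |S| = ‖S‖ := (Real.norm_eq_abs _).symm
      _ ≤ ∫ x, ‖∏ ω : ι → Fin ℓ, f (fun i => x i (ω i)) * g (fun i => x i (ω i))‖ ∂ν :=
        norm_integral_le_integral_norm _
      _ = ∫ x, A x * B x ∂ν := by
        refine integral_congr_ae (Filter.Eventually.of_forall fun x => ?_)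
        simp only [Real.norm_eq_abs, Finset.abs_prod, abs_mul, hA, hB]
        exact Finset.prod_mul_distrib
  -- the filter condition is trivial for `e = univ`
  have hfilter : ∀ (P : (ι → Fin ℓ) → Prop) [DecidablePred P],
      (∀ ω, P ω) → Finset.univ.filter P = Finset.univ :=
    fun P _ hP => Finset.filter_true_of_mem fun ω _ => hP ω
  set y : ℝ := ((ℓ : ℝ) ^ (Finset.univ : Finset ι).card)⁻¹ with hy
  have hy_nonneg : 0 ≤ y := by positivity
  -- unfold the definitions
  have hbox_fg : boxNormOn μ Finset.univ ℓ (fun x => f x * g x) = S ^ y := by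
    rw [boxNormOn, hfilter _ (fun ω i hi => absurd (Finset.mem_univ i) hi)]
  have hbox_f : boxNormOn μ Finset.univ ℓ (fun x => |f x| ^ p) = If ^ y := by
    rw [boxNormOn, hfilter _ (fun ω i hi => absurd (Finset.mem_univ i) hi)]
  have hbox_g : boxNormOn μ Finset.univ ℓ (fun x => |g x| ^ q) = Ig ^ y := by
    rw [boxNormOn, hfilter _ (fun ω i hi => absurd (Finset.mem_univ i) hi)]
  rw [hbox_fg, pBoxNormOn, pBoxNormOn, hbox_f, hbox_g]
  have hRHS : (If ^ y) ^ p⁻¹ * (Ig ^ y) ^ q⁻¹ =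
      (If ^ (1 / p) * Ig ^ (1 / q)) ^ y := by
    rw [Real.mul_rpow (Real.rpow_nonneg hIf_nonneg _) (Real.rpow_nonneg hIg_nonneg _),
      ← Real.rpow_mul hIf_nonneg, ← Real.rpow_mul hIg_nonneg,
      ← Real.rpow_mul hIf_nonneg, ← Real.rpow_mul hIg_nonneg,
      one_div, one_div, mul_comm p⁻¹ y, mul_comm q⁻¹ y]
  rw [hRHS]
  calc S ^ y ≤ |S ^ y| := le_abs_self _
    _ ≤ |S| ^ y := Real.abs_rpow_le_abs_rpow _ _
    _ ≤ (If ^ (1 / p) * Ig ^ (1 / q)) ^ y :=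
      Real.rpow_le_rpow (abs_nonneg _) (habs.trans holder) hy_nonneg
end

section
/- The (ℓ,p)-box norm dominates the L_p norm: for every nonempty finite index set e, even integer ℓ ≥ 2, 1 ≤ p < ∞, and f ∈ L_p(X_e), one has ‖f‖_{L_p(X_e)} ≤ ‖f‖_{□_{ℓ,p}(X_e)}. -/
open MeasureTheory Finset

open scoped ENNReal

section AuxLemmas
open Function

section Aux

variable {ι : Type*} [DecidableEq ι] {X : ι → Type*}
  [∀ i, MeasurableSpace (X i)]

variable [Fintype ι] (μ : ∀ i, Measure (X i)) [∀ i, IsProbabilityMeasure (μ i)]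

lemma measurePreserving_updatePair (a : ι) :
    MeasurePreserving (fun p : (∀ i, X i) × X a => Function.update p.1 a p.2)
      ((Measure.pi μ).prod (μ a)) (Measure.pi μ) := by
  refine ⟨measurable_update', ?_⟩
  refine (Measure.pi_eq fun s hs => ?_).symm
  rw [Measure.map_apply measurable_update' (MeasurableSet.univ_pi hs)]
  have hpre : (fun p : (∀ i, X i) × X a => Function.update p.1 a p.2) ⁻¹' Set.pi Set.univ s
      = (Set.pi Set.univ (Function.update s a Set.univ)) ×ˢ (s a) := by
    ext p
    simp only [Set.mem_preimage, Set.mem_pi, Set.mem_univ, forall_true_left, Set.mem_prod]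
    constructor
    · intro h
      refine ⟨fun i => ?_, by simpa using h a⟩
      by_cases hi : i = a
      · subst hi; simp
      · simpa [Function.update_of_ne hi] using h i
    · rintro ⟨h1, h2⟩ i
      by_cases hi : i = a
      · subst hi; simpa
      · have := h1 i; simpa [Function.update_of_ne hi] using this
  rw [hpre, Measure.prod_prod, Measure.pi_pi]
  rw [Finset.prod_eq_mul_prod_sdiff_singleton_of_mem (Finset.mem_univ a)
      (fun i => μ i (Function.update s a Set.univ i)),
    Finset.prod_eq_mul_prod_sdiff_singleton_of_mem (Finset.mem_univ a) (fun i => μ i (s i))]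
  have h1 : μ a (Function.update s a Set.univ a) = 1 := by simp
  have h2 : ∀ i ∈ Finset.univ \ {a}, μ i (Function.update s a Set.univ i) = μ i (s i) := by
    intro i hi
    rw [Function.update_of_ne (by simpa using (Finset.mem_sdiff.1 hi).2)]
  rw [h1, one_mul, Finset.prod_congr rfl h2]
  exact mul_comm _ _

lemma lintegral_update_pi (a : ι) {h : (∀ i, X i) → ℝ≥0∞} (hm : Measurable h) :
    ∫⁻ x, h x ∂Measure.pi μ
      = ∫⁻ x, ∫⁻ t, h (Function.update x a t) ∂(μ a) ∂(Measure.pi μ) := by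
  rw [← (measurePreserving_updatePair μ a).lintegral_comp hm, lintegral_prod]
  exact (hm.comp measurable_update').aemeasurable

lemma measurePreserving_evalPi (a : ι) :
    MeasurePreserving (fun y : ∀ i, X i => y a) (Measure.pi μ) (μ a) := by
  refine ⟨measurable_pi_apply a, ?_⟩
  ext s hs
  rw [Measure.map_apply (measurable_pi_apply a) hs]
  have hpre : (fun y : ∀ i, X i => y a) ⁻¹' s
      = Set.pi Set.univ (Function.update (fun i => (Set.univ : Set (X i))) a s) := by
    ext y
    simp only [Set.mem_preimage, Set.mem_pi, Set.mem_univ, forall_true_left]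
    constructor
    · intro hy i
      by_cases hi : i = a
      · subst hi; simpa
      · simp [Function.update_of_ne hi]
    · intro hy
      simpa using hy a
  rw [hpre, Measure.pi_pi,
    Finset.prod_eq_mul_prod_sdiff_singleton_of_mem (Finset.mem_univ a)]
  have h2 : ∀ i ∈ Finset.univ \ {a},
      μ i (Function.update (fun i => (Set.univ : Set (X i))) a s i) = 1 := by
    intro i hi
    rw [Function.update_of_ne (by simpa using (Finset.mem_sdiff.1 hi).2)]
    simp
  rw [Finset.prod_congr rfl h2, Finset.prod_const_one, mul_one]
  simp

lemma lintegral_pi_prod_finset (H : ∀ i, X i → ℝ≥0∞) (hH : ∀ i, Measurable (H i))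
    (s : Finset ι) :
    ∫⁻ y, ∏ i ∈ s, H i (y i) ∂Measure.pi μ = ∏ i ∈ s, ∫⁻ t, H i t ∂μ i := by
  classical
  induction s using Finset.induction_on with
  | empty => simp
  | @insert a s ha ih =>
    rw [Finset.prod_insert ha]
    have hmeas : Measurable fun y : ∀ i, X i => ∏ i ∈ insert a s, H i (y i) := by
      exact Finset.measurable_prod _ fun i _ => (hH i).comp (measurable_pi_apply i)
    rw [lintegral_update_pi μ a hmeas]
    have key : ∀ y : ∀ i, X i,
        (∫⁻ t, ∏ i ∈ insert a s, H i (Function.update y a t i) ∂μ a)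
          = (∫⁻ t, H a t ∂μ a) * ∏ i ∈ s, H i (y i) := by
      intro y
      have : ∀ t, ∏ i ∈ insert a s, H i (Function.update y a t i)
          = H a t * ∏ i ∈ s, H i (y i) := by
        intro t
        rw [Finset.prod_insert ha, Function.update_self]
        congr 1
        refine Finset.prod_congr rfl fun i hi => ?_
        rw [Function.update_of_ne (by rintro rfl; exact ha hi)]
      simp_rw [this]
      rw [lintegral_mul_const _ (hH a)]
    simp_rw [key]
    rw [lintegral_const_mul _ (show Measurable fun y : ∀ i, X i => ∏ i ∈ s, H i (y i) by
      exact Finset.measurable_prod _ fun i _ => (hH i).comp (measurable_pi_apply i)), ih]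

end Aux

lemma pow_lintegral_le_jensen {α : Type*} [MeasurableSpace α] (ν : Measure α)
    [IsProbabilityMeasure ν] {G : α → ℝ≥0∞} (hG : AEMeasurable G ν) {n : ℕ} (hn : 2 ≤ n) :
    (∫⁻ x, G x ∂ν) ^ n ≤ ∫⁻ x, (G x) ^ n ∂ν := by
  have hn1 : (1 : ℝ) < n := by exact_mod_cast hn.trans_lt' one_lt_two
  have hpq : (n : ℝ).HolderConjugate (Real.conjExponent n) :=
    Real.HolderConjugate.conjExponent hn1
  have h := ENNReal.lintegral_mul_le_Lp_mul_Lq ν hpq hG aemeasurable_const (g := fun _ => 1)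
  simp only [mul_one, Pi.mul_apply] at h
  have h1 : (∫⁻ _, (1 : ℝ≥0∞) ^ Real.conjExponent n ∂ν) ^ (1 / Real.conjExponent n) = 1 := by
    simp [ENNReal.one_rpow]
  rw [h1, mul_one] at h
  calc (∫⁻ x, G x ∂ν) ^ n
      ≤ ((∫⁻ x, G x ^ (n : ℝ) ∂ν) ^ (1 / (n : ℝ))) ^ n := by
        exact pow_le_pow_left' h n
    _ = ∫⁻ x, G x ^ n ∂ν := by
        rw [← ENNReal.rpow_natCast (((∫⁻ x, G x ^ (n : ℝ) ∂ν) ^ (1 / (n : ℝ)))) n,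
          ← ENNReal.rpow_mul, one_div, inv_mul_cancel₀ (by positivity), ENNReal.rpow_one]
        simp_rw [← ENNReal.rpow_natCast]

section Key

variable {ι : Type*} [Fintype ι] [DecidableEq ι] {X : ι → Type*}
  [∀ i, MeasurableSpace (X i)] (μ : ∀ i, Measure (X i)) [∀ i, IsProbabilityMeasure (μ i)]

lemma key_box_ineq (ℓ : ℕ) (hℓ : 2 ≤ ℓ) {g : (∀ i, X i) → ℝ≥0∞} (hg : Measurable g)
    (s : Finset ι) :
    (∫⁻ y, g y ∂Measure.pi μ) ^ (ℓ ^ s.card)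
      ≤ ∫⁻ x : ∀ i, Fin ℓ → X i,
          ∏ ω ∈ Finset.univ.filter (fun ω : ι → Fin ℓ => ∀ i ∉ s, (ω i : ℕ) = 0),
            g (fun i => x i (ω i))
          ∂(Measure.pi fun i => Measure.pi fun _ : Fin ℓ => μ i) := by
  classical
  haveI : NeZero ℓ := ⟨by omega⟩
  induction s using Finset.induction_on with
  | empty =>
    have hfil : Finset.univ.filter (fun ω : ι → Fin ℓ => ∀ i ∉ (∅ : Finset ι), (ω i : ℕ) = 0)
        = {fun _ => (0 : Fin ℓ)} := by
      ext ω
      simp only [Finset.mem_filter, Finset.mem_univ, true_and, Finset.mem_singleton,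
        Finset.notMem_empty, not_false_eq_true, forall_const, funext_iff, Fin.ext_iff, Fin.val_zero]
    rw [hfil]
    simp only [Finset.prod_singleton, Finset.card_empty, pow_zero, pow_one]
    have hmp : MeasurePreserving (fun x : ∀ i, Fin ℓ → X i => fun i => x i 0)
        (Measure.pi fun i => Measure.pi fun _ : Fin ℓ => μ i) (Measure.pi μ) :=
      measurePreserving_pi _ _ fun i => measurePreserving_evalPi (fun _ : Fin ℓ => μ i) 0
    rw [← hmp.lintegral_comp hg]
  | @insert a s has ih =>
    set ν := Measure.pi fun i => Measure.pi fun _ : Fin ℓ => μ i with hν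
    set F' := Finset.univ.filter (fun ω : ι → Fin ℓ => ∀ i ∉ s, (ω i : ℕ) = 0) with hF'
    set F := Finset.univ.filter
      (fun ω : ι → Fin ℓ => ∀ i ∉ insert a s, (ω i : ℕ) = 0) with hF
    -- reindexing of the product over F
    have reindex : ∀ (G : (ι → Fin ℓ) → ℝ≥0∞),
        ∏ ω ∈ F, G ω = ∏ j : Fin ℓ, ∏ ω' ∈ F', G (Function.update ω' a j) := by
      intro G
      rw [← Finset.prod_product']
      refine Finset.prod_nbij' (fun ω => (ω a, Function.update ω a 0))
        (fun p => Function.update p.2 a p.1) ?_ ?_ ?_ ?_ ?_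
      · intro ω hω
        simp only [hF, Finset.mem_filter, Finset.mem_univ, true_and] at hω
        simp only [Finset.mem_product, Finset.mem_univ, true_and, hF', Finset.mem_filter]
        intro i hi
        rcases eq_or_ne i a with rfl | hia
        · simp
        · rw [Function.update_of_ne hia]
          exact hω i (by simp [hia, hi])
      · intro p hp
        simp only [Finset.mem_product, Finset.mem_univ, true_and, hF', Finset.mem_filter] at hp
        simp only [hF, Finset.mem_filter, Finset.mem_univ, true_and]
        intro i hi
        have hia : i ≠ a := fun h => hi (h ▸ Finset.mem_insert_self a s)
        simp only [Function.update_of_ne hia]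
        exact hp i (fun h => hi (Finset.mem_insert_of_mem h))
      · intro ω hω
        simp only [Function.update_idem]
        exact Function.update_eq_self a ω
      · intro p hp
        simp only [Finset.mem_product, Finset.mem_univ, true_and, hF', Finset.mem_filter] at hp
        have hpa : p.2 a = 0 := Fin.ext (hp a has)
        simp only [Function.update_self, Function.update_idem]
        rw [← hpa, Function.update_eq_self]
      · intro ω hω
        have : Function.update (Function.update ω a 0) a (ω a) = ω := by
          rw [Function.update_idem, Function.update_eq_self]
        simp only [this]
    -- the conditional one-coordinate product
    set K : (∀ i, Fin ℓ → X i) → X a → ℝ≥0∞ :=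
      fun x t => ∏ ω' ∈ F', g (Function.update (fun i => x i (ω' i)) a t) with hK
    have hKx : ∀ x, Measurable (K x) := fun x =>
      Finset.measurable_prod _ fun ω' _ => hg.comp (measurable_update _)
    have hKun : Measurable (fun q : (∀ i, Fin ℓ → X i) × X a => K q.1 q.2) := by
      refine Finset.measurable_prod _ fun ω' _ => hg.comp ?_
      exact measurable_update'.comp
        ((measurable_pi_lambda _ fun i =>
          (measurable_pi_apply (ω' i)).comp ((measurable_pi_apply i).comp measurable_fst)).prodMk
          measurable_snd)
    have hP : Measurable fun x : ∀ i, Fin ℓ → X i => ∏ ω ∈ F, g (fun i => x i (ω i)) :=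
      Finset.measurable_prod _ fun ω _ => hg.comp
        (measurable_pi_lambda _ fun i => (measurable_pi_apply (ω i)).comp (measurable_pi_apply i))
    have hP' : Measurable fun x : ∀ i, Fin ℓ → X i => ∏ ω ∈ F', g (fun i => x i (ω i)) :=
      Finset.measurable_prod _ fun ω _ => hg.comp
        (measurable_pi_lambda _ fun i => (measurable_pi_apply (ω i)).comp (measurable_pi_apply i))
    -- pointwise identity after updating coordinate a
    have hA : ∀ (x : ∀ i, Fin ℓ → X i) (y : Fin ℓ → X a),
        ∏ ω ∈ F, g (fun i => Function.update x a y i (ω i)) = ∏ j : Fin ℓ, K x (y j) := by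
      intro x y
      rw [reindex]
      refine Finset.prod_congr rfl fun j _ => Finset.prod_congr rfl fun ω' _ => ?_
      congr 1
      funext i
      rcases eq_or_ne i a with rfl | hia
      · simp
      · simp [Function.update_of_ne hia]
    -- the inner marginal G
    have hGmeas : Measurable fun x : ∀ i, Fin ℓ → X i => ∫⁻ t, K x t ∂μ a :=
      Measurable.lintegral_prod_right' (f := fun q : (∀ i, Fin ℓ → X i) × X a => K q.1 q.2) hKun
    -- identify ∫ G with the box integral over s
    have hGint : ∫⁻ x, ∫⁻ t, K x t ∂μ a ∂ν
        = ∫⁻ x, ∏ ω ∈ F', g (fun i => x i (ω i)) ∂ν := by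
      rw [lintegral_update_pi (fun i => Measure.pi fun _ : Fin ℓ => μ i) a hP']
      refine lintegral_congr fun x => ?_
      have hpt : ∀ y : Fin ℓ → X a,
          ∏ ω' ∈ F', g (fun i => Function.update x a y i (ω' i)) = K x (y 0) := by
        intro y
        refine Finset.prod_congr rfl fun ω' hω' => ?_
        simp only [hF', Finset.mem_filter, Finset.mem_univ, true_and] at hω'
        have hω'a : ω' a = 0 := Fin.ext (hω' a has)
        congr 1
        funext i
        rcases eq_or_ne i a with rfl | hia
        · simp [hω'a]
        · simp [Function.update_of_ne hia]
      simp_rw [hpt]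
      exact ((measurePreserving_evalPi (fun _ : Fin ℓ => μ a) 0).lintegral_comp (hKx x)).symm
    -- main computation
    have hmain : ∫⁻ x, ∏ ω ∈ F, g (fun i => x i (ω i)) ∂ν
        = ∫⁻ x, (∫⁻ t, K x t ∂μ a) ^ ℓ ∂ν := by
      rw [lintegral_update_pi (fun i => Measure.pi fun _ : Fin ℓ => μ i) a hP]
      refine lintegral_congr fun x => ?_
      simp_rw [hA x]
      rw [lintegral_pi_prod_finset (fun _ : Fin ℓ => μ a) (fun _ => K x) (fun _ => hKx x)
        Finset.univ]
      simp
    rw [hmain]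
    calc (∫⁻ y, g y ∂Measure.pi μ) ^ ℓ ^ (insert a s).card
        = ((∫⁻ y, g y ∂Measure.pi μ) ^ ℓ ^ s.card) ^ ℓ := by
          rw [Finset.card_insert_of_notMem has, pow_succ, pow_mul]
      _ ≤ (∫⁻ x, ∏ ω ∈ F', g (fun i => x i (ω i)) ∂ν) ^ ℓ := pow_le_pow_left' ih ℓ
      _ = (∫⁻ x, ∫⁻ t, K x t ∂μ a ∂ν) ^ ℓ := by rw [hGint]
      _ ≤ ∫⁻ x, (∫⁻ t, K x t ∂μ a) ^ ℓ ∂ν :=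
          pow_lintegral_le_jensen ν hGmeas.aemeasurable hℓ


end Key


end AuxLemmas

/-- The `(ℓ,p)`-box norm dominates the `L_p` norm. -/
theorem Lp_le_pBoxNorm {ι : Type*} [Fintype ι] [DecidableEq ι] [Nonempty ι]
    {X : ι → Type*} [∀ i, MeasurableSpace (X i)] (μ : ∀ i, Measure (X i))
    [∀ i, IsProbabilityMeasure (μ i)]
    (ℓ : ℕ) (hℓ : 2 ≤ ℓ) (hev : Even ℓ)
    (p : ℝ) (hp : 1 ≤ p)
    (f : (∀ i, X i) → ℝ)
    (hf : MemLp f (ENNReal.ofReal p) (Measure.pi μ))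
    (hbox : Integrable
      (fun x : ∀ i, Fin ℓ → X i => ∏ ω : ι → Fin ℓ, |f (fun i => x i (ω i))| ^ p)
      (Measure.pi fun i => Measure.pi fun _ : Fin ℓ => μ i)) :
    (∫ x, |f x| ^ p ∂(Measure.pi μ)) ^ p⁻¹ ≤ pBoxNormOn μ Finset.univ ℓ p f := by
  classical
  have hp0 : (0 : ℝ) < p := lt_of_lt_of_le one_pos hp
  set ν := Measure.pi fun i => Measure.pi fun _ : Fin ℓ => μ i with hν
  obtain ⟨f₀, hf₀meas, hf₀eq⟩ :
      ∃ f₀ : (∀ i, X i) → ℝ, Measurable f₀ ∧ f =ᵐ[Measure.pi μ] f₀ :=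
    ⟨hf.1.mk f, hf.1.measurable_mk, hf.1.ae_eq_mk⟩
  set g : (∀ i, X i) → ℝ≥0∞ := fun x => ENNReal.ofReal (|f₀ x| ^ p) with hg
  have hgmeas : Measurable g :=
    ENNReal.measurable_ofReal.comp ((Real.continuous_rpow_const hp0.le).measurable.comp hf₀meas.abs)
  have hfae : (fun x => ENNReal.ofReal (|f x| ^ p)) =ᵐ[Measure.pi μ] g :=
    hf₀eq.mono fun x hx => by simp only [hg, hx]
  -- the L^p side
  have hLnonneg : ∀ x, 0 ≤ |f x| ^ p := fun x => Real.rpow_nonneg (abs_nonneg _) p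
  have hLint : Integrable (fun x => |f x| ^ p) (Measure.pi μ) := by
    have h0 : (ENNReal.ofReal p) ≠ 0 := by
      simp only [ne_eq, ENNReal.ofReal_eq_zero, not_le]; linarith
    have := hf.integrable_norm_rpow h0 ENNReal.ofReal_ne_top
    simpa [ENNReal.toReal_ofReal hp0.le, Real.norm_eq_abs] using this
  have hL : ENNReal.ofReal (∫ x, |f x| ^ p ∂Measure.pi μ) = ∫⁻ x, g x ∂Measure.pi μ := by
    rw [MeasureTheory.ofReal_integral_eq_lintegral_ofReal hLint
      (Filter.Eventually.of_forall hLnonneg)]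
    exact lintegral_congr_ae hfae
  -- the box side
  have hRnonneg : ∀ x : ∀ i, Fin ℓ → X i,
      0 ≤ ∏ ω : ι → Fin ℓ, |f (fun i => x i (ω i))| ^ p :=
    fun x => Finset.prod_nonneg fun ω _ => Real.rpow_nonneg (abs_nonneg _) _
  have hmpω : ∀ ω : ι → Fin ℓ, MeasurePreserving
      (fun x : ∀ i, Fin ℓ → X i => fun i => x i (ω i)) ν (Measure.pi μ) :=
    fun ω => measurePreserving_pi _ _ fun i => measurePreserving_evalPi (fun _ : Fin ℓ => μ i) (ω i)
  have hR : ENNReal.ofReal (∫ x, ∏ ω : ι → Fin ℓ, |f (fun i => x i (ω i))| ^ p ∂ν)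
      = ∫⁻ x, ∏ ω : ι → Fin ℓ, g (fun i => x i (ω i)) ∂ν := by
    rw [MeasureTheory.ofReal_integral_eq_lintegral_ofReal hbox
      (Filter.Eventually.of_forall hRnonneg)]
    have h1 : ∀ x : ∀ i, Fin ℓ → X i,
        ENNReal.ofReal (∏ ω : ι → Fin ℓ, |f (fun i => x i (ω i))| ^ p)
          = ∏ ω : ι → Fin ℓ, ENNReal.ofReal (|f (fun i => x i (ω i))| ^ p) :=
      fun x => ENNReal.ofReal_prod_of_nonneg fun ω _ => Real.rpow_nonneg (abs_nonneg _) _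
    simp_rw [h1]
    refine lintegral_congr_ae ?_
    have hae : ∀ᵐ x ∂ν, ∀ ω : ι → Fin ℓ,
        ENNReal.ofReal (|f (fun i => x i (ω i))| ^ p) = g (fun i => x i (ω i)) := by
      rw [ae_all_iff]
      intro ω
      exact (hmpω ω).quasiMeasurePreserving.ae_eq_comp hfae
    filter_upwards [hae] with x hx
    exact Finset.prod_congr rfl fun ω _ => hx ω
  -- the key inequality
  have hfil : Finset.univ.filter
      (fun ω : ι → Fin ℓ => ∀ i ∉ (Finset.univ : Finset ι), (ω i : ℕ) = 0)
      = (Finset.univ : Finset (ι → Fin ℓ)) :=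
    Finset.filter_true_of_mem fun ω _ => fun i hi => absurd (Finset.mem_univ i) hi
  have hkey := key_box_ineq μ ℓ hℓ hgmeas (Finset.univ : Finset ι)
  rw [hfil] at hkey
  set N : ℕ := ℓ ^ (Finset.univ : Finset ι).card with hN
  set L : ℝ := ∫ x, |f x| ^ p ∂Measure.pi μ with hLdef
  set R : ℝ := ∫ x, ∏ ω : ι → Fin ℓ, |f (fun i => x i (ω i))| ^ p ∂ν with hRdef
  have hLnn : 0 ≤ L := integral_nonneg hLnonneg
  have hRnn : 0 ≤ R := integral_nonneg hRnonneg
  have hreal : L ^ N ≤ R := by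
    have hL' : (ENNReal.ofReal L) ^ N ≤ ENNReal.ofReal R := by
      rw [hL, hR]; exact hkey
    rw [← ENNReal.ofReal_pow hLnn] at hL'
    exact (ENNReal.ofReal_le_ofReal_iff hRnn).1 hL'
  have hNpos : (0 : ℝ) < (N : ℝ) := by
    have : 0 < N := pow_pos (by omega) _
    exact_mod_cast this
  have hstep : L ≤ R ^ (((ℓ : ℝ) ^ (Finset.univ : Finset ι).card)⁻¹) := by
    have hc : ((ℓ : ℝ) ^ (Finset.univ : Finset ι).card) = ((N : ℕ) : ℝ) := by
      rw [hN]; push_cast; ring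
    rw [hc]
    rw [← Real.rpow_natCast L N] at hreal
    have h2 := Real.rpow_le_rpow (Real.rpow_nonneg hLnn _) hreal (inv_nonneg.2 hNpos.le)
    rwa [← Real.rpow_mul hLnn, mul_inv_cancel₀ hNpos.ne', Real.rpow_one] at h2
  -- conclude
  have hbox_eq : boxNormOn μ (Finset.univ : Finset ι) ℓ (fun x => |f x| ^ p)
      = R ^ (((ℓ : ℝ) ^ (Finset.univ : Finset ι).card)⁻¹) := by
    rw [boxNormOn, hfil, hRdef]
  rw [pBoxNormOn, hbox_eq]
  exact Real.rpow_le_rpow hLnn hstep (inv_nonneg.2 hp0.le)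
end

section
/- Monotonicity of (ℓ,p)-box norms in p: for every nonempty finite index set e, even integer ℓ ≥ 2, exponents 1 ≤ p₁ ≤ p₂ < ∞, and f ∈ L_{p₂}(X_e), one has ‖f‖_{□_{ℓ,p₁}(X_e)} ≤ ‖f‖_{□_{ℓ,p₂}(X_e)}. -/
open MeasureTheory Finset

open scoped ENNReal

/-- Monotonicity of the `(ℓ,p)`-box norms in `p`. -/
theorem pBoxNorm_mono_p {ι : Type*} [Fintype ι] [DecidableEq ι] [Nonempty ι]
    {X : ι → Type*} [∀ i, MeasurableSpace (X i)] (μ : ∀ i, Measure (X i))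
    [∀ i, IsProbabilityMeasure (μ i)]
    (ℓ : ℕ) (hℓ : 2 ≤ ℓ) (hev : Even ℓ)
    (p₁ p₂ : ℝ) (hp₁ : 1 ≤ p₁) (hp₁₂ : p₁ ≤ p₂)
    (f : (∀ i, X i) → ℝ)
    (hf : MemLp f (ENNReal.ofReal p₂) (Measure.pi μ))
    (hbox₁ : Integrable
      (fun x : ∀ i, Fin ℓ → X i => ∏ ω : ι → Fin ℓ, |f (fun i => x i (ω i))| ^ p₁)
      (Measure.pi fun i => Measure.pi fun _ : Fin ℓ => μ i))
    (hbox₂ : Integrable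
      (fun x : ∀ i, Fin ℓ → X i => ∏ ω : ι → Fin ℓ, |f (fun i => x i (ω i))| ^ p₂)
      (Measure.pi fun i => Measure.pi fun _ : Fin ℓ => μ i)) :
    pBoxNormOn μ Finset.univ ℓ p₁ f ≤ pBoxNormOn μ Finset.univ ℓ p₂ f := by
  classical
  set ν := (Measure.pi fun i => Measure.pi fun _ : Fin ℓ => μ i) with hν
  set F : (∀ i, Fin ℓ → X i) → ℝ := fun x => ∏ ω : ι → Fin ℓ, |f (fun i => x i (ω i))| with hF
  have hp₁0 : 0 < p₁ := lt_of_lt_of_le one_pos hp₁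
  have hp₂0 : 0 < p₂ := lt_of_lt_of_le hp₁0 hp₁₂
  have hF0 : ∀ x, 0 ≤ F x := fun x => Finset.prod_nonneg fun ω _ => abs_nonneg _
  have hFp : ∀ p : ℝ, ∀ x, F x ^ p = ∏ ω : ι → Fin ℓ, |f (fun i => x i (ω i))| ^ p := by
    intro p x
    exact (Real.finset_prod_rpow _ _ (fun ω _ => abs_nonneg _) p).symm
  -- measurability of F
  have hcont : ∀ c : ℝ, 0 ≤ c → Continuous (fun y : ℝ => y ^ c) := by
    intro c hc
    exact continuous_iff_continuousAt.2 fun y => Real.continuousAt_rpow_const y c (Or.inr hc)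
  have hFm : AEStronglyMeasurable F ν := by
    have h1 : AEStronglyMeasurable
        (fun x : ∀ i, Fin ℓ → X i => ∏ ω : ι → Fin ℓ, |f (fun i => x i (ω i))| ^ p₁) ν :=
      hbox₁.aestronglyMeasurable
    have h2 := (hcont p₁⁻¹ (by positivity)).comp_aestronglyMeasurable h1
    have hFe : F = fun x => (∏ ω : ι → Fin ℓ, |f (fun i => x i (ω i))| ^ p₁) ^ p₁⁻¹ := by
      funext x
      rw [← hFp p₁ x, ← Real.rpow_mul (hF0 x), mul_inv_cancel₀ hp₁0.ne', Real.rpow_one]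
    rw [hFe]
    exact h2
  -- Memℒp F (ofReal p₂)
  have hq2ne : (ENNReal.ofReal p₂) ≠ 0 := by
    simp [ENNReal.ofReal_eq_zero, not_le, hp₂0]
  have hq2top : (ENNReal.ofReal p₂) ≠ ∞ := ENNReal.ofReal_ne_top
  have htr2 : (ENNReal.ofReal p₂).toReal = p₂ := ENNReal.toReal_ofReal hp₂0.le
  have hmem₂ : MemLp F (ENNReal.ofReal p₂) ν := by
    rw [← memLp_norm_rpow_iff hFm hq2ne hq2top]
    rw [ENNReal.div_self hq2ne hq2top]
    rw [memLp_one_iff_integrable]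
    have : (fun x => ‖F x‖ ^ (ENNReal.ofReal p₂).toReal)
        = fun x : ∀ i, Fin ℓ → X i => ∏ ω : ι → Fin ℓ, |f (fun i => x i (ω i))| ^ p₂ := by
      funext x
      rw [htr2, Real.norm_eq_abs, abs_of_nonneg (hF0 x), hFp p₂ x]
    rw [this]
    exact hbox₂
  have hmem₁ : MemLp F (ENNReal.ofReal p₁) ν :=
    hmem₂.mono_exponent (ENNReal.ofReal_le_ofReal hp₁₂)
  have hq1ne : (ENNReal.ofReal p₁) ≠ 0 := by
    simp [ENNReal.ofReal_eq_zero, not_le, hp₁0]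
  have htr1 : (ENNReal.ofReal p₁).toReal = p₁ := ENNReal.toReal_ofReal hp₁0.le
  -- key inequality between Lp norms of F
  have hnorm : ∀ x, ‖F x‖ = F x := fun x => by
    rw [Real.norm_eq_abs, abs_of_nonneg (hF0 x)]
  have key : (∫ x, F x ^ p₁ ∂ν) ^ p₁⁻¹ ≤ (∫ x, F x ^ p₂ ∂ν) ^ p₂⁻¹ := by
    have h := eLpNorm_le_eLpNorm_of_exponent_le
      (ENNReal.ofReal_le_ofReal hp₁₂) hFm (μ := ν) (f := F)
    rw [hmem₁.eLpNorm_eq_integral_rpow_norm hq1ne ENNReal.ofReal_ne_top,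
      hmem₂.eLpNorm_eq_integral_rpow_norm hq2ne hq2top, htr1, htr2] at h
    have h' := (ENNReal.ofReal_le_ofReal_iff (by positivity)).1 h
    simpa only [hnorm] using h'
  -- rewrite the goal
  have hint : ∀ p : ℝ,
      (∫ x, (∏ ω ∈ Finset.univ.filter
          (fun ω : ι → Fin ℓ => ∀ i ∉ (Finset.univ : Finset ι), ((ω i : ℕ)) = 0),
          |f (fun i => x i (ω i))| ^ p) ∂ν) = ∫ x, F x ^ p ∂ν := by
    intro p
    refine integral_congr_ae (Filter.EventuallyEq.of_eq ?_)
    funext x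
    rw [hFp p x]
    congr 1
    refine Finset.filter_true_of_mem fun ω _ => fun i hi => absurd (Finset.mem_univ i) hi
  have hA₁ : (0:ℝ) ≤ ∫ x, F x ^ p₁ ∂ν :=
    integral_nonneg fun x => Real.rpow_nonneg (hF0 x) _
  have hA₂ : (0:ℝ) ≤ ∫ x, F x ^ p₂ ∂ν :=
    integral_nonneg fun x => Real.rpow_nonneg (hF0 x) _
  rw [pBoxNormOn, pBoxNormOn, boxNormOn, boxNormOn]
  rw [hint p₁, hint p₂]
  set c : ℝ := ((ℓ : ℝ) ^ (Finset.univ : Finset ι).card)⁻¹ with hc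
  have hc0 : 0 ≤ c := by positivity
  calc ((∫ x, F x ^ p₁ ∂ν) ^ c) ^ p₁⁻¹
      = ((∫ x, F x ^ p₁ ∂ν) ^ p₁⁻¹) ^ c := by
        rw [← Real.rpow_mul hA₁, ← Real.rpow_mul hA₁, mul_comm]
    _ ≤ ((∫ x, F x ^ p₂ ∂ν) ^ p₂⁻¹) ^ c :=
        Real.rpow_le_rpow (Real.rpow_nonneg hA₁ _) key hc0
    _ = ((∫ x, F x ^ p₂ ∂ν) ^ c) ^ p₂⁻¹ := by
        rw [← Real.rpow_mul hA₂, ← Real.rpow_mul hA₂, mul_comm]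
end
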